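/- arXiv:2207.03512 — 15 statements merged into one kernel-verified Lean document; each statement's English description precedes it below -/
import Mathlib

section
/- Let M be a Hausdorff, second-countable, locally compact topological space, let X be a metric space, and let φ : M → X be a continuous surjection. Fix y ∈ M. Then φ is open at y if and only if φ satisfies the 'local ⇒ local' property at y, that is: for every continuous function f : X → ℝ, whenever y is a local minimum of f ∘ φ on M, the point φ(y) is a local minimum of f on X. -/
open Filter Topology

/-- Let `M` be a Hausdorff, second-countable, locally compact topological
space, `X` a metric space, and `φ : M → X` a continuous surjection. Then `φ` is open at
`y ∈ M` (every neighborhood of `y` maps to a neighborhood of `φ y`) if and only if for every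
continuous `f : X → ℝ`, if `y` is a local minimum of `f ∘ φ` then `φ y` is a local minimum
of `f`. -/
theorem statement0 {M X : Type*} [TopologicalSpace M] [T2Space M]
    [SecondCountableTopology M] [LocallyCompactSpace M] [MetricSpace X]
    (φ : M → X) (hφc : Continuous φ) (hφs : Function.Surjective φ) (y : M) :
    (∀ U ∈ 𝓝 y, φ '' U ∈ 𝓝 (φ y)) ↔
      ∀ f : X → ℝ, Continuous f → IsLocalMin (f ∘ φ) y → IsLocalMin f (φ y) := by
  constructor
  · intro hopen f hf hmin
    rcases hmin.exists_mem with ⟨U, hU, hUmin⟩ -- maybe not exact name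
    filter_upwards [hopen U hU] with x hx
    rcases hx with ⟨u, hu, rfl⟩
    exact hUmin u hu
  · intro h
    by_contra hno
    push_neg at hno
    rcases hno with ⟨U, hU, hnU⟩
    rcases local_compact_nhds hU with ⟨K, hKy, hKU, hKc⟩
    set f : X → ℝ := fun x => -(Metric.infDist x (φ '' K)) with hfdef
    have hfc : Continuous f := (Metric.continuous_infDist_pt _).neg
    have hf0 : f (φ y) = 0 := by
      have : φ y ∈ φ '' K := Set.mem_image_of_mem φ (mem_of_mem_nhds hKy)
      simp [hfdef, Metric.infDist_zero_of_mem this]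
    have hmin : IsLocalMin (f ∘ φ) y := by
      filter_upwards [hKy] with u hu
      have h1 : φ u ∈ φ '' K := Set.mem_image_of_mem φ hu
      have h2 : φ y ∈ φ '' K := Set.mem_image_of_mem φ (mem_of_mem_nhds hKy)
      simp [hfdef, Function.comp, Metric.infDist_zero_of_mem h1, Metric.infDist_zero_of_mem h2]
    have := h f hfc hmin
    rw [IsLocalMin, IsMinFilter, hf0] at this
    -- φ '' K is closed (compact in metric space)
    have hcl : IsClosed (φ '' K) := (hKc.image hφc).isClosed
    have hnK : φ '' K ∉ 𝓝 (φ y) := fun hmem =>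
      hnU (mem_of_superset hmem (Set.image_mono hKU))
    -- from `this`: eventually 0 ≤ f x, i.e. infDist x (φ '' K) ≤ 0, i.e. x ∈ φ '' K
    apply hnK
    filter_upwards [this] with x hx
    have : Metric.infDist x (φ '' K) ≤ 0 := by simpa [hfdef] using hx
    have hne : (φ '' K).Nonempty := ⟨φ y, y, mem_of_mem_nhds hKy, rfl⟩
    have h0 : Metric.infDist x (φ '' K) = 0 :=
      le_antisymm this (Metric.infDist_nonneg)
    have := (Metric.mem_closure_iff_infDist_zero hne).2 h0
    rwa [hcl.closure_eq] at this
end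

section
/- Let M be a Hausdorff, second-countable, locally compact topological space, X a metric space with distance dist, φ : M → X a continuous surjection, y ∈ M and x = φ(y). Then the following are equivalent: (1) φ is open at y; (2) φ is approximately open at y, i.e., for every neighborhood U of y the closure of φ(U) is a neighborhood of x in X; (3) φ has the subsequence lifting property at y: for every sequence (x_i) in X converging to x there exist a subsequence (x_{i_j}) and a sequence (y_j) in M converging to y with φ(y_j) = x_{i_j} for all j; (4) φ has the approximate subsequence lifting property at y: for every sequence (x_i) in X converging to x and every sequence of positive reals ε_i converging to 0, there exist a subsequence (x_{i_j}) and a sequence (y_j) in M converging to y with dist(φ(y_j), x_{i_j}) ≤ ε_{i_j} for all j. -/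
open Filter Topology

/-- Let `M` be a Hausdorff, second-countable, locally compact topological
space, `X` a metric space, `φ : M → X` a continuous surjection and `y ∈ M`. The following
are equivalent: (1) `φ` is open at `y`; (2) `φ` is approximately open at `y`;
(3) `φ` has the subsequence lifting property at `y`; (4) `φ` has the approximate
subsequence lifting property at `y`. -/
theorem statement2 {M X : Type*} [TopologicalSpace M] [T2Space M]
    [SecondCountableTopology M] [LocallyCompactSpace M] [MetricSpace X]
    (φ : M → X) (hφc : Continuous φ) (hφs : Function.Surjective φ) (y : M) :
    List.TFAE
      [ -- (1) open at y
        ∀ U ∈ 𝓝 y, φ '' U ∈ 𝓝 (φ y),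
        -- (2) approximately open at y
        ∀ U ∈ 𝓝 y, closure (φ '' U) ∈ 𝓝 (φ y),
        -- (3) subsequence lifting property at y
        ∀ xs : ℕ → X, Tendsto xs atTop (𝓝 (φ y)) →
          ∃ (ι : ℕ → ℕ) (ys : ℕ → M), StrictMono ι ∧ Tendsto ys atTop (𝓝 y) ∧
            ∀ j, φ (ys j) = xs (ι j),
        -- (4) approximate subsequence lifting property at y
        ∀ (xs : ℕ → X) (ε : ℕ → ℝ), Tendsto xs atTop (𝓝 (φ y)) →
          (∀ i, 0 < ε i) → Tendsto ε atTop (𝓝 0) →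
          ∃ (ι : ℕ → ℕ) (ys : ℕ → M), StrictMono ι ∧ Tendsto ys atTop (𝓝 y) ∧
            ∀ j, dist (φ (ys j)) (xs (ι j)) ≤ ε (ι j) ] := by
  tfae_have 2 → 1 := by
    intro h2 U hU
    obtain ⟨K, hKy, hKU, hK⟩ := local_compact_nhds hU
    have hcl : closure (φ '' K) = φ '' K := (hK.image hφc).isClosed.closure_eq
    exact mem_of_superset (hcl ▸ h2 K hKy) (Set.image_mono hKU)
  tfae_have 1 → 3 := by
    intro h1 xs hxs
    obtain ⟨U, hU⟩ := (𝓝 y).exists_antitone_basis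
    have hev : ∀ n, ∀ᶠ i in atTop, xs i ∈ φ '' U n := fun n =>
      hxs (h1 (U n) (hU.mem n))
    obtain ⟨ι, hι, hmem⟩ := Filter.extraction_forall_of_eventually hev
    choose ys hysU hysφ using hmem
    exact ⟨ι, ys, hι, hU.tendsto hysU, fun j => hysφ j⟩
  tfae_have 3 → 4 := by
    intro h3 xs ε hxs hε _
    obtain ⟨ι, ys, hι, hys, hφ⟩ := h3 xs hxs
    refine ⟨ι, ys, hι, hys, fun j => ?_⟩
    rw [hφ j, dist_self]
    exact (hε (ι j)).le
  tfae_have 4 → 2 := by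
    intro h4 U hU
    by_contra hcl
    have key : ∀ n : ℕ, ∃ z, dist z (φ y) < 1 / (n + 1) ∧ z ∉ closure (φ '' U) := by
      intro n
      by_contra h
      push_neg at h
      refine hcl (Metric.mem_nhds_iff.2 ⟨1 / (n + 1), by positivity, fun z hz => ?_⟩)
      exact h z (by simpa [Metric.mem_ball] using hz)
    choose xs hxsd hxscl using key
    have hxs : Tendsto xs atTop (𝓝 (φ y)) := by
      rw [tendsto_iff_dist_tendsto_zero]
      refine squeeze_zero (fun n => dist_nonneg) (fun n => (hxsd n).le) ?_
      exact tendsto_one_div_add_atTop_nhds_zero_nat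
    have hopen : IsOpen (closure (φ '' U))ᶜ := isClosed_closure.isOpen_compl
    have hδ : ∀ n : ℕ, ∃ δ > 0, Metric.ball (xs n) δ ⊆ (closure (φ '' U))ᶜ :=
      fun n => Metric.isOpen_iff.1 hopen (xs n) (hxscl n)
    choose δ hδpos hδball using hδ
    set ε : ℕ → ℝ := fun n => min (δ n / 2) (1 / (n + 1)) with hε
    have hεpos : ∀ n, 0 < ε n := fun n => lt_min (by linarith [hδpos n]) (by positivity)
    have hεlim : Tendsto ε atTop (𝓝 0) := by
      refine squeeze_zero (fun n => (hεpos n).le) (fun n => min_le_right _ _) ?_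
      exact tendsto_one_div_add_atTop_nhds_zero_nat
    obtain ⟨ι, ys, hι, hys, hd⟩ := h4 xs ε hxs hεpos hεlim
    have hnotU : ∀ j, ys j ∉ U := by
      intro j hyj
      have h1 : φ (ys j) ∈ Metric.ball (xs (ι j)) (δ (ι j)) := by
        have := hd j
        have h2 : ε (ι j) < δ (ι j) := lt_of_le_of_lt (min_le_left _ _) (by linarith [hδpos (ι j)])
        exact Metric.mem_ball.2 (lt_of_le_of_lt this h2)
      exact hδball (ι j) h1 (subset_closure ⟨ys j, hyj, rfl⟩)
    have : ∀ᶠ j in atTop, ys j ∈ U := hys hU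
    obtain ⟨j, hj⟩ := this.exists
    exact hnotU j hj
  tfae_finish
end

section
/- Let M be a finite-dimensional smooth (C^∞) real manifold without boundary, E a finite-dimensional real inner product space, φ : M → E a smooth map, X = φ(M), y ∈ M and x = φ(y). Then the following are equivalent: (i) the image of the differential Dφ(y) : T_yM → E equals the Bouligand tangent cone T_xX; (ii) for every f : E → ℝ differentiable at x such that y is first-order critical for f ∘ φ, the point x is stationary for f on X. Moreover, if (i) fails, then there exists a vector w ∈ E such that for the linear function f = ⟨w, ·⟩ the point y is first-order critical for f ∘ φ while x is not stationary for f on X. -/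
open Filter Topology Manifold

/-- The Bouligand tangent cone to a set `X` at a point `x`. -/
def bouligandTangentCone {E : Type*} [AddCommGroup E] [Module ℝ E] [TopologicalSpace E]
    (X : Set E) (x : E) : Set E :=
  {v | ∃ (xs : ℕ → E) (τ : ℕ → ℝ), (∀ n, xs n ∈ X) ∧ (∀ n, 0 < τ n) ∧
    Filter.Tendsto τ Filter.atTop (𝓝 0) ∧
    Filter.Tendsto (fun n => (τ n)⁻¹ • (xs n - x)) Filter.atTop (𝓝 v)}

section Aux
open Set


variable
    {E : Type*} [NormedAddCommGroup E] [NormedSpace ℝ E] [FiniteDimensional ℝ E]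
    {F : Type*} [NormedAddCommGroup F] [NormedSpace ℝ F] [FiniteDimensional ℝ F]
    {H : Type*} [TopologicalSpace H] (I : ModelWithCorners ℝ F H) [I.Boundaryless]
    {M : Type*} [TopologicalSpace M] [ChartedSpace H M] [IsManifold I (⊤ : ℕ∞) M]

theorem mfderiv_eq_fderiv_comp_symm
    (φ : M → E) (hφ : ContMDiff I 𝓘(ℝ, E) (⊤ : ℕ∞) φ) (y : M) :
    mfderiv I 𝓘(ℝ, E) φ y
      = fderiv ℝ (φ ∘ (extChartAt I y).symm) (extChartAt I y y) := by
  have hmd : MDifferentiableAt I 𝓘(ℝ, E) φ y := hφ.mdifferentiableAt (by simp)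
  rw [hmd.mfderiv]
  simp [writtenInExtChartAt, I.range_eq_univ, fderivWithin_univ, Function.comp_def, chartAt_self_eq]; rfl

theorem exists_curve (φ : M → E) (hφ : ContMDiff I 𝓘(ℝ, E) (⊤ : ℕ∞) φ) (y : M) (u : F) :
    ∃ c : ℝ → M, ContMDiff 𝓘(ℝ, ℝ) I (⊤ : ℕ∞) c ∧ c 0 = y ∧
      HasDerivAt (φ ∘ c) (mfderiv I 𝓘(ℝ, E) φ y u) 0 := by
  by_cases hu : u = 0
  · refine ⟨fun _ => y, contMDiff_const, rfl, ?_⟩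
    simp [hu, Function.comp_def]
    exact (hasDerivAt_const (0:ℝ) (φ y)).congr_deriv (map_zero _).symm
  set e := extChartAt I y with he
  set z := e y with hz
  have hzt : z ∈ e.target := mem_extChartAt_target y
  obtain ⟨δ, hδ, hball⟩ := Metric.isOpen_iff.1 (isOpen_extChartAt_target y) z hzt
  have hunorm : 0 < ‖u‖ := norm_pos_iff.2 hu
  set r : ℝ := δ / (2 * ‖u‖) with hr
  have hrpos : 0 < r := by positivity
  set b : ContDiffBump (0 : ℝ) := ⟨r / 2, r, by positivity, by linarith⟩ with hb
  set ρ : ℝ → ℝ := fun t => t * b t with hρ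
  have hρle : ∀ t, |ρ t| ≤ r := by
    intro t
    rcases le_or_gt |t| r with h | h
    · calc |ρ t| = |t| * |b t| := abs_mul _ _
        _ ≤ |t| * 1 := by
            gcongr
            rw [abs_of_nonneg b.nonneg]; exact b.le_one
        _ ≤ r := by simpa using h
    · have : b t = 0 := b.zero_of_le_dist (by simpa [Real.dist_eq] using h.le)
      simp [hρ, this, hrpos.le]
  set g : ℝ → F := fun t => z + ρ t • u with hg
  have hgt : ∀ t, g t ∈ e.target := by
    intro t
    apply hball
    rw [Metric.mem_ball, dist_eq_norm]
    calc ‖z + ρ t • u - z‖ = |ρ t| * ‖u‖ := by simp [norm_smul]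
      _ ≤ r * ‖u‖ := by gcongr; exact hρle t
      _ < δ := by
          have hne : ‖u‖ ≠ 0 := hunorm.ne'
          have : r * ‖u‖ = δ / 2 := by rw [hr]; field_simp
          rw [this]; linarith
  set c : ℝ → M := fun t => e.symm (g t) with hc
  have hg0 : g 0 = z := by simp [hg, hρ]
  have hc0 : c 0 = y := by
    rw [hc]; simp only [hg0]; exact e.left_inv (mem_extChartAt_source y)
  refine ⟨c, ?_, hc0, ?_⟩
  · refine (contMDiffOn_extChartAt_symm y).comp_contMDiff (ContDiff.contMDiff ?_) hgt
    exact contDiff_const.add ((contDiff_id.mul b.contDiff).smul contDiff_const)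
  · have hρd : HasDerivAt ρ 1 0 := by
      have heq : ρ =ᶠ[𝓝 (0:ℝ)] id := by
        filter_upwards [Metric.ball_mem_nhds (0:ℝ) (by positivity : (0:ℝ) < r/2)] with t ht
        have : b t = 1 := b.one_of_mem_closedBall (Metric.ball_subset_closedBall ht)
        simp [hρ, this, hrpos.le]
      exact (hasDerivAt_id (0:ℝ)).congr_of_eventuallyEq heq
    have hgd : HasDerivAt g u 0 := by
      have := (hρd.smul_const u).const_add z
      simpa [hg] using this
    have hΦd : DifferentiableAt ℝ (φ ∘ e.symm) z := by
      have h1 : ContMDiffOn 𝓘(ℝ, F) 𝓘(ℝ, E) (⊤ : ℕ∞) (φ ∘ e.symm) e.target :=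
        hφ.comp_contMDiffOn (contMDiffOn_extChartAt_symm y)
      exact (h1.contDiffOn.differentiableOn (by simp)).differentiableAt
        ((isOpen_extChartAt_target y).mem_nhds hzt)
    have hfd : HasFDerivAt (φ ∘ e.symm) (mfderiv I 𝓘(ℝ, E) φ y) z := by
      rw [mfderiv_eq_fderiv_comp_symm I φ hφ y]
      exact hΦd.hasFDerivAt
    have hfd' : HasFDerivAt (φ ∘ e.symm) (mfderiv I 𝓘(ℝ, E) φ y) (g 0) := hg0 ▸ hfd
    exact hfd'.comp_hasDerivAt 0 hgd

/-- Chain rule along an arbitrary smooth curve. -/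
theorem hasDerivAt_phi_comp_curve (φ : M → E) (hφ : ContMDiff I 𝓘(ℝ, E) (⊤ : ℕ∞) φ) (y : M)
    (c : ℝ → M) (hc : ContMDiff 𝓘(ℝ, ℝ) I (⊤ : ℕ∞) c) (hc0 : c 0 = y) :
    HasDerivAt (φ ∘ c) (mfderiv I 𝓘(ℝ, E) φ y (mfderiv 𝓘(ℝ, ℝ) I c 0 (1:ℝ))) 0 := by
  have hcomp : ContMDiff 𝓘(ℝ, ℝ) 𝓘(ℝ, E) (⊤ : ℕ∞) (φ ∘ c) := hφ.comp hc
  have hcd := hcomp.contDiff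
  have hdiff : DifferentiableAt ℝ (φ ∘ c) 0 :=
    (hcd.differentiable (by simp)).differentiableAt
  have hmc : MDifferentiableAt 𝓘(ℝ, ℝ) I c 0 := hc.mdifferentiableAt (by simp)
  have hmφ : MDifferentiableAt I 𝓘(ℝ, E) φ (c 0) := hφ.mdifferentiableAt (by simp)
  have h1 : mfderiv 𝓘(ℝ, ℝ) 𝓘(ℝ, E) (φ ∘ c) 0
      = (mfderiv I 𝓘(ℝ, E) φ (c 0)).comp (mfderiv 𝓘(ℝ, ℝ) I c 0) :=
    mfderiv_comp 0 hmφ hmc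
  have h2 : mfderiv 𝓘(ℝ, ℝ) 𝓘(ℝ, E) (φ ∘ c) 0 = fderiv ℝ (φ ∘ c) 0 := mfderiv_eq_fderiv
  have h3 : deriv (φ ∘ c) 0 = mfderiv I 𝓘(ℝ, E) φ y (mfderiv 𝓘(ℝ, ℝ) I c 0 (1:ℝ)) := by
    rw [deriv, ← h2, h1, hc0]; rfl
  exact h3 ▸ hdiff.hasDerivAt

theorem range_subset_cone (φ : M → E) (hφ : ContMDiff I 𝓘(ℝ, E) (⊤ : ℕ∞) φ) (y : M) :
    Set.range ⇑(mfderiv I 𝓘(ℝ, E) φ y) ⊆ bouligandTangentCone (Set.range φ) (φ y) := by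
  rintro v ⟨u, rfl⟩
  obtain ⟨c, hc, hc0, hd⟩ := exists_curve I φ hφ y u
  set τ : ℕ → ℝ := fun n => ((n : ℝ) + 1)⁻¹ with hτ
  have hτpos : ∀ n, 0 < τ n := fun n => by positivity
  have hτ0 : Tendsto τ atTop (𝓝 0) := by
    simpa [hτ, one_div] using tendsto_one_div_add_atTop_nhds_zero_nat (𝕜 := ℝ)
  refine ⟨fun n => φ (c (τ n)), τ, fun n => mem_range_self _, hτpos, hτ0, ?_⟩
  have hslope : Tendsto (slope (φ ∘ c) 0) (𝓝[≠] 0) (𝓝 (mfderiv I 𝓘(ℝ, E) φ y u)) :=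
    hasDerivAt_iff_tendsto_slope.1 hd
  have hτne : Tendsto τ atTop (𝓝[≠] (0:ℝ)) :=
    tendsto_nhdsWithin_iff.2 ⟨hτ0, Eventually.of_forall fun n => (hτpos n).ne'⟩
  have := hslope.comp hτne
  refine this.congr fun n => ?_
  simp [slope, Function.comp, hc0, vsub_eq_sub]; rfl

section Inner
variable
    {E' : Type*} [NormedAddCommGroup E'] [InnerProductSpace ℝ E'] [FiniteDimensional ℝ E']

theorem exists_sep (φ : M → E') (hφ : ContMDiff I 𝓘(ℝ, E') (⊤ : ℕ∞) φ) (y : M) {v : E'}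
    (hvn : v ∉ Set.range ⇑(mfderiv I 𝓘(ℝ, E') φ y)) :
    ∃ w : E',
      (∀ c : ℝ → M, ContMDiff 𝓘(ℝ, ℝ) I (⊤ : ℕ∞) c → c 0 = y →
        deriv ((fun x' => (inner ℝ w x' : ℝ)) ∘ φ ∘ c) 0 = 0) ∧
      fderiv ℝ (fun x' => (inner ℝ w x' : ℝ)) (φ y) v < 0 := by
  set L := mfderiv I 𝓘(ℝ, E') φ y with hL
  set K : Submodule ℝ E' := LinearMap.range L.toLinearMap with hK
  set p : E' := (K.orthogonalProjection v : E') with hp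
  set s : E' := v - p with hs
  set w : E' := -s with hw
  have hsK : s ∈ Kᗮ := K.sub_starProjection_mem_orthogonal v
  have hwK : ∀ x ∈ K, (inner ℝ w x : ℝ) = 0 := by
    intro x hx
    have := (Submodule.mem_orthogonal K s).1 hsK x hx
    rw [hw, inner_neg_left, real_inner_comm, this, neg_zero]
  have hfun : (fun x' => (inner ℝ w x' : ℝ)) = ⇑(innerSL ℝ w) := rfl
  have hfder : ∀ x : E', fderiv ℝ (fun x' => (inner ℝ w x' : ℝ)) x = innerSL ℝ w := by
    intro x; rw [hfun]; exact (innerSL ℝ w).fderiv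
  refine ⟨w, ?_, ?_⟩
  · intro c hc hc0
    have hd := hasDerivAt_phi_comp_curve I φ hφ y c hc hc0
    have hcomp : HasDerivAt ((fun x' => (inner ℝ w x' : ℝ)) ∘ (φ ∘ c))
        (innerSL ℝ w (L (mfderiv 𝓘(ℝ, ℝ) I c 0 (1:ℝ)))) 0 := by
      rw [hfun]
      exact (innerSL ℝ w).hasFDerivAt.comp_hasDerivAt 0 hd
    have hz : (innerSL ℝ w) (L (mfderiv 𝓘(ℝ, ℝ) I c 0 (1:ℝ))) = 0 := by
      exact hwK _ ⟨_, rfl⟩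
    rw [hz] at hcomp
    exact hcomp.deriv
  · rw [hfder]
    have hvK : v ∉ K := by
      intro hvK
      obtain ⟨u, hu⟩ := hvK
      exact hvn ⟨u, hu⟩
    have hs0 : s ≠ 0 := by
      intro h
      apply hvK
      have hvp : v = p := by rwa [hs, sub_eq_zero] at h
      rw [hvp]; exact (K.orthogonalProjection v).2
    have hsp : (inner ℝ s p : ℝ) = 0 := by
      have := (Submodule.mem_orthogonal K s).1 hsK p (K.orthogonalProjection v).2
      rwa [real_inner_comm] at this
    have hvdec : v = p + s := by rw [hs]; abel
    have hip : (inner ℝ w v : ℝ) = -‖s‖ ^ 2 := by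
      rw [hw, hvdec, inner_neg_left, inner_add_right, hsp, zero_add,
        real_inner_self_eq_norm_sq]
    have : (innerSL ℝ w) v = -‖s‖ ^ 2 := hip
    rw [this]
    have : 0 < ‖s‖ := norm_pos_iff.2 hs0
    nlinarith

end Inner

end Aux

/-- For a smooth map `φ : M → E` from a finite-dimensional smooth manifold
without boundary to a finite-dimensional inner product space, with `X = φ(M)`, `y ∈ M` and
`x = φ y`: the image of the differential `Dφ(y)` equals the Bouligand tangent cone `T_x X`
if and only if for every `f` differentiable at `x` such that `y` is first-order critical
for `f ∘ φ`, the point `x` is stationary for `f` on `X`. Moreover, if the first condition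
fails, there is `w ∈ E` such that for the linear cost `f = ⟪w, ·⟫` the point `y` is
first-order critical for `f ∘ φ` while `x` is not stationary for `f` on `X`. -/
theorem statement3
    {E : Type*} [NormedAddCommGroup E] [InnerProductSpace ℝ E] [FiniteDimensional ℝ E]
    {F : Type*} [NormedAddCommGroup F] [NormedSpace ℝ F] [FiniteDimensional ℝ F]
    {H : Type*} [TopologicalSpace H] (I : ModelWithCorners ℝ F H) [I.Boundaryless]
    {M : Type*} [TopologicalSpace M] [ChartedSpace H M] [IsManifold I (⊤ : ℕ∞) M]
    [T2Space M] [SecondCountableTopology M]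
    (φ : M → E) (hφ : ContMDiff I 𝓘(ℝ, E) (⊤ : ℕ∞) φ) (y : M) :
    ((Set.range ⇑(mfderiv I 𝓘(ℝ, E) φ y) = bouligandTangentCone (Set.range φ) (φ y)) ↔
      (∀ f : E → ℝ, DifferentiableAt ℝ f (φ y) →
        (∀ c : ℝ → M, ContMDiff 𝓘(ℝ, ℝ) I (⊤ : ℕ∞) c → c 0 = y → deriv (f ∘ φ ∘ c) 0 = 0) →
        ∀ v ∈ bouligandTangentCone (Set.range φ) (φ y), 0 ≤ fderiv ℝ f (φ y) v)) ∧
    (¬ (Set.range ⇑(mfderiv I 𝓘(ℝ, E) φ y) = bouligandTangentCone (Set.range φ) (φ y)) →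
      ∃ w : E,
        (∀ c : ℝ → M, ContMDiff 𝓘(ℝ, ℝ) I (⊤ : ℕ∞) c → c 0 = y →
          deriv ((fun x' => (inner ℝ w x' : ℝ)) ∘ φ ∘ c) 0 = 0) ∧
        ¬ (∀ v ∈ bouligandTangentCone (Set.range φ) (φ y),
            0 ≤ fderiv ℝ (fun x' => (inner ℝ w x' : ℝ)) (φ y) v)) := by
  have hsub := range_subset_cone I φ hφ y
  constructor
  · constructor
    · intro heq f hf hcrit v hv
      rw [← heq] at hv
      obtain ⟨u, rfl⟩ := hv
      obtain ⟨c, hc, hc0, hd⟩ := exists_curve I φ hφ y u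
      have hfφ : HasFDerivAt f (fderiv ℝ f (φ y)) ((φ ∘ c) 0) := by
        rw [Function.comp_apply, hc0]; exact hf.hasFDerivAt
      have hcd : HasDerivAt (f ∘ (φ ∘ c))
          (fderiv ℝ f (φ y) (mfderiv I 𝓘(ℝ, E) φ y u)) 0 :=
        hfφ.comp_hasDerivAt 0 hd
      have h0 := hcrit c hc hc0
      rw [hcd.deriv] at h0
      exact le_of_eq h0.symm
    · intro hstat
      refine Set.Subset.antisymm hsub ?_
      intro v hv
      by_contra hvn
      obtain ⟨w, hcrit, hneg⟩ := exists_sep I φ hφ y hvn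
      have hdiff : DifferentiableAt ℝ (fun x' => (inner ℝ w x' : ℝ)) (φ y) :=
        (innerSL ℝ w).differentiableAt
      have := hstat (fun x' => (inner ℝ w x' : ℝ)) hdiff hcrit v hv
      linarith
  · intro hne
    have hns : ¬ (bouligandTangentCone (Set.range φ) (φ y)
        ⊆ Set.range ⇑(mfderiv I 𝓘(ℝ, E) φ y)) :=
      fun h => hne (Set.Subset.antisymm hsub h)
    obtain ⟨v, hv, hvn⟩ := Set.not_subset.1 hns
    obtain ⟨w, hcrit, hneg⟩ := exists_sep I φ hφ y hvn
    refine ⟨w, hcrit, fun hall => ?_⟩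
    have := hall v hv
    linarith
end

section
/- Let M be a finite-dimensional smooth (C^∞) real manifold without boundary, E a finite-dimensional real normed space, φ : M → E a smooth map, X = φ(M), and let f : E → ℝ be differentiable. If x ∈ X is stationary for f on X, then every y ∈ M with φ(y) = x is first-order critical for f ∘ φ: (f ∘ φ ∘ c)'(0) = 0 for every smooth curve c : ℝ → M with c(0) = y. -/
open Filter Topology Manifold

lemma mem_cone_of_hasDerivAt {E : Type*} [NormedAddCommGroup E] [NormedSpace ℝ E]
    {ψ : ℝ → E} {v : E} (h : HasDerivAt ψ v 0) {X : Set E} (hX : ∀ t, ψ t ∈ X) :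
    v ∈ bouligandTangentCone X (ψ 0) := by
  refine ⟨fun n => ψ ((n + 1 : ℝ)⁻¹), fun n => (n + 1 : ℝ)⁻¹, fun n => hX _,
    fun n => by positivity, ?_, ?_⟩
  · simpa [one_div] using tendsto_one_div_add_atTop_nhds_zero_nat (𝕜 := ℝ)
  · have hs := hasDerivAt_iff_tendsto_slope.1 h
    have hτ : Tendsto (fun n : ℕ => (n + 1 : ℝ)⁻¹) atTop (𝓝[≠] 0) := by
      refine tendsto_nhdsWithin_iff.2 ⟨by simpa [one_div] using tendsto_one_div_add_atTop_nhds_zero_nat (𝕜 := ℝ),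
        Eventually.of_forall fun n => ?_⟩
      have : (0:ℝ) < (n + 1 : ℝ)⁻¹ := by positivity
      simpa using this.ne'
    have := hs.comp hτ
    simpa [slope, Function.comp_def] using this

/-- Let `φ : M → E` be a smooth map from a finite-dimensional smooth
manifold without boundary to a finite-dimensional normed space, with `X = φ(M)`, and let
`f : E → ℝ` be differentiable. If `x ∈ X` is stationary for `f` on `X`, then every
`y ∈ φ⁻¹(x)` is first-order critical for `f ∘ φ`. -/
theorem statement5
    {E : Type*} [NormedAddCommGroup E] [NormedSpace ℝ E] [FiniteDimensional ℝ E]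
    {F : Type*} [NormedAddCommGroup F] [NormedSpace ℝ F] [FiniteDimensional ℝ F]
    {H : Type*} [TopologicalSpace H] (I : ModelWithCorners ℝ F H) [I.Boundaryless]
    {M : Type*} [TopologicalSpace M] [ChartedSpace H M] [IsManifold I (⊤ : ℕ∞) M]
    [T2Space M] [SecondCountableTopology M]
    (φ : M → E) (hφ : ContMDiff I 𝓘(ℝ, E) (⊤ : ℕ∞) φ)
    (f : E → ℝ) (hf : Differentiable ℝ f) (x : E)
    (hstat : ∀ v ∈ bouligandTangentCone (Set.range φ) x, 0 ≤ fderiv ℝ f x v) :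
    ∀ y : M, φ y = x →
      ∀ c : ℝ → M, ContMDiff 𝓘(ℝ, ℝ) I (⊤ : ℕ∞) c → c 0 = y → deriv (f ∘ φ ∘ c) 0 = 0 := by
  intro y hy c hc hc0
  set ψ : ℝ → E := φ ∘ c with hψdef
  have hψ := contMDiff_iff_contDiff.1 (hφ.comp hc)
  have hψ0 : ψ 0 = x := by simp [hψdef, hc0, hy]
  have hv : HasDerivAt ψ (deriv ψ 0) 0 := ((hψ.differentiable (by simp)) 0).hasDerivAt
  set v := deriv ψ 0 with hvdef
  have hmem : ∀ t, ψ t ∈ Set.range φ := fun t => ⟨c t, rfl⟩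
  have h1 : 0 ≤ fderiv ℝ f x v := by
    have := mem_cone_of_hasDerivAt hv hmem
    rw [hψ0] at this
    exact hstat v this
  have hneg : HasDerivAt (fun t => ψ (-t)) (-v) 0 := by
    have h' : HasDerivAt ψ v (-0 : ℝ) := by simpa using hv
    have := HasDerivAt.scomp (x := (0:ℝ)) h' (hasDerivAt_neg 0)
    simpa [Function.comp_def] using this
  have h2 : 0 ≤ fderiv ℝ f x (-v) := by
    have := mem_cone_of_hasDerivAt hneg (fun t => hmem (-t))
    simp only [neg_zero] at this
    rw [hψ0] at this
    exact hstat (-v) this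
  have hzero : fderiv ℝ f x v = 0 := by
    have := (map_neg (fderiv ℝ f x) v) ▸ h2
    linarith
  have hcomp : HasDerivAt (f ∘ ψ) (fderiv ℝ f (ψ 0) v) 0 :=
    (hf (ψ 0)).hasFDerivAt.comp_hasDerivAt 0 hv
  have : deriv (f ∘ ψ) 0 = fderiv ℝ f (ψ 0) v := hcomp.deriv
  rw [show f ∘ φ ∘ c = f ∘ ψ from rfl, this, hψ0, hzero]
end

section
/- Let M be a finite-dimensional smooth (C^∞) real manifold without boundary, E a finite-dimensional real inner product space, φ : M → E a smooth map, y ∈ M, x = φ(y), and w ∈ E. Suppose there exists a twice continuously differentiable function f : E → ℝ with gradient ∇f(x) = w such that y is second-order critical for f ∘ φ. Then there exists α > 0 such that y is second-order critical for f_α ∘ φ, where f_α : E → ℝ is the convex quadratic f_α(x') = ⟨w, x'⟩ + (α/2)·‖x' − x‖². -/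
open Filter Topology Manifold
open scoped RealInnerProductSpace

section aux
variable {E : Type*} [NormedAddCommGroup E] [InnerProductSpace ℝ E]

lemma aux_deriv_comp (f : E → ℝ) (g : ℝ → E) (hf : ContDiff ℝ 2 f) (hg : ContDiff ℝ (⊤:ℕ∞) g)
    (t : ℝ) : deriv (f ∘ g) t = fderiv ℝ f (g t) (deriv g t) := by
  have h1 : HasDerivAt g (deriv g t) t := (hg.differentiable (by simp) t).hasDerivAt
  have h2 : HasFDerivAt f (fderiv ℝ f (g t)) (g t) :=
    (hf.differentiable (by norm_num) (g t)).hasFDerivAt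
  exact (h2.comp_hasDerivAt t h1).deriv

lemma aux_deriv2_comp (f : E → ℝ) (g : ℝ → E) (hf : ContDiff ℝ 2 f) (hg : ContDiff ℝ (⊤:ℕ∞) g) :
    deriv (deriv (f ∘ g)) 0 =
      fderiv ℝ (fderiv ℝ f) (g 0) (deriv g 0) (deriv g 0)
        + fderiv ℝ f (g 0) (deriv (deriv g) 0) := by
  have heq : deriv (f ∘ g) = fun t => fderiv ℝ f (g t) (deriv g t) :=
    funext (aux_deriv_comp f g hf hg)
  rw [heq]
  have hg' : ContDiff ℝ (⊤:ℕ∞) (deriv g) := (contDiff_infty_iff_deriv.mp hg).2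
  have hgd : HasDerivAt g (deriv g 0) 0 := (hg.differentiable (by simp) 0).hasDerivAt
  have hdd : HasDerivAt (deriv g) (deriv (deriv g) 0) 0 :=
    (hg'.differentiable (by simp) 0).hasDerivAt
  have hf' : ContDiff ℝ 1 (fderiv ℝ f) := hf.fderiv_right (by norm_num)
  have hc : HasDerivAt (fun t => fderiv ℝ f (g t))
      (fderiv ℝ (fderiv ℝ f) (g 0) (deriv g 0)) 0 :=
    ((hf'.differentiable one_ne_zero (g 0)).hasFDerivAt.comp_hasDerivAt 0 hgd)
  exact (hc.clm_apply hdd).deriv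

end aux

/-- Let `φ : M → E` be a smooth map from a finite-dimensional smooth
manifold without boundary to a finite-dimensional inner product space, `y ∈ M`, `x = φ y`
and `w ∈ E`. If there is a twice continuously differentiable `f : E → ℝ` with
`∇f(x) = w` such that `y` is second-order critical for `f ∘ φ`, then there is `α > 0`
such that `y` is second-order critical for `f_α ∘ φ`, where
`f_α x' = ⟪w, x'⟫ + (α/2)‖x' - x‖²`. -/
theorem statement6
    {E : Type*} [NormedAddCommGroup E] [InnerProductSpace ℝ E] [FiniteDimensional ℝ E]
    {F : Type*} [NormedAddCommGroup F] [NormedSpace ℝ F] [FiniteDimensional ℝ F]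
    {H : Type*} [TopologicalSpace H] (I : ModelWithCorners ℝ F H) [I.Boundaryless]
    {M : Type*} [TopologicalSpace M] [ChartedSpace H M] [IsManifold I (⊤ : ℕ∞) M]
    [T2Space M] [SecondCountableTopology M]
    (φ : M → E) (hφ : ContMDiff I 𝓘(ℝ, E) (⊤ : ℕ∞) φ) (y : M) (w : E)
    (hex : ∃ f : E → ℝ, ContDiff ℝ 2 f ∧ gradient f (φ y) = w ∧
      ∀ c : ℝ → M, ContMDiff 𝓘(ℝ, ℝ) I (⊤ : ℕ∞) c → c 0 = y →
        deriv (f ∘ φ ∘ c) 0 = 0 ∧ 0 ≤ deriv (deriv (f ∘ φ ∘ c)) 0) :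
    ∃ α : ℝ, 0 < α ∧
      ∀ c : ℝ → M, ContMDiff 𝓘(ℝ, ℝ) I (⊤ : ℕ∞) c → c 0 = y →
        deriv ((fun x' => (inner ℝ w x' : ℝ) + α / 2 * ‖x' - φ y‖ ^ 2) ∘ φ ∘ c) 0 = 0 ∧
        0 ≤ deriv (deriv ((fun x' => (inner ℝ w x' : ℝ) + α / 2 * ‖x' - φ y‖ ^ 2) ∘ φ ∘ c)) 0 := by
  obtain ⟨f, hf, hgrad, hcrit⟩ := hex
  set x := φ y with hx
  set C := ‖fderiv ℝ (fderiv ℝ f) x‖ with hC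
  set α := C + 1 with hα
  have hα0 : 0 < α := by positivity
  refine ⟨α, hα0, ?_⟩
  intro c hc hc0
  have hg : ContDiff ℝ (⊤:ℕ∞) (φ ∘ c) := by
    have := hφ.comp hc
    rwa [contMDiff_iff_contDiff] at this
  set g := φ ∘ c with hgdef
  have hg0 : g 0 = x := by simp [hgdef, hc0, hx]
  set v := deriv g 0 with hv
  set a := deriv (deriv g) 0 with ha
  have hgd : HasDerivAt g v 0 := (hg.differentiable (by simp) 0).hasDerivAt
  have hdd : HasDerivAt (deriv g) a 0 :=
    (((contDiff_infty_iff_deriv.mp hg).2).differentiable (by simp) 0).hasDerivAt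
  -- gradient identity
  have key : ∀ u : E, fderiv ℝ f x u = ⟪w, u⟫ := by
    intro u
    rw [← hgrad]
    simp [gradient, InnerProductSpace.toDual_symm_apply]
  -- criticality of f ∘ g
  obtain ⟨hcrit1, hcrit2⟩ := hcrit c hc hc0
  have h1 : (⟪w, v⟫ : ℝ) = 0 := by
    have := aux_deriv_comp f g hf hg 0
    rw [hg0, key] at this
    rw [← this]
    exact hcrit1
  have h2 : 0 ≤ fderiv ℝ (fderiv ℝ f) x v v + ⟪w, a⟫ := by
    have := aux_deriv2_comp f g hf hg
    rw [hg0, key] at this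
    rw [← this]
    exact hcrit2
  -- op norm bound
  have hb : |fderiv ℝ (fderiv ℝ f) x v v| ≤ C * ‖v‖ ^ 2 := by
    calc |fderiv ℝ (fderiv ℝ f) x v v| = ‖fderiv ℝ (fderiv ℝ f) x v v‖ := rfl
      _ ≤ ‖fderiv ℝ (fderiv ℝ f) x v‖ * ‖v‖ := ContinuousLinearMap.le_opNorm _ _
      _ ≤ C * ‖v‖ * ‖v‖ := by
          gcongr
          exact ContinuousLinearMap.le_opNorm _ _
      _ = C * ‖v‖ ^ 2 := by ring
  -- derivative of the quadratic composition
  have hFg : ∀ t : ℝ, HasDerivAt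
      ((fun x' => (inner ℝ w x' : ℝ) + α / 2 * ‖x' - x‖ ^ 2) ∘ g)
      (⟪w, deriv g t⟫ + α / 2 * (⟪g t - x, deriv g t⟫ + ⟪deriv g t, g t - x⟫)) t := by
    intro t
    have hgt : HasDerivAt g (deriv g t) t := (hg.differentiable (by simp) t).hasDerivAt
    have ha1 : HasDerivAt (fun s => (⟪w, g s⟫ : ℝ)) ⟪w, deriv g t⟫ t := by
      simpa using (hasDerivAt_const t w).inner ℝ hgt
    have ha2 : HasDerivAt (fun s => (⟪g s - x, g s - x⟫ : ℝ))
        (⟪g t - x, deriv g t⟫ + ⟪deriv g t, g t - x⟫) t := by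
      simpa using (hgt.sub_const x).inner ℝ (hgt.sub_const x)
    have := ha1.add (ha2.const_mul (α / 2))
    refine HasDerivAt.congr_of_eventuallyEq this (Filter.Eventually.of_forall fun s => ?_)
    simp [Function.comp, real_inner_self_eq_norm_sq]
  have hD : deriv ((fun x' => (inner ℝ w x' : ℝ) + α / 2 * ‖x' - x‖ ^ 2) ∘ g) =
      fun t => ⟪w, deriv g t⟫ + α / 2 * (⟪g t - x, deriv g t⟫ + ⟪deriv g t, g t - x⟫) :=
    funext fun t => (hFg t).deriv
  constructor
  · rw [show ((fun x' => (inner ℝ w x' : ℝ) + α / 2 * ‖x' - x‖ ^ 2) ∘ φ ∘ c)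
        = ((fun x' => (inner ℝ w x' : ℝ) + α / 2 * ‖x' - x‖ ^ 2) ∘ g) from rfl, hD]
    simp [hg0, ← hv, h1]
  · rw [show ((fun x' => (inner ℝ w x' : ℝ) + α / 2 * ‖x' - x‖ ^ 2) ∘ φ ∘ c)
        = ((fun x' => (inner ℝ w x' : ℝ) + α / 2 * ‖x' - x‖ ^ 2) ∘ g) from rfl, hD]
    have hb1 : HasDerivAt (fun t => (⟪w, deriv g t⟫ : ℝ)) ⟪w, a⟫ 0 := by
      simpa using (hasDerivAt_const (0:ℝ) w).inner ℝ hdd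
    have hb2 : HasDerivAt (fun t => (⟪g t - x, deriv g t⟫ : ℝ)) (⟪v, v⟫) 0 := by
      have := (hgd.sub_const x).inner ℝ hdd
      simpa [hg0, ← hv] using this
    have hb3 : HasDerivAt (fun t => (⟪deriv g t, g t - x⟫ : ℝ)) (⟪v, v⟫) 0 := by
      have := hdd.inner ℝ (hgd.sub_const x)
      simpa [hg0, ← hv] using this
    have hfull : HasDerivAt
        (fun t => (⟪w, deriv g t⟫ : ℝ) + α / 2 * (⟪g t - x, deriv g t⟫ + ⟪deriv g t, g t - x⟫))
        (⟪w, a⟫ + α / 2 * (⟪v, v⟫ + ⟪v, v⟫)) 0 :=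
      hb1.add ((hb2.add hb3).const_mul (α / 2))
    rw [hfull.deriv]
    have hvv : (⟪v, v⟫ : ℝ) = ‖v‖ ^ 2 := real_inner_self_eq_norm_sq v
    have hwa : -(C * ‖v‖ ^ 2) ≤ ⟪w, a⟫ := by
      have h3 := le_abs_self (fderiv ℝ (fderiv ℝ f) x v v)
      linarith [h2, hb, h3]
    rw [hvv]
    have : α / 2 * (‖v‖ ^ 2 + ‖v‖ ^ 2) = (C + 1) * ‖v‖ ^ 2 := by rw [hα]; ring
    nlinarith [sq_nonneg ‖v‖]
end

section
/- Let M be a finite-dimensional smooth (C^∞) real manifold without boundary, E a finite-dimensional real normed space, φ : M → E a smooth map, X = φ(M), and y ∈ M. If c : ℝ → M is a smooth curve with c(0) = y and (φ ∘ c)'(0) = 0, then the acceleration (φ ∘ c)''(0) belongs to the Bouligand tangent cone T_{φ(y)}X. -/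
open Filter Topology Manifold

open Set in
lemma aux_tendsto {E : Type*} [NormedAddCommGroup E] [NormedSpace ℝ E] {f : ℝ → E}
    (hf : ContDiff ℝ 2 f) (h0 : deriv f 0 = 0) :
    Tendsto (fun t : ℝ => (t ^ 2 / 2)⁻¹ • (f t - f 0)) (𝓝[>] 0)
      (𝓝 (deriv (deriv f) 0)) := by
  set a := deriv (deriv f) 0 with ha
  have hf1 := contDiff_succ_iff_deriv.mp
    (show ContDiff ℝ (1 + 1) f by norm_num; exact hf)
  have hfd : Differentiable ℝ f := hf1.1
  have hd : HasDerivAt (deriv f) a 0 :=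
    (hf1.2.2.differentiable one_ne_zero 0).hasDerivAt
  have hlo : (fun s : ℝ => deriv f s - s • a) =o[𝓝 0] fun s => s := by
    have := hd.isLittleO
    simpa [h0] using this
  rw [Metric.tendsto_nhdsWithin_nhds]
  intro ε hε
  have hε4 : (0 : ℝ) < ε / 4 := by linarith
  obtain ⟨δ, hδ, hδb⟩ := Metric.eventually_nhds_iff.mp (hlo.def hε4)
  refine ⟨δ, hδ, fun t ht hdt => ?_⟩
  have ht0 : (0 : ℝ) < t := ht
  have htδ : t < δ := by
    simpa [Real.dist_eq, abs_of_pos ht0] using hdt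
  set g : ℝ → E := fun u => f u - f 0 - (u ^ 2 / 2) • a with hg
  have hderivs : ∀ s ∈ Icc (0 : ℝ) t,
      HasDerivWithinAt g (deriv f s - s • a) (Icc 0 t) s := by
    intro s _
    have h1 : HasDerivAt (fun u : ℝ => (u ^ 2 / 2) • a) (s • a) s := by
      have := ((hasDerivAt_pow 2 s).div_const 2).smul_const a
      convert this using 1
      push_cast; ring_nf
    exact (((hfd s).hasDerivAt.sub_const (f 0)).sub h1).hasDerivWithinAt
  have hbound : ∀ s ∈ Ico (0 : ℝ) t, ‖deriv f s - s • a‖ ≤ ε / 4 * t := by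
    intro s hs
    have hsd : dist s 0 < δ := by
      rw [Real.dist_eq, sub_zero, abs_of_nonneg hs.1]; linarith [hs.2]
    have := hδb hsd
    rw [Real.norm_eq_abs, abs_of_nonneg hs.1] at this
    calc ‖deriv f s - s • a‖ ≤ ε / 4 * s := this
      _ ≤ ε / 4 * t := by nlinarith [hs.2]
  have key := norm_image_sub_le_of_norm_deriv_le_segment' hderivs hbound t
    (right_mem_Icc.2 ht0.le)
  have hg0 : g 0 = 0 := by simp [hg]
  rw [hg0, sub_zero, sub_zero] at key
  have hgt : ‖g t‖ ≤ ε / 4 * t ^ 2 := by nlinarith [key]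
  have htne : t ^ 2 / 2 ≠ 0 := by positivity
  rw [dist_eq_norm]
  have heq : (t ^ 2 / 2)⁻¹ • (f t - f 0) - a = (t ^ 2 / 2)⁻¹ • g t := by
    simp only [hg]
    rw [smul_sub ((t ^ 2 / 2)⁻¹) (f t - f 0), smul_sub, smul_smul,
      inv_mul_cancel₀ htne, one_smul]
  rw [heq, norm_smul, norm_inv, Real.norm_eq_abs, abs_of_pos (by positivity : (0:ℝ) < t ^ 2 / 2)]
  have h2t : (t ^ 2 / 2)⁻¹ = 2 / t ^ 2 := by field_simp
  rw [h2t]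
  have ht2 : (0 : ℝ) < t ^ 2 := by positivity
  calc 2 / t ^ 2 * ‖g t‖ ≤ 2 / t ^ 2 * (ε / 4 * t ^ 2) := by
        apply mul_le_mul_of_nonneg_left hgt; positivity
    _ = ε / 2 := by field_simp; ring
    _ < ε := by linarith


/-- Let `φ : M → E` be a smooth map from a finite-dimensional smooth
manifold without boundary to a finite-dimensional normed space, `X = φ(M)` and `y ∈ M`.
If `c : ℝ → M` is a smooth curve with `c 0 = y` and `(φ ∘ c)'(0) = 0`, then the
acceleration `(φ ∘ c)''(0)` belongs to the Bouligand tangent cone to `X` at `φ y`. -/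
theorem statement7
    {E : Type*} [NormedAddCommGroup E] [NormedSpace ℝ E] [FiniteDimensional ℝ E]
    {F : Type*} [NormedAddCommGroup F] [NormedSpace ℝ F] [FiniteDimensional ℝ F]
    {H : Type*} [TopologicalSpace H] (I : ModelWithCorners ℝ F H) [I.Boundaryless]
    {M : Type*} [TopologicalSpace M] [ChartedSpace H M] [IsManifold I (⊤ : ℕ∞) M]
    [T2Space M] [SecondCountableTopology M]
    (φ : M → E) (hφ : ContMDiff I 𝓘(ℝ, E) (⊤ : ℕ∞) φ) (y : M)
    (c : ℝ → M) (hc : ContMDiff 𝓘(ℝ, ℝ) I (⊤ : ℕ∞) c) (hc0 : c 0 = y)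
    (hvel : deriv (φ ∘ c) 0 = 0) :
    deriv (deriv (φ ∘ c)) 0 ∈ bouligandTangentCone (Set.range φ) (φ y) := by
  set f := φ ∘ c with hfdef
  have hfs : ContDiff ℝ 2 f := by
    have : ContMDiff 𝓘(ℝ, ℝ) 𝓘(ℝ, E) (⊤ : ℕ∞) f := hφ.comp hc
    exact (contMDiff_iff_contDiff.mp this).of_le (by decide)
  have htend := aux_tendsto hfs hvel
  set tn : ℕ → ℝ := fun n => ((n : ℝ) + 1)⁻¹ with htn
  have htn_pos : ∀ n, 0 < tn n := fun n => by positivity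
  have htn_lim : Tendsto tn atTop (𝓝[>] 0) := by
    apply tendsto_nhdsWithin_of_tendsto_nhds_of_eventually_within
    · exact tendsto_one_div_add_atTop_nhds_zero_nat.congr (fun n => by simp [htn, one_div])
    · exact Eventually.of_forall fun n => htn_pos n
  refine ⟨fun n => f (tn n), fun n => (tn n) ^ 2 / 2, fun n => ⟨c (tn n), rfl⟩,
    fun n => by positivity, ?_, ?_⟩
  · have : Tendsto (fun n => (tn n) ^ 2 / 2) atTop (𝓝 ((0:ℝ) ^ 2 / 2)) :=
      ((htn_lim.mono_right nhdsWithin_le_nhds).pow 2).div_const 2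
    simpa using this
  · have hf0 : f 0 = φ y := by simp [hfdef, hc0]
    have := htend.comp htn_lim
    simpa [Function.comp_def, hf0] using this
end

section
/- Let M be a finite-dimensional smooth (C^∞) real manifold without boundary, E a finite-dimensional real inner product space, φ : M → E a smooth map, y ∈ M, x = φ(y), and let f : E → ℝ be twice continuously differentiable. If y is second-order critical for f ∘ φ, then ⟨∇f(x), w⟩ ≥ 0 for every w ∈ B_y, where B_y = {w ∈ E : there exist smooth curves c_i : ℝ → M (i ∈ ℕ) with c_i(0) = y such that (φ ∘ c_i)'(0) → 0 and (φ ∘ c_i)''(0) → w}. -/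
open Filter Topology Manifold RealInnerProductSpace

/-- The set `B_y` of limits of accelerations `(φ ∘ c_i)''(0)` of smooth curves `c_i` through
`y` whose velocities `(φ ∘ c_i)'(0)` tend to zero. -/
def Bset
    {E : Type*} [NormedAddCommGroup E] [NormedSpace ℝ E]
    {F : Type*} [NormedAddCommGroup F] [NormedSpace ℝ F]
    {H : Type*} [TopologicalSpace H] (I : ModelWithCorners ℝ F H)
    {M : Type*} [TopologicalSpace M] [ChartedSpace H M]
    (φ : M → E) (y : M) : Set E :=
  {w | ∃ c : ℕ → ℝ → M, (∀ i, ContMDiff 𝓘(ℝ, ℝ) I (⊤ : ℕ∞) (c i)) ∧ (∀ i, c i 0 = y) ∧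
    Filter.Tendsto (fun i => deriv (φ ∘ c i) 0) Filter.atTop (𝓝 0) ∧
    Filter.Tendsto (fun i => deriv (deriv (φ ∘ c i)) 0) Filter.atTop (𝓝 w)}

/-- Let `φ : M → E` be a smooth map from a finite-dimensional smooth
manifold without boundary to a finite-dimensional inner product space, `y ∈ M`, `x = φ y`,
and `f : E → ℝ` twice continuously differentiable. If `y` is second-order critical for
`f ∘ φ`, then `⟪∇f(x), w⟫ ≥ 0` for every `w ∈ B_y`. -/
theorem statement8
    {E : Type*} [NormedAddCommGroup E] [InnerProductSpace ℝ E] [FiniteDimensional ℝ E]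
    {F : Type*} [NormedAddCommGroup F] [NormedSpace ℝ F] [FiniteDimensional ℝ F]
    {H : Type*} [TopologicalSpace H] (I : ModelWithCorners ℝ F H) [I.Boundaryless]
    {M : Type*} [TopologicalSpace M] [ChartedSpace H M] [IsManifold I (⊤ : ℕ∞) M]
    [T2Space M] [SecondCountableTopology M]
    (φ : M → E) (hφ : ContMDiff I 𝓘(ℝ, E) (⊤ : ℕ∞) φ) (y : M)
    (f : E → ℝ) (hf : ContDiff ℝ 2 f)
    (hcrit : ∀ c : ℝ → M, ContMDiff 𝓘(ℝ, ℝ) I (⊤ : ℕ∞) c → c 0 = y →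
      deriv (f ∘ φ ∘ c) 0 = 0 ∧ 0 ≤ deriv (deriv (f ∘ φ ∘ c)) 0) :
    ∀ w ∈ Bset I φ y, 0 ≤ (inner ℝ (gradient f (φ y)) w : ℝ) := by
  intro w hw
  obtain ⟨c, hc, hc0, hv, ha⟩ := hw
  set x := φ y with hx
  set g : E → E := gradient f with hg
  -- g is C^1
  have hgC1 : ContDiff ℝ 1 g := by
    have h1 : ContDiff ℝ 1 (fderiv ℝ f) := hf.fderiv_right (le_refl 2)
    have : g = fun z => (InnerProductSpace.toDual ℝ E).symm (fderiv ℝ f z) := rfl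
    rw [this]
    exact (InnerProductSpace.toDual ℝ E).symm.contDiff.comp h1
  set v : ℕ → E := fun i => deriv (φ ∘ c i) 0 with hvdef
  set a : ℕ → E := fun i => deriv (deriv (φ ∘ c i)) 0 with hadef
  -- key identity for each i
  have key : ∀ i, deriv (deriv (f ∘ φ ∘ c i)) 0
      = ⟪g x, a i⟫ + ⟪fderiv ℝ g x (v i), v i⟫ := by
    intro i
    set γ : ℝ → E := φ ∘ c i with hγ
    have hγsm := contMDiff_iff_contDiff.mp (hφ.comp (hc i))
    have hγd : Differentiable ℝ γ := hγsm.differentiable (by norm_num)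
    have hγ0 : γ 0 = x := by simp [hγ, hc0 i, hx]
    -- first derivative
    have h1 : deriv (f ∘ γ) = fun t => ⟪g (γ t), deriv γ t⟫ := by
      funext t
      have hgt : HasGradientAt f (g (γ t)) (γ t) :=
        ((hf.differentiable (by norm_num) (γ t))).hasGradientAt
      have := hgt.hasFDerivAt.comp_hasDerivAt t (hγd t).hasDerivAt
      rw [this.deriv, InnerProductSpace.toDual_apply_apply]
    have hfγ : f ∘ φ ∘ c i = f ∘ γ := rfl
    rw [hfγ, h1]
    -- second derivative via product rule for inner
    have hgd : Differentiable ℝ g := hgC1.differentiable one_ne_zero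
    have hA : HasDerivAt (fun t => g (γ t)) (fderiv ℝ g x (v i)) 0 := by
      have := (hgd (γ 0)).hasFDerivAt.comp_hasDerivAt 0 (hγd 0).hasDerivAt
      rwa [hγ0] at this
    have hdγ : Differentiable ℝ (deriv γ) :=
      ((contDiff_infty_iff_deriv.mp hγsm).2).differentiable (by norm_num)
    have hB : HasDerivAt (deriv γ) (a i) 0 := (hdγ 0).hasDerivAt
    have := hA.inner ℝ hB
    rw [this.deriv, hγ0]
  -- nonnegativity of each term
  have hpos : ∀ i, 0 ≤ ⟪g x, a i⟫ + ⟪fderiv ℝ g x (v i), v i⟫ := by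
    intro i
    rw [← key i]
    exact (hcrit (c i) (hc i) (hc0 i)).2
  -- limits
  have hlim : Tendsto (fun i => ⟪g x, a i⟫ + ⟪fderiv ℝ g x (v i), v i⟫)
      atTop (𝓝 (⟪g x, w⟫ + ⟪fderiv ℝ g x 0, (0 : E)⟫)) := by
    refine Tendsto.add ?_ ?_
    · exact tendsto_const_nhds.inner ha
    · exact (((fderiv ℝ g x).continuous.tendsto 0).comp hv).inner hv
  rw [inner_zero_right, add_zero] at hlim
  exact ge_of_tendsto' hlim hpos |>.trans' (le_of_eq rfl) |> fun h => le_trans (by simp) h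
end

section
/- Let M be a finite-dimensional smooth (C^∞) real manifold without boundary, E a finite-dimensional real inner product space, φ : M → E a smooth map, X = φ(M), y ∈ M and x = φ(y). Define B_y = {w ∈ E : there exist smooth curves c_i : ℝ → M (i ∈ ℕ) with c_i(0) = y such that (φ ∘ c_i)'(0) → 0 and (φ ∘ c_i)''(0) → w}. Suppose every w ∈ E satisfying ⟨w, b⟩ ≥ 0 for all b ∈ B_y also satisfies ⟨w, v⟩ ≥ 0 for all v in the Bouligand tangent cone T_xX (i.e., B_y* ⊆ (T_xX)*). Then φ satisfies '2 ⇒ 1' at y: for every twice continuously differentiable f : E → ℝ, if y is second-order critical for f ∘ φ then x is stationary for f on X. -/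
open Filter Topology Manifold

lemma aux_second_deriv {E : Type*} [NormedAddCommGroup E] [NormedSpace ℝ E]
    (f : E → ℝ) (hf : ContDiff ℝ 2 f) (h : ℝ → E) (hh : ContDiff ℝ (⊤ : ℕ∞) h) :
    deriv (deriv (f ∘ h)) 0 =
      fderiv ℝ (fderiv ℝ f) (h 0) (deriv h 0) (deriv h 0)
        + fderiv ℝ f (h 0) (deriv (deriv h) 0) := by
  have hh1 : Differentiable ℝ h := hh.differentiable (by norm_num)
  have hdh : ContDiff ℝ (⊤ : ℕ∞) (deriv h) := (contDiff_infty_iff_deriv.mp hh).2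
  have hf1 : Differentiable ℝ f := hf.differentiable (by norm_num)
  have hfd : ContDiff ℝ 1 (fderiv ℝ f) := hf.fderiv_right (by norm_num)
  have hd1 : deriv (f ∘ h) = fun t => fderiv ℝ f (h t) (deriv h t) := by
    funext t
    exact ((hf1 (h t)).hasFDerivAt.comp_hasDerivAt t (hh1 t).hasDerivAt).deriv
  rw [hd1]
  have hA : HasDerivAt (fun t => fderiv ℝ f (h t))
      (fderiv ℝ (fderiv ℝ f) (h 0) (deriv h 0)) 0 :=
    ((hfd.differentiable one_ne_zero) (h 0)).hasFDerivAt.comp_hasDerivAt 0 (hh1 0).hasDerivAt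
  have hu : HasDerivAt (deriv h) (deriv (deriv h) 0) 0 :=
    ((hdh.differentiable (by norm_num)) 0).hasDerivAt
  exact (hA.clm_apply hu).deriv

/-- Let `φ : M → E` be a smooth map from a finite-dimensional smooth
manifold without boundary to a finite-dimensional inner product space, `X = φ(M)`,
`y ∈ M`, `x = φ y`. If `B_y* ⊆ (T_x X)*` (every `w` with `⟪w, b⟫ ≥ 0` for all `b ∈ B_y`
also satisfies `⟪w, v⟫ ≥ 0` for all `v ∈ T_x X`), then `φ` satisfies "2 ⇒ 1" at `y`:
for every twice continuously differentiable `f : E → ℝ`, if `y` is second-order critical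
for `f ∘ φ` then `x` is stationary for `f` on `X`. -/
theorem statement9
    {E : Type*} [NormedAddCommGroup E] [InnerProductSpace ℝ E] [FiniteDimensional ℝ E]
    {F : Type*} [NormedAddCommGroup F] [NormedSpace ℝ F] [FiniteDimensional ℝ F]
    {H : Type*} [TopologicalSpace H] (I : ModelWithCorners ℝ F H) [I.Boundaryless]
    {M : Type*} [TopologicalSpace M] [ChartedSpace H M] [IsManifold I (⊤ : ℕ∞) M]
    [T2Space M] [SecondCountableTopology M]
    (φ : M → E) (hφ : ContMDiff I 𝓘(ℝ, E) (⊤ : ℕ∞) φ) (y : M)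
    (hdual : ∀ w : E, (∀ b ∈ Bset I φ y, 0 ≤ (inner ℝ w b : ℝ)) →
      ∀ v ∈ bouligandTangentCone (Set.range φ) (φ y), 0 ≤ (inner ℝ w v : ℝ)) :
    ∀ f : E → ℝ, ContDiff ℝ 2 f →
      (∀ c : ℝ → M, ContMDiff 𝓘(ℝ, ℝ) I (⊤ : ℕ∞) c → c 0 = y →
        deriv (f ∘ φ ∘ c) 0 = 0 ∧ 0 ≤ deriv (deriv (f ∘ φ ∘ c)) 0) →
      ∀ v ∈ bouligandTangentCone (Set.range φ) (φ y), 0 ≤ fderiv ℝ f (φ y) v := by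
  intro f hf hcrit
  set L : E →L[ℝ] ℝ := fderiv ℝ f (φ y) with hLdef
  set w : E := (InnerProductSpace.toDual ℝ E).symm L with hwdef
  have hw : ∀ u : E, (inner ℝ w u : ℝ) = L u := fun u =>
    InnerProductSpace.toDual_symm_apply
  have key : ∀ b ∈ Bset I φ y, 0 ≤ (inner ℝ w b : ℝ) := by
    rintro b ⟨c, hc, hc0, hu, hb⟩
    have hh : ∀ i, ContDiff ℝ (⊤ : ℕ∞) (φ ∘ c i) := fun i =>
      contMDiff_iff_contDiff.mp (hφ.comp (hc i))
    have heq : ∀ i, deriv (deriv (f ∘ φ ∘ c i)) 0 =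
        fderiv ℝ (fderiv ℝ f) (φ y) (deriv (φ ∘ c i) 0) (deriv (φ ∘ c i) 0)
          + L (deriv (deriv (φ ∘ c i)) 0) := by
      intro i
      have h0 : (φ ∘ c i) 0 = φ y := by simp [Function.comp, hc0 i]
      have := aux_second_deriv f hf (φ ∘ c i) (hh i)
      rw [h0] at this
      exact this
    have hQcont : Continuous (fun u : E => fderiv ℝ (fderiv ℝ f) (φ y) u u) :=
      (fderiv ℝ (fderiv ℝ f) (φ y)).continuous.clm_apply continuous_id
    have hQ : Tendsto (fun i => fderiv ℝ (fderiv ℝ f) (φ y) (deriv (φ ∘ c i) 0)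
        (deriv (φ ∘ c i) 0)) atTop (𝓝 0) := by
      have := (hQcont.tendsto 0).comp hu
      simpa [Function.comp_def] using this
    have hL : Tendsto (fun i => L (deriv (deriv (φ ∘ c i)) 0)) atTop (𝓝 (L b)) :=
      (L.continuous.tendsto b).comp hb
    have htend : Tendsto (fun i => deriv (deriv (f ∘ φ ∘ c i)) 0) atTop (𝓝 (L b)) := by
      have := hQ.add hL
      rw [zero_add] at this
      simpa only [heq] using this
    have hnn : ∀ i, 0 ≤ deriv (deriv (f ∘ φ ∘ c i)) 0 := fun i =>
      (hcrit (c i) (hc i) (hc0 i)).2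
    rw [hw b]
    exact ge_of_tendsto htend (Eventually.of_forall hnn)
  intro v hv
  have := hdual w key v hv
  rwa [hw v] at this
end

section
/- Let M be a finite-dimensional smooth (C^∞) real manifold without boundary, E a finite-dimensional real inner product space, φ : M → E a smooth map, X = φ(M), y ∈ M and x = φ(y). Suppose φ satisfies '2 ⇒ 1' at y: for every twice continuously differentiable f : E → ℝ, if y is second-order critical for f ∘ φ then x is stationary for f on X. Then every w ∈ E such that (a) ⟨w, (φ ∘ c)'(0)⟩ = 0 for every smooth curve c : ℝ → M with c(0) = y, and (b) ⟨w, (φ ∘ c)''(0)⟩ ≥ 0 for every such curve, must satisfy ⟨w, v⟩ ≥ 0 for all v in the Bouligand tangent cone T_xX. -/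
open Filter Topology Manifold

lemma aux_deriv_inner {E : Type*} [NormedAddCommGroup E] [InnerProductSpace ℝ E]
    (w : E) (g : ℝ → E) (hg : Differentiable ℝ g) :
    deriv (fun t => (inner ℝ w (g t) : ℝ)) = fun t => (inner ℝ w (deriv g t) : ℝ) := by
  funext t
  have := (hasDerivAt_const t w).inner ℝ (hg t).hasDerivAt
  simpa using this.deriv

/-- Let `φ : M → E` be a smooth map from a finite-dimensional smooth
manifold without boundary to a finite-dimensional inner product space, `X = φ(M)`,
`y ∈ M`, `x = φ y`. Suppose `φ` satisfies "2 ⇒ 1" at `y`: every twice continuously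
differentiable `f` for which `y` is second-order critical for `f ∘ φ` has `x` stationary
on `X`. Then any `w ∈ E` with `⟪w, (φ∘c)'(0)⟫ = 0` and `⟪w, (φ∘c)''(0)⟫ ≥ 0` for all
smooth curves `c` through `y` satisfies `⟪w, v⟫ ≥ 0` for all `v ∈ T_x X`. -/
theorem statement10
    {E : Type*} [NormedAddCommGroup E] [InnerProductSpace ℝ E] [FiniteDimensional ℝ E]
    {F : Type*} [NormedAddCommGroup F] [NormedSpace ℝ F] [FiniteDimensional ℝ F]
    {H : Type*} [TopologicalSpace H] (I : ModelWithCorners ℝ F H) [I.Boundaryless]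
    {M : Type*} [TopologicalSpace M] [ChartedSpace H M] [IsManifold I ((⊤ : ℕ∞) : WithTop ℕ∞) M]
    [T2Space M] [SecondCountableTopology M]
    (φ : M → E) (hφ : ContMDiff I 𝓘(ℝ, E) (⊤ : ℕ∞) φ) (y : M)
    (h21 : ∀ f : E → ℝ, ContDiff ℝ 2 f →
      (∀ c : ℝ → M, ContMDiff 𝓘(ℝ, ℝ) I (⊤ : ℕ∞) c → c 0 = y →
        deriv (f ∘ φ ∘ c) 0 = 0 ∧ 0 ≤ deriv (deriv (f ∘ φ ∘ c)) 0) →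
      ∀ v ∈ bouligandTangentCone (Set.range φ) (φ y), 0 ≤ fderiv ℝ f (φ y) v) :
    ∀ w : E,
      (∀ c : ℝ → M, ContMDiff 𝓘(ℝ, ℝ) I (⊤ : ℕ∞) c → c 0 = y →
        (inner ℝ w (deriv (φ ∘ c) 0) : ℝ) = 0) →
      (∀ c : ℝ → M, ContMDiff 𝓘(ℝ, ℝ) I (⊤ : ℕ∞) c → c 0 = y →
        0 ≤ (inner ℝ w (deriv (deriv (φ ∘ c)) 0) : ℝ)) →
      ∀ v ∈ bouligandTangentCone (Set.range φ) (φ y), 0 ≤ (inner ℝ w v : ℝ) := by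
  intro w hw1 hw2 v hv
  set f : E → ℝ := fun z => (inner ℝ w z : ℝ) with hf
  have hfC : ContDiff ℝ 2 f := (innerSL ℝ w).contDiff
  have key := h21 f hfC ?_ v hv
  · have : fderiv ℝ f (φ y) v = inner ℝ w v := by
      have : fderiv ℝ f (φ y) = innerSL ℝ w := ((innerSL ℝ w).hasFDerivAt).fderiv
      rw [this]; rfl
    rwa [this] at key
  · intro c hc hc0
    have hg : ContDiff ℝ ((⊤:ℕ∞) : WithTop ℕ∞) (φ ∘ c) := contMDiff_iff_contDiff.mp (hφ.comp hc)
    have hgd : Differentiable ℝ (φ ∘ c) := hg.differentiable (by simp)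
    have e1 : f ∘ φ ∘ c = fun t => (inner ℝ w ((φ ∘ c) t) : ℝ) := rfl
    have e2 : deriv (f ∘ φ ∘ c) = fun t => (inner ℝ w (deriv (φ ∘ c) t) : ℝ) := by
      rw [e1, aux_deriv_inner w _ hgd]
    constructor
    · rw [e2]; exact hw1 c hc hc0
    · rw [e2, aux_deriv_inner w _ ((contDiff_infty_iff_deriv.mp hg).2.differentiable (by simp))]
      exact hw2 c hc hc0
end

section
/- Let E₁, …, E_d and F be finite-dimensional real inner product spaces, φ : E₁ × ⋯ × E_d → F a d-multilinear map, M a subset of E₁ × ⋯ × E_d, and X = φ(M). Let y = (y₁, …, y_d) ∈ M be such that y_i = 0 for at least three distinct indices i (so φ(y) = 0), and suppose 0 is not an isolated point of X. Then there exists w ∈ F such that, with the linear cost f = ⟨w, ·⟩ : F → ℝ: (i) for every twice differentiable curve c : ℝ → E₁ × ⋯ × E_d with c(0) = y, both (f ∘ φ ∘ c)'(0) = 0 and (f ∘ φ ∘ c)''(0) = 0 — in particular y is second-order critical for f ∘ φ along every smooth curve through y — and (ii) there exists v in the Bouligand tangent cone T₀X with ⟨w, v⟩ < 0, so 0 = φ(y)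 is not stationary for f on X. -/
open Filter Topology

section aux
variable {d : ℕ} {E : Fin d → Type*}
    [∀ i, NormedAddCommGroup (E i)] [∀ i, InnerProductSpace ℝ (E i)]
    [∀ i, FiniteDimensional ℝ (E i)]
    {F : Type*} [NormedAddCommGroup F] [InnerProductSpace ℝ F] [FiniteDimensional ℝ F]

set_option linter.unusedSectionVars false

lemma multilinear_cont (φ : MultilinearMap ℝ E F) : Continuous φ := by
  classical
  let b : ∀ i, Module.Basis (Fin (Module.finrank ℝ (E i))) ℝ (E i) := fun i => Module.finBasis ℝ (E i)
  have hrepr : ∀ m : ∀ i, E i, φ m =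
      ∑ p : ∀ i, Fin (Module.finrank ℝ (E i)),
        (∏ i, (b i).repr (m i) (p i)) • φ (fun i => b i (p i)) := by
    intro m
    conv_lhs => rw [show m = fun i => ∑ j, (b i).repr (m i) j • b i j from
      funext fun i => ((b i).sum_repr (m i)).symm]
    rw [φ.map_sum]
    congr 1
    funext p
    rw [φ.map_smul_univ]
  have : ⇑φ = fun m => ∑ p : ∀ i, Fin (Module.finrank ℝ (E i)),
      (∏ i, (b i).repr (m i) (p i)) • φ (fun i => b i (p i)) := funext hrepr
  rw [this]
  refine continuous_finset_sum _ fun p _ => Continuous.smul ?_ continuous_const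
  refine continuous_finset_prod _ fun i _ => ?_
  exact (((b i).coord (p i)).continuous_of_finiteDimensional).comp (continuous_apply i)

lemma key_deriv (Φ : ContinuousMultilinearMap ℝ E F) (w : F) (u : ℝ → ∀ i, E i)
    (hu : Differentiable ℝ u) (t : ℝ) :
    HasDerivAt (fun s => (inner ℝ w (Φ (u s)) : ℝ))
      (∑ i, (inner ℝ w (Φ (Function.update (u t) i (deriv u t i))) : ℝ)) t := by
  classical
  have h1 : HasDerivAt u (deriv u t) t := (hu t).hasDerivAt
  have h2 : HasDerivAt (fun s => Φ (u s)) (Φ.linearDeriv (u t) (deriv u t)) t :=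
    (Φ.hasFDerivAt (u t)).comp_hasDerivAt t h1
  have h3 := ((innerSL ℝ w).hasFDerivAt).comp_hasDerivAt t h2
  have : (innerSL ℝ w) (Φ.linearDeriv (u t) (deriv u t)) =
      ∑ i, (inner ℝ w (Φ (Function.update (u t) i (deriv u t i))) : ℝ) := by
    rw [ContinuousMultilinearMap.linearDeriv_apply, map_sum]
    simp [innerSL_apply_apply]
  rw [this] at h3
  exact h3

end aux

/-- Let `φ : E₁ × ⋯ × E_d → F` be a `d`-multilinear map between
finite-dimensional real inner product spaces, `M ⊆ E₁ × ⋯ × E_d`, `X = φ(M)`, and let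
`y ∈ M` have `y i = 0` for at least three distinct indices (so `φ y = 0`). If `0` is not
an isolated point of `X`, then there is `w ∈ F` such that, with the linear cost
`f = ⟪w, ·⟫`: (i) along every twice differentiable curve `c` through `y` in the ambient
product space, `(f ∘ φ ∘ c)'(0) = 0` and `(f ∘ φ ∘ c)''(0) = 0`; and (ii) there is `v` in
the Bouligand tangent cone `T₀X` with `⟪w, v⟫ < 0`, so `0` is not stationary for `f` on
`X`. -/
theorem statement11 {d : ℕ} {E : Fin d → Type*}
    [∀ i, NormedAddCommGroup (E i)] [∀ i, InnerProductSpace ℝ (E i)]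
    [∀ i, FiniteDimensional ℝ (E i)]
    {F : Type*} [NormedAddCommGroup F] [InnerProductSpace ℝ F] [FiniteDimensional ℝ F]
    (φ : MultilinearMap ℝ E F) (M : Set (∀ i, E i)) (y : ∀ i, E i) (hyM : y ∈ M)
    (i₁ i₂ i₃ : Fin d) (h12 : i₁ ≠ i₂) (h13 : i₁ ≠ i₃) (h23 : i₂ ≠ i₃)
    (hy1 : y i₁ = 0) (hy2 : y i₂ = 0) (hy3 : y i₃ = 0)
    (hnotiso : ∀ U ∈ 𝓝[φ '' M] (0 : F), ∃ z ∈ U, z ≠ 0) :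
    ∃ w : F,
      φ y = 0 ∧
      (∀ c : ℝ → ∀ i, E i, Differentiable ℝ c → Differentiable ℝ (deriv c) → c 0 = y →
        deriv (fun t => (inner ℝ w (φ (c t)) : ℝ)) 0 = 0 ∧
        deriv (deriv (fun t => (inner ℝ w (φ (c t)) : ℝ))) 0 = 0) ∧
      (∃ v ∈ bouligandTangentCone (φ '' M) (0 : F), (inner ℝ w v : ℝ) < 0) := by
  classical
  -- the continuous multilinear map
  let Φ : ContinuousMultilinearMap ℝ E F := ⟨φ, multilinear_cont φ⟩
  have hΦ : ⇑Φ = ⇑φ := rfl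
  -- choose index k avoiding any two given indices
  have pick : ∀ i j : Fin d, ∃ k, y k = 0 ∧ k ≠ i ∧ k ≠ j := by
    intro i j
    by_cases h1 : i₁ ≠ i ∧ i₁ ≠ j
    · exact ⟨i₁, hy1, h1.1, h1.2⟩
    by_cases h2 : i₂ ≠ i ∧ i₂ ≠ j
    · exact ⟨i₂, hy2, h2.1, h2.2⟩
    have H1 : i₁ = i ∨ i₁ = j := by tauto
    have H2 : i₂ = i ∨ i₂ = j := by tauto
    refine ⟨i₃, hy3, fun h => ?_, fun h => ?_⟩ <;> subst h <;>
      rcases H1 with h1' | h1' <;> rcases H2 with h2' | h2' <;>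
        first | exact h13 h1' | exact h23 h2' | exact h12 (h1'.trans h2'.symm)
  -- construct w and v from the non-isolation hypothesis
  have seq : ∀ n : ℕ, ∃ z : F, z ∈ φ '' M ∧ ‖z‖ < 1 / (n + 1) ∧ z ≠ 0 := by
    intro n
    have hpos : (0 : ℝ) < 1 / (n + 1) := by positivity
    have hU : (Metric.ball (0 : F) (1 / (n + 1)) ∩ φ '' M) ∈ 𝓝[φ '' M] (0 : F) :=
      Filter.inter_mem (mem_nhdsWithin_of_mem_nhds (Metric.ball_mem_nhds _ hpos))
        self_mem_nhdsWithin
    obtain ⟨z, hz, hz0⟩ := hnotiso _ hU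
    exact ⟨z, hz.2, by simpa [mem_ball_zero_iff] using hz.1, hz0⟩
  choose z hzX hznorm hzne using seq
  have hτpos : ∀ n, 0 < ‖z n‖ := fun n => norm_pos_iff.2 (hzne n)
  have husphere : ∀ n, ‖z n‖⁻¹ • z n ∈ Metric.sphere (0 : F) 1 := by
    intro n
    simp [norm_smul, abs_of_pos (inv_pos.2 (hτpos n)), inv_mul_cancel₀ (hτpos n).ne']
  obtain ⟨v, hv, σ, hσ, hconv⟩ :=
    (isCompact_sphere (0 : F) 1).tendsto_subseq husphere
  have hvnorm : ‖v‖ = 1 := by simpa using hv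
  refine ⟨-v, φ.map_coord_zero i₁ hy1, ?_, ?_⟩
  · -- part (i): derivatives vanish along curves
    intro c hc hc' hc0
    set w : F := -v
    -- first derivative of ψ at any point
    have hψ : ∀ t, HasDerivAt (fun s => (inner ℝ w (φ (c s)) : ℝ))
        (∑ i, (inner ℝ w (Φ (Function.update (c t) i (deriv c t i))) : ℝ)) t := by
      intro t
      have := key_deriv Φ w c hc t
      simpa [hΦ] using this
    constructor
    · rw [(hψ 0).deriv]
      refine Finset.sum_eq_zero fun i _ => ?_
      obtain ⟨k, hk0, hki, -⟩ := pick i i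
      have : Φ (Function.update (c 0) i (deriv c 0 i)) = 0 := by
        apply Φ.map_coord_zero k
        rw [Function.update_of_ne hki, hc0, hk0]
      rw [this, inner_zero_right]
    · -- second derivative
      have hderiv : deriv (fun s => (inner ℝ w (φ (c s)) : ℝ)) =
          fun t => ∑ i, (inner ℝ w (Φ (Function.update (c t) i (deriv c t i))) : ℝ) :=
        funext fun t => (hψ t).deriv
      rw [hderiv]
      -- for each i, the curve m_i is differentiable
      have hm : ∀ i : Fin d, Differentiable ℝ
          (fun t => Function.update (c t) i (deriv c t i)) := by
        intro i
        apply differentiable_pi.2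
        intro j
        by_cases hji : j = i
        · subst hji
          have : (fun t => Function.update (c t) j (deriv c t j) j) =
              fun t => deriv c t j := by
            funext t; rw [Function.update_self]
          rw [this]
          exact differentiable_pi.1 hc' j
        · have : (fun t => Function.update (c t) i (deriv c t i) j) =
              fun t => c t j := by
            funext t; rw [Function.update_of_ne hji]
          rw [this]
          exact differentiable_pi.1 hc j
      -- each summand has derivative 0 at 0
      have hterm : ∀ i : Fin d, HasDerivAt
          (fun t => (inner ℝ w (Φ (Function.update (c t) i (deriv c t i))) : ℝ)) 0 0 := by
        intro i
        set m : ℝ → ∀ j, E j := fun t => Function.update (c t) i (deriv c t i) with hm_def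
        have h := key_deriv Φ w m (hm i) 0
        have hzero : (∑ j, (inner ℝ w (Φ (Function.update (m 0) j (deriv m 0 j))) : ℝ)) = 0 := by
          refine Finset.sum_eq_zero fun j _ => ?_
          obtain ⟨k, hk0, hki, hkj⟩ := pick i j
          have : Φ (Function.update (m 0) j (deriv m 0 j)) = 0 := by
            apply Φ.map_coord_zero k
            rw [Function.update_of_ne hkj]
            show Function.update (c 0) i (deriv c 0 i) k = 0
            rw [Function.update_of_ne hki, hc0, hk0]
          rw [this, inner_zero_right]
        rw [hzero] at h
        exact h
      have hsum : HasDerivAt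
          (fun t => ∑ i, (inner ℝ w (Φ (Function.update (c t) i (deriv c t i))) : ℝ))
          (∑ i : Fin d, (0 : ℝ)) 0 := HasDerivAt.fun_sum fun i _ => hterm i
      rw [hsum.deriv]
      simp
  · -- part (ii): tangent cone direction
    refine ⟨v, ⟨fun n => z (σ n), fun n => ‖z (σ n)‖, fun n => hzX (σ n),
      fun n => hτpos (σ n), ?_, ?_⟩, ?_⟩
    · -- τ → 0
      have hb : ∀ n : ℕ, ‖z (σ n)‖ ≤ 1 / (n + 1) := by
        intro n
        have h1 : (1 : ℝ) / (σ n + 1) ≤ 1 / (n + 1) := by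
          apply one_div_le_one_div_of_le (by positivity)
          have h := hσ.le_apply (x := n)
          have : (n : ℝ) ≤ σ n := by exact_mod_cast h
          linarith
        exact le_trans (hznorm (σ n)).le h1
      have h0 : Filter.Tendsto (fun n : ℕ => 1 / ((n : ℝ) + 1)) Filter.atTop (𝓝 0) :=
        tendsto_one_div_add_atTop_nhds_zero_nat
      exact squeeze_zero (fun n => norm_nonneg _) hb h0
    · simpa [Function.comp_def] using hconv
    · have : (inner ℝ (-v) v : ℝ) = -1 := by
        rw [inner_neg_left, real_inner_self_eq_norm_sq, hvnorm]
        norm_num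
      rw [this]
      norm_num
end

section
/- Let M and N be finite-dimensional smooth (C^∞) real manifolds without boundary, E a finite-dimensional real inner product space, φ : M → E a smooth map with X = φ(M), and ψ : N → M a smooth map with φ(ψ(N)) = X. Fix z ∈ N, y = ψ(z), x = φ(y). Then: (i) if φ ∘ ψ satisfies '2 ⇒ 1' at z (for every twice continuously differentiable f : E → ℝ, z second-order critical for f ∘ φ ∘ ψ implies x stationary for f on X), then φ satisfies '2 ⇒ 1' at y; (ii) if the differential Dψ(z) : T_zN → T_yM is surjective and φ satisfies '2 ⇒ 1' at y, then φ ∘ ψ satisfies '2 ⇒ 1' at z. -/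
open Filter Topology Manifold

/-- The "2 ⇒ 1" property of a map `φ : M → E` at a point `y ∈ M`: for every twice
continuously differentiable `f : E → ℝ`, if `y` is second-order critical for `f ∘ φ`
then `φ y` is stationary for `f` on `φ(M)`. -/
def TwoImpliesOneAt
    {E : Type*} [NormedAddCommGroup E] [NormedSpace ℝ E]
    {F : Type*} [NormedAddCommGroup F] [NormedSpace ℝ F]
    {H : Type*} [TopologicalSpace H] (I : ModelWithCorners ℝ F H)
    {M : Type*} [TopologicalSpace M] [ChartedSpace H M]
    (φ : M → E) (y : M) : Prop :=
  ∀ f : E → ℝ, ContDiff ℝ 2 f →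
    (∀ c : ℝ → M, ContMDiff 𝓘(ℝ, ℝ) I (⊤ : ℕ∞) c → c 0 = y →
      deriv (f ∘ φ ∘ c) 0 = 0 ∧ 0 ≤ deriv (deriv (f ∘ φ ∘ c)) 0) →
    ∀ v ∈ bouligandTangentCone (Set.range φ) (φ y), 0 ≤ fderiv ℝ f (φ y) v

open Set in
/-- Smooth local right inverse (section) for a self-map with derivative `id` at a point. -/
lemma exists_smooth_section {F : Type*} [NormedAddCommGroup F] [NormedSpace ℝ F]
    [CompleteSpace F] {h : F → F} {U : Set F} {a : F} (hU : IsOpen U) (ha : a ∈ U)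
    (hh : ContDiffOn ℝ (⊤ : ℕ∞) h U)
    (hd : HasFDerivAt h (ContinuousLinearMap.id ℝ F) a) :
    ∃ (V : Set F) (σ : F → F), IsOpen V ∧ h a ∈ V ∧ ContDiffOn ℝ (⊤ : ℕ∞) σ V ∧
      σ (h a) = a ∧ (∀ w ∈ V, h (σ w) = w) ∧ ∀ w ∈ V, σ w ∈ U := by
  classical
  -- the set where the derivative of `h` is a unit
  have hfd : ContinuousOn (fderiv ℝ h) U :=
    hh.continuousOn_fderiv_of_isOpen hU (by exact_mod_cast le_top)
  have hWopen : IsOpen (U ∩ fderiv ℝ h ⁻¹' {u : F →L[ℝ] F | IsUnit u}) :=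
    hfd.isOpen_inter_preimage hU Units.isOpen
  set W : Set F := U ∩ fderiv ℝ h ⁻¹' {u : F →L[ℝ] F | IsUnit u} with hW
  have haW : a ∈ W := by
    refine ⟨ha, ?_⟩
    have : fderiv ℝ h a = ContinuousLinearMap.id ℝ F := hd.fderiv
    simp only [Set.mem_preimage, this, Set.mem_setOf_eq]
    exact isUnit_one
  -- the local homeomorphism given by the inverse function theorem
  have hca : ContDiffAt ℝ (⊤ : ℕ∞) h a := hh.contDiffAt (hU.mem_nhds ha)
  have hd' : HasFDerivAt h ((ContinuousLinearEquiv.refl ℝ F : F ≃L[ℝ] F) : F →L[ℝ] F) a := hd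
  set Φ₀ := hca.toOpenPartialHomeomorph h hd' (by simp) with hΦ₀
  set Φ := Φ₀.restrOpen W hWopen with hΦdef
  have hΦcoe : (Φ : F → F) = h := by
    rw [hΦdef]
    exact hca.toOpenPartialHomeomorph_coe hd' (by simp)
  have haΦ : a ∈ Φ.source := by
    rw [hΦdef, Φ₀.restrOpen_source]
    exact ⟨hca.mem_toOpenPartialHomeomorph_source hd' (by simp), haW⟩
  have hmapW : ∀ w ∈ Φ.target, Φ.symm w ∈ W := by
    intro w hw
    have := Φ.map_target hw
    rw [hΦdef, Φ₀.restrOpen_source] at this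
    exact this.2
  refine ⟨Φ.target, Φ.symm, Φ.open_target, ?_, ?_, ?_, ?_, fun w hw => (hmapW w hw).1⟩
  · have := Φ.map_source haΦ
    rwa [show Φ a = h a from congrFun hΦcoe a] at this
  · intro w hw
    obtain ⟨hbU, hbu⟩ := hmapW w hw
    -- derivative at the point `Φ.symm w` as an equiv
    set u := (hbu.unit : (F →L[ℝ] F)ˣ)
    set eq := ContinuousLinearEquiv.unitsEquiv ℝ F u with heq
    have heqcoe : (eq : F →L[ℝ] F) = fderiv ℝ h (Φ.symm w) := by
      simp only [heq, ContinuousLinearEquiv.unitsEquiv]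
      exact hbu.unit_spec
    have hdiff : DifferentiableAt ℝ h (Φ.symm w) :=
      (hh.contDiffAt (hU.mem_nhds hbU)).differentiableAt (by simp)
    have hder : HasFDerivAt (Φ : F → F) ((eq : F →L[ℝ] F)) (Φ.symm w) := by
      rw [hΦcoe, heqcoe]; exact hdiff.hasFDerivAt
    have hcd : ContDiffAt ℝ (⊤ : ℕ∞) (Φ : F → F) (Φ.symm w) := by
      rw [hΦcoe]; exact hh.contDiffAt (hU.mem_nhds hbU)
    exact (Φ.contDiffAt_symm hw hder hcd).contDiffWithinAt
  · have : Φ.symm (Φ a) = a := Φ.left_inv haΦ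
    rwa [show Φ a = h a from congrFun hΦcoe a] at this
  · intro w hw
    have := Φ.right_inv hw
    rwa [show Φ (Φ.symm w) = h (Φ.symm w) from congrFun hΦcoe _] at this

/-- Let `φ : M → E` be a smooth map with `X = φ(M)` and `ψ : N → M` a
smooth map between finite-dimensional smooth manifolds without boundary with
`φ(ψ(N)) = X`. For `z ∈ N`, `y = ψ z`: (i) if `φ ∘ ψ` satisfies "2 ⇒ 1" at `z` then `φ`
satisfies "2 ⇒ 1" at `y`; (ii) if `Dψ(z)` is surjective and `φ` satisfies "2 ⇒ 1" at `y`,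
then `φ ∘ ψ` satisfies "2 ⇒ 1" at `z`. -/
theorem statement12
    {E : Type*} [NormedAddCommGroup E] [InnerProductSpace ℝ E] [FiniteDimensional ℝ E]
    {F₁ : Type*} [NormedAddCommGroup F₁] [NormedSpace ℝ F₁] [FiniteDimensional ℝ F₁]
    {H₁ : Type*} [TopologicalSpace H₁] (I : ModelWithCorners ℝ F₁ H₁) [I.Boundaryless]
    {M : Type*} [TopologicalSpace M] [ChartedSpace H₁ M] [IsManifold I (⊤ : ℕ∞) M]
    [T2Space M] [SecondCountableTopology M]
    {F₂ : Type*} [NormedAddCommGroup F₂] [NormedSpace ℝ F₂] [FiniteDimensional ℝ F₂]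
    {H₂ : Type*} [TopologicalSpace H₂] (J : ModelWithCorners ℝ F₂ H₂) [J.Boundaryless]
    {N : Type*} [TopologicalSpace N] [ChartedSpace H₂ N] [IsManifold J (⊤ : ℕ∞) N]
    [T2Space N] [SecondCountableTopology N]
    (φ : M → E) (hφ : ContMDiff I 𝓘(ℝ, E) (⊤ : ℕ∞) φ)
    (ψ : N → M) (hψ : ContMDiff J I (⊤ : ℕ∞) ψ)
    (hrange : Set.range (φ ∘ ψ) = Set.range φ)
    (z : N) :
    (TwoImpliesOneAt J (φ ∘ ψ) z → TwoImpliesOneAt I φ (ψ z)) ∧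
    (Function.Surjective ⇑(mfderiv J I ψ z) → TwoImpliesOneAt I φ (ψ z) →
      TwoImpliesOneAt J (φ ∘ ψ) z) := by
  constructor
  · -- part (i)
    intro h21 f hf hcurves v hv
    exact h21 f hf
      (fun c hc hc0 => hcurves (ψ ∘ c) (hψ.comp hc) (by simp [hc0]))
      v (by rwa [hrange])
  · -- part (ii)
    intro hsurj h21 f hf hcurves v hv
    rw [hrange] at hv
    refine h21 f hf ?_ v hv
    set eM := extChartAt I (ψ z) with heM
    set eN := extChartAt J z with heN
    set z' := eN z with hz'
    set y' := eM (ψ z) with hy'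
    set Ψ : F₂ → F₁ := eM ∘ ψ ∘ eN.symm with hΨdef
    -- the open set where the chart representation is valid
    have hsrc : IsOpen (eN.source ∩ ψ ⁻¹' eM.source) :=
      (isOpen_extChartAt_source z).inter
        (hψ.continuous.isOpen_preimage _ (isOpen_extChartAt_source (ψ z)))
    set O₀ : Set F₂ := eN.target ∩ eN.symm ⁻¹' (eN.source ∩ ψ ⁻¹' eM.source) with hO₀def
    have hO₀ : IsOpen O₀ :=
      (continuousOn_extChartAt_symm z).isOpen_inter_preimage (isOpen_extChartAt_target z) hsrc
    have hz'O₀ : z' ∈ O₀ := by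
      refine ⟨eN.map_source (mem_extChartAt_source z), ?_⟩
      rw [Set.mem_preimage, eN.left_inv (mem_extChartAt_source z)]
      exact ⟨mem_extChartAt_source z, mem_extChartAt_source (ψ z)⟩
    -- smoothness of the chart representation
    have hΨ : ContDiffOn ℝ (⊤ : ℕ∞) Ψ O₀ := by
      have h1 := (contMDiffOn_iff.mp
        (hψ.contMDiffOn (s := eN.source ∩ ψ ⁻¹' eM.source))).2 z (ψ z)
      refine (h1.mono ?_)
      intro u hu
      exact ⟨hu.1, ⟨hu.2.1, hu.2.2⟩, hu.2.2⟩
    -- identify mfderiv with fderiv of the chart representation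
    have hmd : MDifferentiableAt J I ψ z := hψ.mdifferentiableAt (by simp)
    have hA : (mfderiv J I ψ z : F₂ →L[ℝ] F₁) = fderiv ℝ Ψ z' := by
      rw [hmd.mfderiv, J.range_eq_univ, fderivWithin_univ]
      rfl
    have hAsurj : Function.Surjective (fderiv ℝ Ψ z') := hA ▸ hsurj
    -- a continuous linear right inverse
    obtain ⟨B₀, hB₀⟩ := ((fderiv ℝ Ψ z') : F₂ →ₗ[ℝ] F₁).exists_rightInverse_of_surjective
      (LinearMap.range_eq_top.mpr hAsurj)
    set B : F₁ →L[ℝ] F₂ := LinearMap.toContinuousLinearMap B₀ with hBdef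
    have hAB : ∀ w, fderiv ℝ Ψ z' (B w) = w := by
      intro w
      have := LinearMap.congr_fun hB₀ w
      simpa [hBdef] using this
    -- the map whose local inverse provides the section
    set aff : F₁ → F₂ := fun w => z' + B (w - y') with haffdef
    have haffy' : aff y' = z' := by simp [haffdef]
    have haffcd : ContDiff ℝ (⊤ : ℕ∞) aff :=
      contDiff_const.add (B.contDiff.comp (contDiff_id.sub contDiff_const))
    set hmap : F₁ → F₁ := fun w => Ψ (aff w) with hmapdef
    have hΨz' : Ψ z' = y' := by
      simp only [hΨdef, hy', Function.comp_apply, hz']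
      rw [eN.left_inv (mem_extChartAt_source z)]
    have hmapy' : hmap y' = y' := by rw [hmapdef]; simp only [haffy']; exact hΨz'
    set U₁ : Set F₁ := aff ⁻¹' O₀ with hU₁def
    have hU₁ : IsOpen U₁ := hO₀.preimage haffcd.continuous
    have hy'U₁ : y' ∈ U₁ := by
      rw [hU₁def, Set.mem_preimage, haffy']; exact hz'O₀
    have hmapcd : ContDiffOn ℝ (⊤ : ℕ∞) hmap U₁ :=
      hΨ.comp haffcd.contDiffOn (fun u hu => hu)
    have hderaff : HasFDerivAt aff (B : F₁ →L[ℝ] F₂) y' := by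
      have h0 : HasFDerivAt (fun w : F₁ => z' + (B w - B y')) (B : F₁ →L[ℝ] F₂) y' :=
        (B.hasFDerivAt.sub_const (B y')).const_add z'
      have : aff = fun w : F₁ => z' + (B w - B y') := by
        funext w; rw [haffdef]; simp [map_sub]
      rw [this]; exact h0
    have hderΨ : HasFDerivAt Ψ (fderiv ℝ Ψ z') z' :=
      ((hΨ.contDiffAt (hO₀.mem_nhds hz'O₀)).differentiableAt (by simp)).hasFDerivAt
    have hdermap : HasFDerivAt hmap (ContinuousLinearMap.id ℝ F₁) y' := by
      have h2 : HasFDerivAt Ψ (fderiv ℝ Ψ z') (aff y') := by rw [haffy']; exact hderΨ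
      have := h2.comp y' hderaff
      have heq : (fderiv ℝ Ψ z').comp (B : F₁ →L[ℝ] F₂) = ContinuousLinearMap.id ℝ F₁ :=
        ContinuousLinearMap.ext fun w => hAB w
      rw [heq] at this
      exact this
    -- the smooth local section
    obtain ⟨V, σ, hVopen, hy'V, hσcd, hσy', hsec, hσU₁⟩ :=
      exists_smooth_section hU₁ hy'U₁ hmapcd hdermap
    rw [hmapy'] at hy'V hσy'
    set s : F₁ → F₂ := fun w => aff (σ w) with hsdef
    have hsz' : s y' = z' := by rw [hsdef]; simp only [hσy']; exact haffy'
    have hsO₀ : ∀ w ∈ V, s w ∈ O₀ := fun w hw => hσU₁ w hw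
    have hsΨ : ∀ w ∈ V, Ψ (s w) = w := fun w hw => hsec w hw
    -- now handle an arbitrary smooth curve in M through ψ z
    intro c hc hc0
    set cE : ℝ → F₁ := fun t => eM (c t) with hcEdef
    have hcE0 : cE 0 = y' := by rw [hcEdef]; simp [hc0, hy']
    have hcEcont : ContinuousAt cE 0 := by
      have h1 : ContinuousAt (extChartAt I (ψ z)) (c 0) := by
        rw [hc0]; exact continuousAt_extChartAt (ψ z)
      exact h1.comp hc.continuous.continuousAt
    have hscont : ContinuousAt (fun t => s (cE t)) 0 := by
      have hσca : ContinuousAt σ y' :=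
        ((hσcd.contDiffAt (hVopen.mem_nhds hy'V)).continuousAt)
      have : ContinuousAt (fun t => σ (cE t)) 0 := (hcE0 ▸ hσca).comp hcEcont
      exact (haffcd.continuous.continuousAt).comp this
    have hev : ∀ᶠ t in 𝓝 (0 : ℝ), c t ∈ eM.source ∧ cE t ∈ V ∧ s (cE t) ∈ O₀ := by
      have e1 : ∀ᶠ t in 𝓝 (0 : ℝ), c t ∈ eM.source := by
        have h0 : c 0 ∈ eM.source := by rw [hc0]; exact mem_extChartAt_source (ψ z)
        exact hc.continuous.continuousAt.eventually_mem
          ((isOpen_extChartAt_source (ψ z)).mem_nhds h0)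
      have e2 : ∀ᶠ t in 𝓝 (0 : ℝ), cE t ∈ V := by
        have h0 : cE 0 ∈ V := by rw [hcE0]; exact hy'V
        exact hcEcont.eventually_mem (hVopen.mem_nhds h0)
      have e3 : ∀ᶠ t in 𝓝 (0 : ℝ), s (cE t) ∈ O₀ := by
        have h0 : s (cE 0) ∈ O₀ := by rw [hcE0, hsz']; exact hz'O₀
        exact hscont.eventually_mem (hO₀.mem_nhds h0)
      exact e1.and (e2.and e3)
    obtain ⟨δ, hδpos, hδ⟩ := Metric.mem_nhds_iff.mp hev
    -- a smooth cutoff of the identity, with values in `ball 0 δ`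
    set b : ContDiffBump (0 : ℝ) := ⟨δ / 2, δ, by positivity, by linarith⟩ with hbdef
    set θ : ℝ → ℝ := fun t => t * b t with hθdef
    have hθsm : ContDiff ℝ (⊤ : ℕ∞) θ := contDiff_id.mul b.contDiff
    have hθmem : ∀ t, θ t ∈ Metric.ball (0 : ℝ) δ := by
      intro t
      rw [Metric.mem_ball, Real.dist_eq, sub_zero, hθdef]
      rcases lt_or_ge |t| δ with h | h
      · calc |t * b t| = |t| * |b t| := abs_mul _ _
          _ ≤ |t| * 1 := by
              refine mul_le_mul_of_nonneg_left ?_ (abs_nonneg t)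
              rw [abs_of_nonneg b.nonneg]; exact b.le_one
          _ = |t| := mul_one _
          _ < δ := h
      · have hb0 : b t = 0 := by
          have : t ∉ Function.support b := by
            rw [b.support_eq]
            simp only [Metric.mem_ball, Real.dist_eq, sub_zero, hbdef]
            exact not_lt.mpr h
          simpa [Function.mem_support, not_not] using this
        simpa [hb0] using hδpos
    have hθeq : ∀ᶠ t in 𝓝 (0 : ℝ), θ t = t := by
      have : Metric.closedBall (0 : ℝ) (δ / 2) ∈ 𝓝 (0 : ℝ) :=
        Metric.closedBall_mem_nhds _ (by positivity)
      filter_upwards [this] with t ht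
      rw [hθdef]
      simp only
      rw [b.one_of_mem_closedBall ht, mul_one]
    have hθ0 : θ 0 = 0 := by rw [hθdef]; simp
    have hmemθ : ∀ t, c (θ t) ∈ eM.source ∧ cE (θ t) ∈ V ∧ s (cE (θ t)) ∈ O₀ :=
      fun t => hδ (hθmem t)
    -- the lifted curve
    set ctilde : ℝ → N := fun t => eN.symm (s (cE (θ t))) with hctdef
    have hct0 : ctilde 0 = z := by
      rw [hctdef]
      simp only [hθ0, hcE0, hsz']
      exact eN.left_inv (mem_extChartAt_source z)
    -- smoothness of the lifted curve
    have hctsm : ContMDiff 𝓘(ℝ, ℝ) J (⊤ : ℕ∞) ctilde := by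
      intro t
      have h1 : ContMDiffAt 𝓘(ℝ, ℝ) I (⊤ : ℕ∞) (fun t => c (θ t)) t :=
        (hc (θ t)).comp t (hθsm.contMDiff.contMDiffAt)
      have hmem := hmemθ t
      have h2 : ContMDiffAt 𝓘(ℝ, ℝ) 𝓘(ℝ, F₁) (⊤ : ℕ∞) (fun t => cE (θ t)) t := by
        have hchart : ContMDiffAt I 𝓘(ℝ, F₁) (⊤ : ℕ∞) (extChartAt I (ψ z)) (c (θ t)) := by
          apply contMDiffAt_extChartAt'
          rw [← extChartAt_source I]
          exact hmem.1
        exact hchart.comp t h1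
      have h3 : ContDiffAt ℝ (⊤ : ℕ∞) (fun t => s (cE (θ t))) t := by
        have hσat : ContDiffAt ℝ (⊤ : ℕ∞) σ (cE (θ t)) :=
          hσcd.contDiffAt (hVopen.mem_nhds hmem.2.1)
        exact (haffcd.contDiffAt).comp t (hσat.comp t h2.contDiffAt)
      have h4 : ContMDiffAt 𝓘(ℝ, F₂) J (⊤ : ℕ∞) eN.symm (s (cE (θ t))) :=
        (contMDiffOn_extChartAt_symm z).contMDiffAt
          ((isOpen_extChartAt_target z).mem_nhds hmem.2.2.1)
      exact h4.comp t h3.contMDiffAt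
    -- the key identity
    have hkey : ∀ t, ψ (ctilde t) = c (θ t) := by
      intro t
      obtain ⟨hm1, hm2, hm3⟩ := hmemθ t
      set w := s (cE (θ t)) with hwdef
      have hw1 : eN.symm w ∈ eN.source := hm3.2.1
      have hw2 : ψ (eN.symm w) ∈ eM.source := hm3.2.2
      have hΨw : Ψ w = cE (θ t) := hsΨ _ hm2
      have : eM (ψ (eN.symm w)) = eM (c (θ t)) := hΨw
      calc ψ (ctilde t) = eM.symm (eM (ψ (eN.symm w))) := (eM.left_inv hw2).symm
        _ = eM.symm (eM (c (θ t))) := by rw [this]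
        _ = c (θ t) := eM.left_inv hm1
    -- transfer the criticality conditions
    have heq : (f ∘ (φ ∘ ψ) ∘ ctilde) =ᶠ[𝓝 (0 : ℝ)] (f ∘ φ ∘ c) := by
      filter_upwards [hθeq] with t ht
      simp only [Function.comp_apply, hkey t, ht]
    obtain ⟨hd1, hd2⟩ := hcurves ctilde hctsm hct0
    constructor
    · rw [← heq.deriv_eq]; exact hd1
    · have := heq.deriv.deriv_eq
      rw [← this]; exact hd2
end

section
/- Let E, E' and N be topological spaces, F : E → E' a continuous map, Z a subset of E', and ψ : N → Z a continuous surjection onto Z. Set X = F⁻¹(Z) ⊆ E, let M = {(x, y) ∈ E × N : F(x) = ψ(y)} carry the subspace topology of E × N, and let φ : M → X be the projection φ(x, y) = x (which is surjective onto X). If ψ is open at a point y ∈ N, then φ is open at (x, y) ∈ M for every x ∈ E with F(x) = ψ(y). -/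
open Filter Topology

/-! A basic neighbourhood of `(x, y)` in `M` contains the points of `M` over `A × B` with
`A ∈ 𝓝 x`, `B ∈ 𝓝 y`; their projection is `A ∩ F⁻¹(ψ B)`. Openness of `ψ` at `y` makes `ψ B` a
neighbourhood of `F x` in `Z`, and continuity of `F` pulls it back to a neighbourhood of `x`
in `X = F⁻¹(Z)`. -/

theorem image_fst_pullback_preimage_prod {E E' N : Type*} (F : E → E') (ψ : N → E')
    (A : Set E) (B : Set N) :
    (fun p : {p : E × N // F p.1 = ψ p.2} => p.1.1) '' (Subtype.val ⁻¹' (A ×ˢ B)) =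
      A ∩ F ⁻¹' (ψ '' B) := by
  ext x
  constructor
  · rintro ⟨⟨⟨x, y⟩, hxy⟩, ⟨hx, hy⟩, rfl⟩
    exact ⟨hx, y, hy, hxy.symm⟩
  · rintro ⟨hx, y, hy, hxy⟩
    exact ⟨⟨(x, y), hxy.symm⟩, ⟨hx, hy⟩, rfl⟩

theorem statement13_general {E E' N : Type*}
    [TopologicalSpace E] [TopologicalSpace E'] [TopologicalSpace N]
    (F : E → E') (hF : Continuous F) (Z : Set E')
    (ψ : N → E')
    (y : N) (hopen : ∀ V ∈ 𝓝 y, ψ '' V ∈ 𝓝[Z] (ψ y))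
    (x : E) (hxy : F x = ψ y) :
    ∀ U ∈ 𝓝 (⟨(x, y), hxy⟩ : {p : E × N // F p.1 = ψ p.2}),
      (fun p : {p : E × N // F p.1 = ψ p.2} => p.1.1) '' U ∈ 𝓝[F ⁻¹' Z] x := by
  intro U hU
  obtain ⟨S, hS, hSU⟩ := mem_nhds_induced _ _ U |>.mp hU
  obtain ⟨A, hA, B, hB, hABS⟩ := mem_nhds_prod_iff.mp hS
  have hψB : F ⁻¹' (ψ '' B) ∈ 𝓝[F ⁻¹' Z] x :=
    hF.continuousWithinAt.preimage_mem_nhdsWithin'' (hopen B hB) hxy.symm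
  refine mem_of_superset (inter_mem (mem_nhdsWithin_of_mem_nhds hA) hψB) ?_
  rw [← image_fst_pullback_preimage_prod]
  exact Set.image_mono ((Set.preimage_mono hABS).trans hSU)

/-- Let `E`, `E'`, `N` be topological spaces, `F : E → E'` continuous,
`Z ⊆ E'`, and `ψ : N → E'` a continuous map with range `Z` (a continuous surjection onto
`Z`). Let `X = F⁻¹(Z)`, let `M = {(x, y) ∈ E × N : F x = ψ y}` with the subspace topology,
and let `φ : M → X` be `φ(x, y) = x`. If `ψ` is open at `y ∈ N` (with respect to the
subspace topology of `Z`), then `φ` is open at `(x, y)` for every `x` with `F x = ψ y`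
(with respect to the subspace topology of `X`). -/
theorem statement13 {E E' N : Type*}
    [TopologicalSpace E] [TopologicalSpace E'] [TopologicalSpace N]
    (F : E → E') (hF : Continuous F) (Z : Set E')
    (ψ : N → E') (hψc : Continuous ψ) (hψr : Set.range ψ = Z)
    (y : N) (hopen : ∀ V ∈ 𝓝 y, ψ '' V ∈ 𝓝[Z] (ψ y))
    (x : E) (hxy : F x = ψ y) :
    ∀ U ∈ 𝓝 (⟨(x, y), hxy⟩ : {p : E × N // F p.1 = ψ p.2}),
      (fun p : {p : E × N // F p.1 = ψ p.2} => p.1.1) '' U ∈ 𝓝[F ⁻¹' Z] x :=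
  statement13_general F hF Z ψ y hopen x hxy
end

section
/- Fix integers n > r ≥ 1 and let X = {A ∈ ℝ^{n×n} : A = Aᵀ, A is positive semidefinite, and rank A ≤ r}. Let f : ℝ^{n×n} → ℝ be twice continuously differentiable and define g : ℝ^{n×r} → ℝ by g(R) = f(R·Rᵀ). If R ∈ ℝ^{n×r} satisfies Dg(R) = 0 and the second-derivative quadratic form of g at R is positive semidefinite (D²g(R)[Ṙ, Ṙ] ≥ 0 for all Ṙ ∈ ℝ^{n×r}), then R·Rᵀ is stationary for f on X: Df(R·Rᵀ)[V] ≥ 0 for every V in the Bouligand tangent cone to X at R·Rᵀ. -/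
open Filter Topology Matrix

attribute [local instance] Matrix.normedAddCommGroup Matrix.normedSpace

variable {n r : ℕ}

/-- generalized inverse exists -/
lemma exists_ginv (R : Matrix (Fin n) (Fin r) ℝ) : ∃ S : Matrix (Fin r) (Fin n) ℝ, R * S * R = R := by
  set T : (Fin r → ℝ) →ₗ[ℝ] (Fin n → ℝ) := Matrix.toLin' R with hT
  obtain ⟨W', hW'⟩ := Submodule.exists_isCompl (LinearMap.range T)
  set π := (LinearMap.range T).linearProjOfIsCompl W' hW' with hπ
  obtain ⟨ρ, hρ⟩ := Module.projective_lifting_property T.rangeRestrict LinearMap.id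
    T.surjective_rangeRestrict
  set σ : (Fin n → ℝ) →ₗ[ℝ] (Fin r → ℝ) := ρ.comp (π : (Fin n → ℝ) →ₗ[ℝ] (LinearMap.range T))
  refine ⟨LinearMap.toMatrix' σ, ?_⟩
  apply Matrix.toLin'.injective
  rw [Matrix.toLin'_mul, Matrix.toLin'_mul, Matrix.toLin'_toMatrix']
  refine LinearMap.ext fun v => ?_
  simp only [LinearMap.comp_apply, ← hT]
  have h1 : π (T v) = ⟨T v, LinearMap.mem_range_self T v⟩ :=
    Submodule.linearProjOfIsCompl_apply_left hW' ⟨T v, LinearMap.mem_range_self T v⟩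
  have h2 : T (ρ ⟨T v, LinearMap.mem_range_self T v⟩) = T v := by
    have := congrArg (fun φ => (φ ⟨T v, LinearMap.mem_range_self T v⟩ : Fin n → ℝ))
      hρ
    simpa [LinearMap.rangeRestrict] using this
  simp [σ, h1, h2]

section matTopSection

/-- the sup-norm topology on real matrices, as a reducible instance -/
@[reducible] noncomputable def matTop {m k : Type*} [Fintype m] [Fintype k] :
    TopologicalSpace (Matrix m k ℝ) :=
  (Matrix.normedAddCommGroup).toUniformSpace.toTopologicalSpace

attribute [local instance] matTop

variable (n r) in
/-- the bilinear map `(A, B) ↦ A * Bᵀ` as a continuous linear map -/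
noncomputable def mulTCLM : Matrix (Fin n) (Fin r) ℝ →L[ℝ] Matrix (Fin n) (Fin r) ℝ →L[ℝ]
    Matrix (Fin n) (Fin n) ℝ :=
  LinearMap.toContinuousLinearMap
  { toFun := fun A => LinearMap.toContinuousLinearMap
      { toFun := fun B => A * Bᵀ
        map_add' := fun B C => by simp [Matrix.transpose_add, Matrix.mul_add]
        map_smul' := fun c B => by simp [Matrix.transpose_smul, Matrix.mul_smul] }
    map_add' := fun A B => by
      ext C : 1
      simp [Matrix.add_mul]
    map_smul' := fun c A => by
      ext B : 1
      simp [Matrix.smul_mul] }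

@[simp] lemma mulTCLM_apply (A B : Matrix (Fin n) (Fin r) ℝ) : mulTCLM n r A B = A * Bᵀ := rfl

lemma contDiff_sq : ContDiff ℝ 2 (fun R' : Matrix (Fin n) (Fin r) ℝ => R' * R'ᵀ) := by
  have h := ((mulTCLM n r).isBoundedBilinearMap.contDiff (n := 2)).comp
    (contDiff_id.prodMk contDiff_id)
  simpa [Function.comp_def] using h

lemma hasFDerivAt_sq (R : Matrix (Fin n) (Fin r) ℝ) :
    HasFDerivAt (fun R' : Matrix (Fin n) (Fin r) ℝ => R' * R'ᵀ)
      (mulTCLM n r R + (mulTCLM n r).flip R) R := by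
  have hdiag : HasFDerivAt (fun A : Matrix (Fin n) (Fin r) ℝ => (A, A))
      ((ContinuousLinearMap.id ℝ (Matrix (Fin n) (Fin r) ℝ)).prod
        (ContinuousLinearMap.id ℝ (Matrix (Fin n) (Fin r) ℝ))) R :=
    (hasFDerivAt_id R).prodMk (hasFDerivAt_id R)
  have hb := (mulTCLM n r).isBoundedBilinearMap.hasFDerivAt (R, R)
  have h := HasFDerivAt.comp (f := fun A : Matrix (Fin n) (Fin r) ℝ => (A, A)) R hb hdiag
  exact h

lemma fderiv_g {f : Matrix (Fin n) (Fin n) ℝ → ℝ} (hf : Differentiable ℝ f)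
    (R : Matrix (Fin n) (Fin r) ℝ) :
    fderiv ℝ (fun R' : Matrix (Fin n) (Fin r) ℝ => f (R' * R'ᵀ)) R =
      (fderiv ℝ f (R * Rᵀ)).comp (mulTCLM n r R + (mulTCLM n r).flip R) :=
  ((hf (R * Rᵀ)).hasFDerivAt.comp R (hasFDerivAt_sq R)).fderiv

lemma second_order {f : Matrix (Fin n) (Fin n) ℝ → ℝ} (hf : ContDiff ℝ 2 f)
    (R Rd : Matrix (Fin n) (Fin r) ℝ) (h1 : Rd * Rᵀ = 0) (h2 : R * Rdᵀ = 0) :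
    iteratedFDeriv ℝ 2 (fun R' : Matrix (Fin n) (Fin r) ℝ => f (R' * R'ᵀ)) R (fun _ => Rd)
      = 2 * fderiv ℝ f (R * Rᵀ) (Rd * Rdᵀ) := by
  set g : Matrix (Fin n) (Fin r) ℝ → ℝ := fun R' => f (R' * R'ᵀ) with hgdef
  have hg : ContDiff ℝ 2 g := hf.comp contDiff_sq
  set x := R * Rᵀ with hxdef
  set M := Rd * Rdᵀ with hMdef
  set ψ : ℝ → Matrix (Fin n) (Fin r) ℝ := fun t => R + t • Rd with hψdef
  set χ : ℝ → Matrix (Fin n) (Fin n) ℝ := fun t => x + (t ^ 2) • M with hχdef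
  have hψχ : ∀ t, ψ t * (ψ t)ᵀ = χ t := by
    intro t
    simp only [hψdef, hχdef, Matrix.transpose_add, Matrix.transpose_smul, Matrix.add_mul,
      Matrix.mul_add, Matrix.smul_mul, Matrix.mul_smul, h1, h2, smul_zero, add_zero,
      smul_smul, ← hxdef, ← hMdef, pow_two, zero_add]
  have hψd : ∀ t, HasDerivAt ψ Rd t := by
    intro t
    have h := ((hasDerivAt_id t).smul_const Rd).const_add R
    simpa [hψdef] using h
  have hφ1 : ∀ t, deriv (fun s => g (ψ s)) t = fderiv ℝ g (ψ t) Rd := by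
    intro t
    exact ((hg.differentiable (by norm_num) (ψ t)).hasFDerivAt.comp_hasDerivAt t (hψd t)).deriv
  have hχd : ∀ t, HasDerivAt χ ((2 * t) • M) t := by
    intro t
    have h := ((hasDerivAt_pow 2 t).smul_const M).const_add x
    simpa [pow_one, hχdef] using h
  have hφ2 : ∀ t, deriv (fun s => g (ψ s)) t = 2 * t * fderiv ℝ f (χ t) M := by
    intro t
    have h : HasDerivAt (fun s => f (χ s)) ((fderiv ℝ f (χ t)) ((2 * t) • M)) t :=
      (hf.differentiable (by norm_num) (χ t)).hasFDerivAt.comp_hasDerivAt t (hχd t)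
    have heq : (fun s => g (ψ s)) = fun s => f (χ s) := funext fun s => by
      rw [hgdef]; simp only [← hψχ s]
    rw [heq, h.deriv, ContinuousLinearMap.map_smul]
    simp [mul_assoc]
  -- second derivative of t ↦ g (ψ t) at 0, computed two ways
  have hF1 : ContDiff ℝ 1 (fderiv ℝ g) := hg.fderiv_right (by norm_num)
  have hψ0 : ψ 0 = R := by simp [hψdef]
  have hF1d : HasFDerivAt (fderiv ℝ g) (fderiv ℝ (fderiv ℝ g) R) (ψ 0) := by
    rw [hψ0]; exact ((hF1.differentiable (by norm_num)) R).hasFDerivAt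
  have h0 := hF1d.comp_hasDerivAt 0 (hψd 0)
  have hd2 := (ContinuousLinearMap.apply ℝ ℝ Rd).hasFDerivAt.comp_hasDerivAt 0 h0
  simp only [ContinuousLinearMap.apply_apply, Function.comp_def] at hd2
  -- hd2 : HasDerivAt (fun t => (fderiv ℝ g (ψ t)) Rd) ((fderiv ℝ (fderiv ℝ g) R Rd) Rd) 0
  have hu : Continuous (fun t : ℝ => fderiv ℝ f (χ t) M) := by
    have hc : Continuous χ := by
      apply continuous_const.add
      exact (continuous_pow 2).smul continuous_const
    have hfd : Continuous (fderiv ℝ f) := hf.continuous_fderiv (by norm_num)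
    exact (hfd.comp hc).clm_apply continuous_const
  have hslope : HasDerivAt (fun t : ℝ => 2 * t * (fderiv ℝ f (χ t) M))
      (2 * fderiv ℝ f x M) 0 := by
    rw [hasDerivAt_iff_tendsto_slope]
    have hT : Filter.Tendsto (fun t : ℝ => 2 * (fderiv ℝ f (χ t) M)) (𝓝[≠] (0:ℝ))
        (𝓝 (2 * fderiv ℝ f x M)) := by
      have hcont : Continuous (fun t : ℝ => 2 * (fderiv ℝ f (χ t) M)) := continuous_const.mul hu
      have hx0 : χ 0 = x := by simp [hχdef]
      have h2 := (hcont.tendsto 0).mono_left (nhdsWithin_le_nhds (s := {(0:ℝ)}ᶜ))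
      rw [hx0] at h2
      exact h2
    apply hT.congr'
    filter_upwards [self_mem_nhdsWithin] with t ht
    have ht' : t ≠ 0 := ht
    rw [slope_def_field]
    field_simp
    ring
  have hEq : (fun t => fderiv ℝ g (ψ t) Rd) = (fun t : ℝ => 2 * t * fderiv ℝ f (χ t) M) := by
    funext t; rw [← hφ1 t, hφ2 t]
  rw [hEq] at hd2
  rw [iteratedFDeriv_two_apply]
  exact hd2.unique hslope

end matTopSection

open scoped MatrixOrder in
lemma psd_sum_outer {N : ℕ} {M : Matrix (Fin N) (Fin N) ℝ} (hM : M.PosSemidef) :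
    ∃ B : Matrix (Fin N) (Fin N) ℝ, M = ∑ j : Fin N, vecMulVec (fun i => B j i) (fun i => B j i) := by
  obtain ⟨B, hB⟩ := CStarAlgebra.nonneg_iff_eq_star_mul_self.mp hM.nonneg
  refine ⟨B, ?_⟩
  ext i k
  rw [hB]
  simp [Matrix.sum_apply, vecMulVec_apply, Matrix.mul_apply, Matrix.star_eq_conjTranspose,
    Matrix.conjTranspose_apply]

lemma L_nonneg_of_psd {N : ℕ} (L : Matrix (Fin N) (Fin N) ℝ →L[ℝ] ℝ)
    (hL : ∀ w : Fin N → ℝ, 0 ≤ L (vecMulVec w w)) {M : Matrix (Fin N) (Fin N) ℝ}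
    (hM : M.PosSemidef) : 0 ≤ L M := by
  obtain ⟨B, hB⟩ := psd_sum_outer hM
  rw [hB, map_sum]
  exact Finset.sum_nonneg fun j _ => hL _

lemma outer_mul_transpose_eq (w : Fin n → ℝ) (v : Fin r → ℝ) :
    vecMulVec w v * (vecMulVec w v)ᵀ = (v ⬝ᵥ v) • vecMulVec w w := by
  ext i k
  simp only [Matrix.mul_apply, Matrix.transpose_apply, vecMulVec_apply, Matrix.smul_apply,
    dotProduct, smul_eq_mul, Finset.mul_sum, ← Finset.sum_mul]
  rw [Finset.sum_mul]
  apply Finset.sum_congr rfl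
  intro j _
  ring

lemma outer_mul_Rt_eq_zero (R : Matrix (Fin n) (Fin r) ℝ) (w : Fin n → ℝ) (v : Fin r → ℝ)
    (hv : R *ᵥ v = 0) : vecMulVec w v * Rᵀ = 0 := by
  ext i k
  simp only [Matrix.mul_apply, vecMulVec_apply, Matrix.transpose_apply, Matrix.zero_apply]
  have : (R *ᵥ v) k = 0 := by rw [hv]; rfl
  simp only [Matrix.mulVec, dotProduct] at this
  calc ∑ j, w i * v j * R k j = w i * ∑ j, R k j * v j := by
        rw [Finset.mul_sum]; apply Finset.sum_congr rfl; intro j _; ring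
    _ = 0 := by rw [this, mul_zero]

lemma R_mul_outer_t_eq_zero (R : Matrix (Fin n) (Fin r) ℝ) (w : Fin n → ℝ) (v : Fin r → ℝ)
    (hv : R *ᵥ v = 0) : R * (vecMulVec w v)ᵀ = 0 := by
  have h := congrArg Matrix.transpose (outer_mul_Rt_eq_zero R w v hv)
  simpa [Matrix.transpose_mul] using h

lemma schur_entry {X : Matrix (Fin n) (Fin n) ℝ} (hX : X.IsSymm) (hXr : X.rank ≤ r)
    (R : Matrix (Fin n) (Fin r) ℝ) (w : Fin n → ℝ)
    (hdet : (Rᵀ * X * R).det ≠ 0) :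
    w ⬝ᵥ (X *ᵥ w) =
      (Rᵀ *ᵥ (X *ᵥ w)) ⬝ᵥ ((Rᵀ * X * R)⁻¹ *ᵥ (Rᵀ *ᵥ (X *ᵥ w))) := by
  classical
  set A := Rᵀ * X * R with hA
  set u : Fin r → ℝ := Rᵀ *ᵥ (X *ᵥ w) with hu
  set wc : Matrix (Fin n) Unit ℝ := Matrix.replicateCol Unit w with hwc
  set B : Matrix (Fin n) (Fin r ⊕ Unit) ℝ := fromCols R wc with hB
  have hXwc : X * wc = Matrix.replicateCol Unit (X *ᵥ w) := (Matrix.replicateCol_mulVec X w).symm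
  have hRXwc : Rᵀ * X * wc = Matrix.replicateCol Unit u := by
    rw [Matrix.mul_assoc, hXwc, ← Matrix.replicateCol_mulVec, Matrix.mulVec_mulVec, hu,
      ← Matrix.mulVec_mulVec]
  have hXe : ∀ a b, X b a = X a b := by
    intro a b
    conv_lhs => rw [← hX.eq]
    rfl
  have hwcXR : wcᵀ * X * R = Matrix.replicateRow Unit u := by
    ext i k
    simp only [hwc, Matrix.transpose_replicateCol, Matrix.mul_apply, Matrix.replicateRow_apply, hu,
      Matrix.mulVec, dotProduct, Finset.sum_mul, Finset.mul_sum]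
    apply Finset.sum_congr rfl
    intro a _
    apply Finset.sum_congr rfl
    intro b _
    rw [Matrix.transpose_apply, hXe a b]
    ring
  have hwcXwc : wcᵀ * X * wc = Matrix.of (fun _ _ => w ⬝ᵥ (X *ᵥ w)) := by
    rw [Matrix.mul_assoc, hXwc, Matrix.transpose_replicateCol, Matrix.replicateRow_mul_replicateCol]
  have hM : Bᵀ * X * B = fromBlocks A (Matrix.replicateCol Unit u) (Matrix.replicateRow Unit u)
      (Matrix.of (fun _ _ => w ⬝ᵥ (X *ᵥ w))) := by
    rw [hB, Matrix.transpose_fromCols, Matrix.mul_assoc, Matrix.mul_fromCols,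
      Matrix.fromRows_mul_fromCols]
    rw [← Matrix.mul_assoc Rᵀ X R, ← Matrix.mul_assoc Rᵀ X wc, ← Matrix.mul_assoc wcᵀ X R,
      ← Matrix.mul_assoc wcᵀ X wc]
    rw [hRXwc, hwcXR, hwcXwc]
  -- the (r+1)×(r+1) matrix has rank ≤ r hence zero determinant
  have hrank : (Bᵀ * X * B).rank ≤ r := by
    calc (Bᵀ * X * B).rank ≤ (X * B).rank := by
          rw [Matrix.mul_assoc]; exact Matrix.rank_mul_le_right _ _
      _ ≤ X.rank := Matrix.rank_mul_le_left _ _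
      _ ≤ r := hXr
  have hdetM : (Bᵀ * X * B).det = 0 := by
    by_contra hne
    have hunit : IsUnit (Bᵀ * X * B) := (Matrix.isUnit_iff_isUnit_det _).2 (isUnit_iff_ne_zero.2 hne)
    have := Matrix.rank_of_isUnit _ hunit
    rw [this] at hrank
    simp only [Fintype.card_sum, Fintype.card_fin, Fintype.card_unit] at hrank
    omega
  haveI : Invertible A := A.invertibleOfIsUnitDet (isUnit_iff_ne_zero.2 hdet)
  rw [hM, Matrix.det_fromBlocks₁₁] at hdetM
  have hzero : (Matrix.of (fun _ _ => w ⬝ᵥ (X *ᵥ w)) -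
      Matrix.replicateRow Unit u * ⅟A * Matrix.replicateCol Unit u).det = 0 := by
    rcases mul_eq_zero.1 hdetM with h | h
    · exact absurd h hdet
    · exact h
  rw [Matrix.det_unique] at hzero
  have hinv : (⅟A : Matrix (Fin r) (Fin r) ℝ) = A⁻¹ := Matrix.invOf_eq_nonsing_inv A
  have hentry : (Matrix.replicateRow Unit u * ⅟A * Matrix.replicateCol Unit u) default default
      = u ⬝ᵥ (A⁻¹ *ᵥ u) := by
    rw [hinv, Matrix.mul_assoc, ← Matrix.replicateCol_mulVec, Matrix.replicateRow_mul_replicateCol]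
    try rfl
  rw [Matrix.sub_apply, hentry, sub_eq_zero] at hzero
  simpa using hzero

set_option maxHeartbeats 2000000 in
lemma quad_vanish {R : Matrix (Fin n) (Fin r) ℝ}
    (hinj : ∀ v : Fin r → ℝ, R *ᵥ v = 0 → v = 0)
    {xs : ℕ → Matrix (Fin n) (Fin n) ℝ} {τ : ℕ → ℝ} {V : Matrix (Fin n) (Fin n) ℝ}
    (hsymm : ∀ i, (xs i).IsSymm) (hrank : ∀ i, (xs i).rank ≤ r)
    (hτpos : ∀ i, 0 < τ i) (hτ0 : Filter.Tendsto τ Filter.atTop (𝓝 0))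
    (hlim : Filter.Tendsto (fun i => (τ i)⁻¹ • (xs i - R * Rᵀ)) Filter.atTop (𝓝 V))
    (w : Fin n → ℝ) (hw : Rᵀ *ᵥ w = 0) :
    w ⬝ᵥ (V *ᵥ w) = 0 := by
  classical
  set x : Matrix (Fin n) (Fin n) ℝ := R * Rᵀ with hx
  set Y : ℕ → Matrix (Fin n) (Fin n) ℝ := fun i => (τ i)⁻¹ • (xs i - x) with hY
  have hxw : x *ᵥ w = 0 := by
    rw [hx, ← Matrix.mulVec_mulVec, hw, Matrix.mulVec_zero]
  -- G = RᵀR is positive definite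
  have hGpos : (Rᵀ * R).PosDef := by
    rw [Matrix.posDef_iff_dotProduct_mulVec]
    constructor
    · show (Rᵀ * R)ᴴ = Rᵀ * R
      ext i j
      simp [Matrix.conjTranspose_apply, Matrix.mul_apply, mul_comm]
    · intro v hv
      have h1 : star v ⬝ᵥ ((Rᵀ * R) *ᵥ v) = (R *ᵥ v) ⬝ᵥ (R *ᵥ v) := by
        rw [star_trivial, ← Matrix.mulVec_mulVec, Matrix.dotProduct_mulVec,
          Matrix.vecMul_transpose]
      rw [h1]
      rcases lt_or_eq_of_le (Finset.sum_nonneg fun j _ => mul_self_nonneg ((R *ᵥ v) j)) with h | h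
      · exact h
      · exfalso
        exact hv (hinj v (dotProduct_self_eq_zero.1 h.symm))
  have hGdet : (Rᵀ * R).det ≠ 0 := ne_of_gt hGpos.det_pos
  have hA0 : Rᵀ * x * R = (Rᵀ * R) * (Rᵀ * R) := by
    rw [hx]; simp only [Matrix.mul_assoc]
  have hA0det : (Rᵀ * x * R).det ≠ 0 := by
    rw [hA0, Matrix.det_mul]
    exact mul_ne_zero hGdet hGdet
  -- convergence facts
  have hxs0 : Filter.Tendsto (fun i => xs i - x) Filter.atTop (𝓝 0) := by
    have h := hτ0.smul hlim
    rw [zero_smul] at h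
    apply h.congr
    intro i
    rw [hY]
    exact smul_inv_smul₀ (hτpos i).ne' _
  have hxs : Filter.Tendsto xs Filter.atTop (𝓝 x) := by
    have h := hxs0.add_const x
    rw [zero_add] at h
    apply h.congr
    intro i
    abel
  have hA : Filter.Tendsto (fun i => Rᵀ * xs i * R) Filter.atTop (𝓝 (Rᵀ * x * R)) := by
    have hcont : Continuous (fun M : Matrix (Fin n) (Fin n) ℝ => Rᵀ * M * R) :=
      (continuous_const.matrix_mul continuous_id).matrix_mul continuous_const
    exact (hcont.tendsto x).comp hxs
  have hdetA : Filter.Tendsto (fun i => (Rᵀ * xs i * R).det) Filter.atTop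
      (𝓝 ((Rᵀ * x * R).det)) :=
    ((continuous_id.matrix_det).tendsto _).comp hA
  have hev : ∀ᶠ i in Filter.atTop, (Rᵀ * xs i * R).det ≠ 0 := hdetA.eventually_ne hA0det
  have hAinv : Filter.Tendsto (fun i => (Rᵀ * xs i * R)⁻¹) Filter.atTop
      (𝓝 ((Rᵀ * x * R)⁻¹)) := by
    have hc : ContinuousAt Inv.inv (Rᵀ * x * R) := by
      apply continuousAt_matrix_inv
      rw [Ring.inverse_eq_inv']
      exact continuousAt_inv₀ hA0det
    exact (hc.tendsto).comp hA
  set z : ℕ → Fin r → ℝ := fun i => Rᵀ *ᵥ (Y i *ᵥ w) with hz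
  have hzlim : Filter.Tendsto z Filter.atTop (𝓝 (Rᵀ *ᵥ (V *ᵥ w))) := by
    have hcont : Continuous (fun M : Matrix (Fin n) (Fin n) ℝ => Rᵀ *ᵥ (M *ᵥ w)) :=
      continuous_const.matrix_mulVec (continuous_id.matrix_mulVec continuous_const)
    exact (hcont.tendsto V).comp hlim
  -- the quadratic form along the sequence
  have hq : Filter.Tendsto (fun i => w ⬝ᵥ (Y i *ᵥ w)) Filter.atTop (𝓝 (w ⬝ᵥ (V *ᵥ w))) := by
    have hcont : Continuous (fun M : Matrix (Fin n) (Fin n) ℝ => w ⬝ᵥ (M *ᵥ w)) :=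
      continuous_const.dotProduct (continuous_id.matrix_mulVec continuous_const)
    exact (hcont.tendsto V).comp hlim
  -- eventual identity
  have hkey : ∀ᶠ i in Filter.atTop,
      w ⬝ᵥ (Y i *ᵥ w) = τ i * (z i ⬝ᵥ ((Rᵀ * xs i * R)⁻¹ *ᵥ z i)) := by
    filter_upwards [hev] with i hdet
    have hsch := schur_entry (hsymm i) (hrank i) R w hdet
    have hxsw : xs i *ᵥ w = τ i • (Y i *ᵥ w) := by
      rw [hY]
      simp only [Matrix.smul_mulVec, Matrix.sub_mulVec, hxw, sub_zero, smul_smul]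
      rw [mul_inv_cancel₀ (hτpos i).ne', one_smul]
    have hu : Rᵀ *ᵥ (xs i *ᵥ w) = τ i • z i := by
      rw [hxsw, Matrix.mulVec_smul, hz]
    have hYw : w ⬝ᵥ (Y i *ᵥ w) = (τ i)⁻¹ * (w ⬝ᵥ (xs i *ᵥ w)) := by
      rw [hY]
      simp only [Matrix.smul_mulVec, Matrix.sub_mulVec, hxw, sub_zero,
        dotProduct_smul, smul_eq_mul]
    rw [hYw, hsch, hu, Matrix.mulVec_smul, smul_dotProduct, dotProduct_smul]
    simp only [smul_eq_mul]
    rw [← mul_assoc, inv_mul_cancel₀ (hτpos i).ne', one_mul]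
  -- RHS tends to 0
  have hrhs : Filter.Tendsto (fun i => τ i * (z i ⬝ᵥ ((Rᵀ * xs i * R)⁻¹ *ᵥ z i)))
      Filter.atTop (𝓝 0) := by
    have hmv : Filter.Tendsto (fun i => (Rᵀ * xs i * R)⁻¹ *ᵥ z i) Filter.atTop
        (𝓝 ((Rᵀ * x * R)⁻¹ *ᵥ (Rᵀ *ᵥ (V *ᵥ w)))) := by
      have hcont : Continuous (fun p : Matrix (Fin r) (Fin r) ℝ × (Fin r → ℝ) => p.1 *ᵥ p.2) :=
        continuous_fst.matrix_mulVec continuous_snd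
      exact (hcont.tendsto _).comp (hAinv.prodMk_nhds hzlim)
    have hdp : Filter.Tendsto (fun i => z i ⬝ᵥ ((Rᵀ * xs i * R)⁻¹ *ᵥ z i)) Filter.atTop
        (𝓝 ((Rᵀ *ᵥ (V *ᵥ w)) ⬝ᵥ ((Rᵀ * x * R)⁻¹ *ᵥ (Rᵀ *ᵥ (V *ᵥ w))))) := by
      have hcont : Continuous (fun p : (Fin r → ℝ) × (Fin r → ℝ) => p.1 ⬝ᵥ p.2) :=
        continuous_fst.dotProduct continuous_snd
      exact (hcont.tendsto _).comp (hzlim.prodMk_nhds hmv)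
    have h := hτ0.mul hdp
    rw [zero_mul] at h
    exact h
  exact tendsto_nhds_unique (hq.congr' hkey) hrhs

lemma decomp_lemma (R : Matrix (Fin n) (Fin r) ℝ) (S : Matrix (Fin r) (Fin n) ℝ)
    (V : Matrix (Fin n) (Fin n) ℝ) (hVs : Vᵀ = V) :
    R * ((V - (2⁻¹ : ℝ) • (R * S * V)) * Sᵀ)ᵀ + ((V - (2⁻¹ : ℝ) • (R * S * V)) * Sᵀ) * Rᵀ
      = V - (1 - R * S) * V * (1 - R * S)ᵀ := by
  simp only [Matrix.transpose_mul, Matrix.transpose_sub, Matrix.transpose_smul,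
    Matrix.transpose_one, Matrix.transpose_transpose, hVs, Matrix.mul_sub, Matrix.sub_mul,
    Matrix.mul_smul, Matrix.smul_mul, Matrix.one_mul, Matrix.mul_one, Matrix.mul_assoc]
  module

lemma single_quad {N : ℕ} (M : Matrix (Fin N) (Fin N) ℝ) (i j : Fin N) :
    (Pi.single i 1 : Fin N → ℝ) ⬝ᵥ (M *ᵥ Pi.single j 1) = M i j := by
  classical
  simp [dotProduct, Matrix.mulVec, Pi.single_apply, Finset.sum_ite_eq,
    mul_ite, ite_mul, mul_zero, zero_mul, mul_one, one_mul]

lemma symm_quad_zero {N : ℕ} {M : Matrix (Fin N) (Fin N) ℝ} (hsym : Mᵀ = M)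
    (h : ∀ u : Fin N → ℝ, u ⬝ᵥ (M *ᵥ u) = 0) : M = 0 := by
  ext i j
  have hij := h (Pi.single i 1 + Pi.single j 1)
  rw [Matrix.mulVec_add, dotProduct_add, add_dotProduct,
    add_dotProduct, single_quad, single_quad, single_quad, single_quad] at hij
  have hii := h (Pi.single i 1)
  rw [single_quad] at hii
  have hjj := h (Pi.single j 1)
  rw [single_quad] at hjj
  have hji : M j i = M i j := by
    have := congrFun (congrFun hsym i) j
    rw [Matrix.transpose_apply] at this
    exact this
  simp only [Matrix.zero_apply]
  linarith

/-- Fix `n > r ≥ 1` and let `X` be the set of symmetric positive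
semidefinite `n × n` real matrices of rank at most `r`. Let `f` be twice continuously
differentiable and `g(R) = f(R Rᵀ)` on `ℝ^{n×r}`. If `Dg(R) = 0` and the second-derivative
quadratic form of `g` at `R` is positive semidefinite, then `R Rᵀ` is stationary for `f`
on `X`. -/
theorem statement15 {n r : ℕ} (h1 : 1 ≤ r) (hrn : r < n)
    (f : Matrix (Fin n) (Fin n) ℝ → ℝ) (hf : ContDiff ℝ 2 f)
    (R : Matrix (Fin n) (Fin r) ℝ)
    (hcrit1 : fderiv ℝ (fun R' : Matrix (Fin n) (Fin r) ℝ => f (R' * R'ᵀ)) R = 0)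
    (hcrit2 : ∀ Rdot : Matrix (Fin n) (Fin r) ℝ,
      0 ≤ iteratedFDeriv ℝ 2 (fun R' : Matrix (Fin n) (Fin r) ℝ => f (R' * R'ᵀ)) R
            (fun _ => Rdot)) :
    ∀ V ∈ bouligandTangentCone
        {A : Matrix (Fin n) (Fin n) ℝ |
          A.IsSymm ∧ (∀ u : Fin n → ℝ, 0 ≤ u ⬝ᵥ (A *ᵥ u)) ∧ A.rank ≤ r}
        (R * Rᵀ),
      0 ≤ fderiv ℝ f (R * Rᵀ) V := by
  classical
  rintro V ⟨xs, τ, hmem, hτpos, hτ0, hlim⟩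
  have hfd : Differentiable ℝ f := hf.differentiable (by norm_num)
  set x : Matrix (Fin n) (Fin n) ℝ := R * Rᵀ with hx
  set L : Matrix (Fin n) (Fin n) ℝ →L[ℝ] ℝ := fderiv ℝ f x with hL
  -- first-order condition
  have hL1 : ∀ Rd : Matrix (Fin n) (Fin r) ℝ, L (R * Rdᵀ + Rd * Rᵀ) = 0 := by
    intro Rd
    have h := hcrit1.symm.trans (fderiv_g hfd R)
    have h2 := congrArg (fun T : Matrix (Fin n) (Fin r) ℝ →L[ℝ] ℝ => T Rd) h
    simp only [ContinuousLinearMap.zero_apply, ContinuousLinearMap.comp_apply,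
      ContinuousLinearMap.add_apply, ContinuousLinearMap.flip_apply, mulTCLM_apply] at h2
    exact h2.symm
  -- symmetry of V
  have hVsymm : Vᵀ = V := by
    have hcont : Continuous (fun M : Matrix (Fin n) (Fin n) ℝ => Mᵀ) :=
      continuous_id.matrix_transpose
    have h1 : Filter.Tendsto (fun i => ((τ i)⁻¹ • (xs i - x))ᵀ) Filter.atTop (𝓝 Vᵀ) :=
      (hcont.tendsto V).comp hlim
    have h2 : ∀ i, ((τ i)⁻¹ • (xs i - x))ᵀ = (τ i)⁻¹ • (xs i - x) := by
      intro i
      rw [Matrix.transpose_smul, Matrix.transpose_sub, (hmem i).1, hx, Matrix.transpose_mul,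
        Matrix.transpose_transpose]
    exact tendsto_nhds_unique (h1.congr h2) hlim
  obtain ⟨S, hS⟩ := exists_ginv R
  set Q : Matrix (Fin n) (Fin n) ℝ := 1 - R * S with hQ
  have hQR : Q * R = 0 := by
    rw [hQ, Matrix.sub_mul, Matrix.one_mul, hS, sub_self]
  have hRtQt : ∀ u : Fin n → ℝ, Rᵀ *ᵥ (Qᵀ *ᵥ u) = 0 := by
    intro u
    rw [Matrix.mulVec_mulVec, ← Matrix.transpose_mul, hQR, Matrix.transpose_zero,
      Matrix.zero_mulVec]
  have hquadeq : ∀ u : Fin n → ℝ,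
      u ⬝ᵥ ((Q * V * Qᵀ) *ᵥ u) = (Qᵀ *ᵥ u) ⬝ᵥ (V *ᵥ (Qᵀ *ᵥ u)) := by
    intro u
    rw [← Matrix.mulVec_mulVec, ← Matrix.mulVec_mulVec, Matrix.dotProduct_mulVec,
      ← Matrix.mulVec_transpose]
  -- positivity on ker Rᵀ
  have hpos : ∀ w : Fin n → ℝ, Rᵀ *ᵥ w = 0 → 0 ≤ w ⬝ᵥ (V *ᵥ w) := by
    intro w hw
    have hxw : x *ᵥ w = 0 := by rw [hx, ← Matrix.mulVec_mulVec, hw, Matrix.mulVec_zero]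
    have hcont : Continuous (fun M : Matrix (Fin n) (Fin n) ℝ => w ⬝ᵥ (M *ᵥ w)) :=
      continuous_const.dotProduct (continuous_id.matrix_mulVec continuous_const)
    have hq : Filter.Tendsto (fun i => w ⬝ᵥ (((τ i)⁻¹ • (xs i - x)) *ᵥ w)) Filter.atTop
        (𝓝 (w ⬝ᵥ (V *ᵥ w))) := (hcont.tendsto V).comp hlim
    apply ge_of_tendsto hq
    filter_upwards with i
    rw [Matrix.smul_mulVec, Matrix.sub_mulVec, hxw, sub_zero, dotProduct_smul,
      smul_eq_mul]
    exact mul_nonneg (inv_nonneg.2 (hτpos i).le) ((hmem i).2.1 w)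
  -- decomposition of V
  set Rd0 : Matrix (Fin n) (Fin r) ℝ := (V - (2⁻¹ : ℝ) • (R * S * V)) * Sᵀ with hRd0
  have hdecomp : R * Rd0ᵀ + Rd0 * Rᵀ = V - Q * V * Qᵀ := by
    rw [hRd0, hQ]
    exact decomp_lemma R S V hVsymm
  have hLV : L V = L (Q * V * Qᵀ) := by
    have hsplit : V = (V - Q * V * Qᵀ) + Q * V * Qᵀ := by abel
    conv_lhs => rw [hsplit]
    rw [map_add, ← hdecomp, hL1 Rd0, zero_add]
  rw [hLV]
  by_cases hker : ∃ v : Fin r → ℝ, v ≠ 0 ∧ R *ᵥ v = 0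
  · obtain ⟨v, hv0, hvker⟩ := hker
    have houter : ∀ w : Fin n → ℝ, 0 ≤ L (vecMulVec w w) := by
      intro w
      have h2 := hcrit2 (vecMulVec w v)
      rw [second_order hf R _ (outer_mul_Rt_eq_zero R w v hvker)
        (R_mul_outer_t_eq_zero R w v hvker), outer_mul_transpose_eq,
        ContinuousLinearMap.map_smul, smul_eq_mul] at h2
      show (0:ℝ) ≤ fderiv ℝ f (R * Rᵀ) (vecMulVec w w)
      have hvv : 0 < v ⬝ᵥ v := by
        rcases lt_or_eq_of_le (Finset.sum_nonneg fun j _ => mul_self_nonneg (v j)) with h | h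
        · exact h
        · exact absurd (dotProduct_self_eq_zero.1 h.symm) hv0
      have h3 : 0 ≤ 2 * (v ⬝ᵥ v * fderiv ℝ f (R * Rᵀ) (vecMulVec w w)) := h2
      nlinarith [h3, hvv]
    have hpsd : (Q * V * Qᵀ).PosSemidef := by
      have ht : (Q * V * Qᵀ)ᵀ = Q * V * Qᵀ := by
        rw [Matrix.transpose_mul, Matrix.transpose_mul, Matrix.transpose_transpose, hVsymm,
          Matrix.mul_assoc]
      rw [Matrix.posSemidef_iff_dotProduct_mulVec]
      constructor
      · show (Q * V * Qᵀ)ᴴ = Q * V * Qᵀ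
        ext i j
        rw [Matrix.conjTranspose_apply, star_trivial]
        have := congrFun (congrFun ht i) j
        rw [Matrix.transpose_apply] at this
        exact this
      · intro u
        rw [star_trivial, hquadeq u]
        exact hpos _ (hRtQt u)
    exact L_nonneg_of_psd L houter hpsd
  · push_neg at hker
    have hinj : ∀ v : Fin r → ℝ, R *ᵥ v = 0 → v = 0 := by
      intro v hv
      by_contra h0
      exact (hker v h0) hv
    have hQVQ : Q * V * Qᵀ = 0 := by
      have hsym : (Q * V * Qᵀ)ᵀ = Q * V * Qᵀ := by
        rw [Matrix.transpose_mul, Matrix.transpose_mul, Matrix.transpose_transpose, hVsymm,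
          Matrix.mul_assoc]
      apply symm_quad_zero hsym
      intro u
      rw [hquadeq u]
      exact quad_vanish hinj (fun i => (hmem i).1) (fun i => (hmem i).2.2) hτpos hτ0 hlim
        (Qᵀ *ᵥ u) (hRtQt u)
    rw [hQVQ, map_zero]
end

section
/- Fix integers m, n, r ≥ 1 and let X = {A ∈ ℝ^{m×n} : rank A ≤ r}. Let f : ℝ^{m×n} → ℝ be twice continuously differentiable and define g : ℝ^{m×r} × ℝ^{n×r} → ℝ by g(L, R) = f(L·Rᵀ). If (L, R) satisfies Dg(L, R) = 0 and the second-derivative quadratic form of g at (L, R) is positive semidefinite (D²g(L,R)[(L̇,Ṙ), (L̇,Ṙ)] ≥ 0 for all (L̇, Ṙ)), then L·Rᵀ is stationary for f on X: Df(L·Rᵀ)[V] ≥ 0 for every V in the Bouligand tangent cone to X at L·Rᵀ. -/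
open Filter Topology Matrix

attribute [local instance] Matrix.normedAddCommGroup Matrix.normedSpace

private lemma isBBM_mulT {m n r : ℕ} :
    IsBoundedBilinearMap ℝ
      (fun p : Matrix (Fin m) (Fin r) ℝ × Matrix (Fin n) (Fin r) ℝ => p.1 * p.2ᵀ) where
  add_left := fun x₁ x₂ y => by simp [Matrix.add_mul]
  smul_left := fun c x y => by simp [Matrix.smul_mul]
  add_right := fun x y₁ y₂ => by simp [Matrix.transpose_add, Matrix.mul_add]
  smul_right := fun c x y => by simp [Matrix.transpose_smul, Matrix.mul_smul]
  bound := ⟨(r : ℝ) + 1, by positivity, fun x y => by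
    refine (Matrix.norm_le_iff (by positivity)).2 fun i j => ?_
    have h1 : (x * yᵀ) i j = ∑ k, x i k * y j k := by simp [Matrix.mul_apply]
    rw [h1]
    calc ‖∑ k, x i k * y j k‖ ≤ ∑ k, ‖x i k * y j k‖ := norm_sum_le _ _
      _ ≤ ∑ _k : Fin r, ‖x‖ * ‖y‖ := Finset.sum_le_sum fun k _ => by
          rw [norm_mul]
          exact mul_le_mul (x.norm_entry_le_entrywise_sup_norm)
            (y.norm_entry_le_entrywise_sup_norm) (norm_nonneg _) (norm_nonneg _)
      _ = (r : ℝ) * (‖x‖ * ‖y‖) := by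
          simp [Finset.sum_const, Fintype.card_fin, mul_assoc]
      _ ≤ ((r : ℝ) + 1) * ‖x‖ * ‖y‖ := by nlinarith [norm_nonneg x, norm_nonneg y]⟩

private lemma deriv2_curve {E : Type*} [NormedAddCommGroup E] [NormedSpace ℝ E]
    (f : E → ℝ) (hf : ContDiff ℝ 2 f) (x a b : E) :
    deriv (deriv (fun t : ℝ => f (x + t • a + (t * t) • b))) 0
      = fderiv ℝ (fderiv ℝ f) x a a + 2 * fderiv ℝ f x b := by
  have hfd : Differentiable ℝ f := hf.differentiable two_ne_zero
  have hfd2 : ContDiff ℝ 1 (fderiv ℝ f) := hf.fderiv_right (by norm_num)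
  set c : ℝ → E := fun t => x + t • a + (t * t) • b with hc_def
  have hc : ∀ t : ℝ, HasDerivAt c (a + (2 * t) • b) t := by
    intro t
    have h1 : HasDerivAt (fun s : ℝ => s • a) ((1 : ℝ) • a) t :=
      (hasDerivAt_id t).smul_const a
    have h2 : HasDerivAt (fun s : ℝ => (s * s) • b) ((1 * t + t * 1) • b) t :=
      ((hasDerivAt_id t).mul (hasDerivAt_id t)).smul_const b
    have := ((hasDerivAt_const t x).add h1).add h2
    have e : a + (2 * t) • b = 0 + (1 : ℝ) • a + (1 * t + t * 1) • b := by module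
    rw [e]
    exact this
  have h1 : ∀ t : ℝ, HasDerivAt (fun s => f (c s)) (fderiv ℝ f (c t) (a + (2 * t) • b)) t :=
    fun t => ((hfd (c t)).hasFDerivAt).comp_hasDerivAt t (hc t)
  have hd1 : deriv (fun t : ℝ => f (c t)) = fun t => fderiv ℝ f (c t) (a + (2 * t) • b) :=
    funext fun t => (h1 t).deriv
  rw [hd1]
  have hc0 : c 0 = x := by simp [hc_def]
  have hu : HasDerivAt (fun t : ℝ => fderiv ℝ f (c t)) (fderiv ℝ (fderiv ℝ f) x a) 0 := by
    have := ((hfd2.differentiable one_ne_zero (c 0)).hasFDerivAt).comp_hasDerivAt 0 (hc 0)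
    simp only [hc0, mul_zero, zero_smul, add_zero] at this
    exact this
  have hv : HasDerivAt (fun t : ℝ => a + (2 * t) • b) ((2 : ℝ) • b) 0 := by
    have h2 : HasDerivAt (fun t : ℝ => (2 * t) • b) (((2 : ℝ) * 1) • b) 0 :=
      ((hasDerivAt_id (0 : ℝ)).const_mul 2).smul_const b
    have := (hasDerivAt_const (0 : ℝ) a).add h2
    exact this.congr_deriv (by simp)
  have := hu.clm_apply hv
  rw [this.deriv]
  simp only [hc0, mul_zero, zero_smul, add_zero, _root_.map_smul, smul_eq_mul]

private lemma vmv_mul_transpose {m n r : ℕ} (u : Fin m → ℝ) (w : Fin r → ℝ)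
    (R : Matrix (Fin n) (Fin r) ℝ) :
    vecMulVec u w * Rᵀ = vecMulVec u (R *ᵥ w) := by
  ext i j
  simp only [Matrix.mul_apply, Matrix.vecMulVec_apply, Matrix.transpose_apply,
    Matrix.mulVec, dotProduct, Finset.mul_sum]
  exact Finset.sum_congr rfl fun k _ => by ring

private lemma mul_transpose_vmv {m n r : ℕ} (L : Matrix (Fin m) (Fin r) ℝ)
    (v : Fin n → ℝ) (w : Fin r → ℝ) :
    L * (vecMulVec v w)ᵀ = vecMulVec (L *ᵥ w) v := by
  ext i j
  simp only [Matrix.mul_apply, Matrix.vecMulVec_apply, Matrix.transpose_apply,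
    Matrix.mulVec, dotProduct, Finset.sum_mul]
  exact Finset.sum_congr rfl fun k _ => by ring

private lemma vmv_mul_vmv {m n r : ℕ} (u : Fin m → ℝ) (w : Fin r → ℝ) (v : Fin n → ℝ) :
    vecMulVec u w * (vecMulVec v w)ᵀ = (w ⬝ᵥ w) • vecMulVec u v := by
  ext i j
  simp only [Matrix.mul_apply, Matrix.vecMulVec_apply, Matrix.transpose_apply,
    Matrix.smul_apply, dotProduct, smul_eq_mul, Finset.sum_mul]
  exact Finset.sum_congr rfl fun k _ => by ring

private lemma std_eq_vmv {m n : ℕ} (i : Fin m) (j : Fin n) (c : ℝ) :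
    Matrix.single i j c = vecMulVec (Pi.single i c) (Pi.single j 1) := by
  ext a b
  by_cases ha : i = a <;> by_cases hb : j = b <;>
    simp [Matrix.single, Matrix.vecMulVec_apply, Pi.single_apply, ha, hb, eq_comm]

private lemma vecMulVec_zero_right {m n : ℕ} (u : Fin m → ℝ) :
    vecMulVec u (0 : Fin n → ℝ) = 0 := by
  ext a b; simp [Matrix.vecMulVec_apply]

private lemma vecMulVec_zero_left {m n : ℕ} (v : Fin n → ℝ) :
    vecMulVec (0 : Fin m → ℝ) v = 0 := by
  ext a b; simp [Matrix.vecMulVec_apply]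

set_option maxHeartbeats 2000000 in
/-- Fix `m, n, r ≥ 1` and let `X = {A ∈ ℝ^{m×n} : rank A ≤ r}`. Let `f`
be twice continuously differentiable and `g(L, R) = f(L Rᵀ)`. If `Dg(L, R) = 0` and the
second-derivative quadratic form of `g` at `(L, R)` is positive semidefinite, then `L Rᵀ`
is stationary for `f` on `X`. -/
theorem statement17 {m n r : ℕ} (hm : 1 ≤ m) (hn : 1 ≤ n) (hr : 1 ≤ r)
    (f : Matrix (Fin m) (Fin n) ℝ → ℝ) (hf : ContDiff ℝ 2 f)
    (L : Matrix (Fin m) (Fin r) ℝ) (R : Matrix (Fin n) (Fin r) ℝ)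
    (hcrit1 : fderiv ℝ
      (fun p : Matrix (Fin m) (Fin r) ℝ × Matrix (Fin n) (Fin r) ℝ => f (p.1 * p.2ᵀ))
      (L, R) = 0)
    (hcrit2 : ∀ Ldot : Matrix (Fin m) (Fin r) ℝ, ∀ Rdot : Matrix (Fin n) (Fin r) ℝ,
      0 ≤ iteratedFDeriv ℝ 2
            (fun p : Matrix (Fin m) (Fin r) ℝ × Matrix (Fin n) (Fin r) ℝ => f (p.1 * p.2ᵀ))
            (L, R) (fun _ => (Ldot, Rdot))) :
    ∀ V ∈ bouligandTangentCone
        {A : Matrix (Fin m) (Fin n) ℝ | A.rank ≤ r} (L * Rᵀ),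
      0 ≤ fderiv ℝ f (L * Rᵀ) V := by
  classical
  intro V hV
  have hbb := isBBM_mulT (m := m) (n := n) (r := r)
  have hfd : Differentiable ℝ f := hf.differentiable two_ne_zero
  have hgf : HasFDerivAt
      (fun p : Matrix (Fin m) (Fin r) ℝ × Matrix (Fin n) (Fin r) ℝ => f (p.1 * p.2ᵀ))
      ((fderiv ℝ f (L * Rᵀ)).comp (hbb.deriv (L, R))) (L, R) :=
    (hfd (L * Rᵀ)).hasFDerivAt.comp (L, R) (hbb.hasFDerivAt (L, R))
  have hc1 : ∀ (K : Matrix (Fin m) (Fin r) ℝ) (M : Matrix (Fin n) (Fin r) ℝ),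
      fderiv ℝ f (L * Rᵀ) (L * Mᵀ + K * Rᵀ) = 0 := by
    intro K M
    have h := hgf.fderiv
    have h := hcrit1.symm.trans h
    have h2 := congrArg (fun T : _ →L[ℝ] ℝ => T (K, M)) h
    have h3 : fderiv ℝ f (L * Rᵀ) (hbb.deriv (L, R) (K, M)) = 0 := h2.symm
    rw [IsBoundedBilinearMap.deriv_apply] at h3
    simpa using h3
  have hg2 : ContDiff ℝ 2
      (fun p : Matrix (Fin m) (Fin r) ℝ × Matrix (Fin n) (Fin r) ℝ => f (p.1 * p.2ᵀ)) :=
    hf.comp hbb.contDiff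
  have hQ : ∀ (K : Matrix (Fin m) (Fin r) ℝ) (M : Matrix (Fin n) (Fin r) ℝ),
      0 ≤ fderiv ℝ (fderiv ℝ f) (L * Rᵀ) (L * Mᵀ + K * Rᵀ) (L * Mᵀ + K * Rᵀ)
          + 2 * fderiv ℝ f (L * Rᵀ) (K * Mᵀ) := by
    intro K M
    have h2 := hcrit2 K M
    rw [iteratedFDeriv_two_apply] at h2
    have e3 := deriv2_curve _ hg2 (L, R) (K, M) 0
    have e2m : ∀ t : ℝ, (L + t • K + (t * t) • (0 : Matrix (Fin m) (Fin r) ℝ))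
          * (R + t • M + (t * t) • (0 : Matrix (Fin n) (Fin r) ℝ))ᵀ
        = L * Rᵀ + t • (L * Mᵀ + K * Rᵀ) + (t * t) • (K * Mᵀ) := by
      intro t
      simp only [smul_zero, add_zero, Matrix.transpose_add, Matrix.transpose_smul,
        Matrix.add_mul, Matrix.mul_add, Matrix.smul_mul, Matrix.mul_smul, smul_add, smul_smul]
      module
    have e2 : (fun t : ℝ => (fun p : Matrix (Fin m) (Fin r) ℝ × Matrix (Fin n) (Fin r) ℝ
          => f (p.1 * p.2ᵀ)) ((L, R) + t • (K, M) + (t * t) • (0 : _ × _)))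
        = fun t : ℝ => f (L * Rᵀ + t • (L * Mᵀ + K * Rᵀ) + (t * t) • (K * Mᵀ)) :=
      funext fun t => congrArg f (e2m t)
    have e4 := deriv2_curve f hf (L * Rᵀ) (L * Mᵀ + K * Rᵀ) (K * Mᵀ)
    rw [e2, e4, map_zero, mul_zero, add_zero] at e3
    refine le_of_le_of_eq ?_ e3.symm
    exact h2
  have hdegenR : (∃ w : Fin r → ℝ, w ≠ 0 ∧ R *ᵥ w = 0) →
      ∀ W : Matrix (Fin m) (Fin n) ℝ, fderiv ℝ f (L * Rᵀ) W = 0 := by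
    rintro ⟨w, hw0, hw⟩ W
    have hsne : w ⬝ᵥ w ≠ 0 := fun h => hw0 (dotProduct_self_eq_zero.mp h)
    have hker : ∀ (u : Fin m → ℝ) (v : Fin n → ℝ),
        fderiv ℝ f (L * Rᵀ) (vecMulVec u v) = 0 := by
      intro u v
      by_contra ht
      set t := fderiv ℝ f (L * Rᵀ) (vecMulVec u v) with htdef
      set Kq := fderiv ℝ (fderiv ℝ f) (L * Rᵀ) (vecMulVec (L *ᵥ w) v)
        (vecMulVec (L *ᵥ w) v) with hKqdef
      have key : ∀ c : ℝ, 0 ≤ Kq + 2 * ((c * (w ⬝ᵥ w)) * t) := by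
        intro c
        have h := hQ (c • vecMulVec u w) (vecMulVec v w)
        have h1 : L * (vecMulVec v w)ᵀ + (c • vecMulVec u w) * Rᵀ
            = vecMulVec (L *ᵥ w) v := by
          rw [mul_transpose_vmv, Matrix.smul_mul, vmv_mul_transpose, hw,
            vecMulVec_zero_right, smul_zero, add_zero]
        have h2 : (c • vecMulVec u w) * (vecMulVec v w)ᵀ
            = (c * (w ⬝ᵥ w)) • vecMulVec u v := by
          rw [Matrix.smul_mul, vmv_mul_vmv, smul_smul]
        rw [h1, h2, _root_.map_smul] at h
        simpa [smul_eq_mul, ← hKqdef, ← htdef] using h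
      have h := key (-(Kq + 1) / (2 * (w ⬝ᵥ w) * t))
      have heq : 2 * ((-(Kq + 1) / (2 * (w ⬝ᵥ w) * t) * (w ⬝ᵥ w)) * t) = -(Kq + 1) := by
        field_simp
      rw [heq] at h
      linarith
    have hW : W = ∑ i, ∑ j, Matrix.single i j (W i j) :=
      Matrix.matrix_eq_sum_single W
    calc fderiv ℝ f (L * Rᵀ) W
        = fderiv ℝ f (L * Rᵀ) (∑ i, ∑ j, Matrix.single i j (W i j)) := by rw [← hW]
      _ = ∑ i, ∑ j, fderiv ℝ f (L * Rᵀ) (Matrix.single i j (W i j)) := by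
          rw [map_sum]; exact Finset.sum_congr rfl fun i _ => map_sum _ _ _
      _ = 0 := Finset.sum_eq_zero fun i _ => Finset.sum_eq_zero fun j _ => by
          rw [std_eq_vmv]; exact hker _ _
  have hdegenL : (∃ w : Fin r → ℝ, w ≠ 0 ∧ L *ᵥ w = 0) →
      ∀ W : Matrix (Fin m) (Fin n) ℝ, fderiv ℝ f (L * Rᵀ) W = 0 := by
    rintro ⟨w, hw0, hw⟩ W
    have hsne : w ⬝ᵥ w ≠ 0 := fun h => hw0 (dotProduct_self_eq_zero.mp h)
    have hker : ∀ (u : Fin m → ℝ) (v : Fin n → ℝ),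
        fderiv ℝ f (L * Rᵀ) (vecMulVec u v) = 0 := by
      intro u v
      by_contra ht
      set t := fderiv ℝ f (L * Rᵀ) (vecMulVec u v) with htdef
      set Kq := fderiv ℝ (fderiv ℝ f) (L * Rᵀ) (vecMulVec u (R *ᵥ w))
        (vecMulVec u (R *ᵥ w)) with hKqdef
      have key : ∀ c : ℝ, 0 ≤ Kq + 2 * ((c * (w ⬝ᵥ w)) * t) := by
        intro c
        have h := hQ (vecMulVec u w) (c • vecMulVec v w)
        have h1 : L * (c • vecMulVec v w)ᵀ + (vecMulVec u w) * Rᵀ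
            = vecMulVec u (R *ᵥ w) := by
          rw [Matrix.transpose_smul, Matrix.mul_smul, mul_transpose_vmv, hw,
            vecMulVec_zero_left, smul_zero, zero_add, vmv_mul_transpose]
        have h2 : (vecMulVec u w) * (c • vecMulVec v w)ᵀ
            = (c * (w ⬝ᵥ w)) • vecMulVec u v := by
          rw [Matrix.transpose_smul, Matrix.mul_smul, vmv_mul_vmv, smul_smul, mul_comm c]
        rw [h1, h2, _root_.map_smul] at h
        simpa [smul_eq_mul, ← hKqdef, ← htdef] using h
      have h := key (-(Kq + 1) / (2 * (w ⬝ᵥ w) * t))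
      have heq : 2 * ((-(Kq + 1) / (2 * (w ⬝ᵥ w) * t) * (w ⬝ᵥ w)) * t) = -(Kq + 1) := by
        field_simp
      rw [heq] at h
      linarith
    have hW : W = ∑ i, ∑ j, Matrix.single i j (W i j) :=
      Matrix.matrix_eq_sum_single W
    calc fderiv ℝ f (L * Rᵀ) W
        = fderiv ℝ f (L * Rᵀ) (∑ i, ∑ j, Matrix.single i j (W i j)) := by rw [← hW]
      _ = ∑ i, ∑ j, fderiv ℝ f (L * Rᵀ) (Matrix.single i j (W i j)) := by
          rw [map_sum]; exact Finset.sum_congr rfl fun i _ => map_sum _ _ _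
      _ = 0 := Finset.sum_eq_zero fun i _ => Finset.sum_eq_zero fun j _ => by
          rw [std_eq_vmv]; exact hker _ _
  by_cases hKL : ∃ w : Fin r → ℝ, w ≠ 0 ∧ L *ᵥ w = 0
  · rw [hdegenL hKL V]
  by_cases hKR : ∃ w : Fin r → ℝ, w ≠ 0 ∧ R *ᵥ w = 0
  · rw [hdegenR hKR V]
  push_neg at hKL hKR
  have hLinj : ∀ w : Fin r → ℝ, L *ᵥ w = 0 → w = 0 := by
    intro w h; by_contra h0; exact hKL w h0 h
  have hRinj : ∀ w : Fin r → ℝ, R *ᵥ w = 0 → w = 0 := by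
    intro w h; by_contra h0; exact hKR w h0 h
  have hdL : (Lᵀ * L).det ≠ 0 := by
    intro hdet
    obtain ⟨w, hw0, hw⟩ := Matrix.exists_mulVec_eq_zero_iff.mpr hdet
    have hker : L *ᵥ w = 0 := by
      have h1 := Matrix.ker_mulVecLin_transpose_mul_self L
      have hmem : w ∈ LinearMap.ker (Lᵀ * L).mulVecLin := by
        simp only [LinearMap.mem_ker, Matrix.mulVecLin_apply]; exact hw
      rw [h1] at hmem
      simpa only [LinearMap.mem_ker, Matrix.mulVecLin_apply] using hmem
    exact hw0 (hLinj w hker)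
  have hdR : (Rᵀ * R).det ≠ 0 := by
    intro hdet
    obtain ⟨w, hw0, hw⟩ := Matrix.exists_mulVec_eq_zero_iff.mpr hdet
    have hker : R *ᵥ w = 0 := by
      have h1 := Matrix.ker_mulVecLin_transpose_mul_self R
      have hmem : w ∈ LinearMap.ker (Rᵀ * R).mulVecLin := by
        simp only [LinearMap.mem_ker, Matrix.mulVecLin_apply]; exact hw
      rw [h1] at hmem
      simpa only [LinearMap.mem_ker, Matrix.mulVecLin_apply] using hmem
    exact hw0 (hRinj w hker)
  have hLinv : (Lᵀ * L)⁻¹ * (Lᵀ * L) = 1 := Matrix.nonsing_inv_mul _ (isUnit_iff_ne_zero.mpr hdL)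
  have hRinv : (Rᵀ * R)⁻¹ * (Rᵀ * R) = 1 := Matrix.nonsing_inv_mul _ (isUnit_iff_ne_zero.mpr hdR)
  have hRinv' : (Rᵀ * R) * (Rᵀ * R)⁻¹ = 1 := Matrix.mul_nonsing_inv _ (isUnit_iff_ne_zero.mpr hdR)
  obtain ⟨xs, τ, hxsX, hτpos, hτ0, hWlim⟩ := hV
  have hτne : ∀ i, τ i ≠ 0 := fun i => (hτpos i).ne'
  -- the key consequence of membership in the tangent cone
  have hminor : ∀ (u : Fin m → ℝ) (v : Fin n → ℝ), Lᵀ *ᵥ u = 0 → Rᵀ *ᵥ v = 0 →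
      ∑ a, ∑ b, u a * V a b * v b = 0 := by
    intro u v hu0 hv0
    set S : Matrix (Fin (r+1)) (Fin m) ℝ :=
      Matrix.of (fun i a => if h : (i : ℕ) < r then ((Lᵀ * L)⁻¹ * Lᵀ) ⟨i, h⟩ a else u a)
      with hSdef
    set T : Matrix (Fin n) (Fin (r+1)) ℝ :=
      Matrix.of (fun a j => if h : (j : ℕ) < r then (R * (Rᵀ * R)⁻¹) a ⟨j, h⟩ else v a)
      with hTdef
    have hrlast : ¬ ((Fin.last r : Fin (r+1)) : ℕ) < r := by simp
    have hSlast : ∀ a, S (Fin.last r) a = u a := fun a => by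
      rw [hSdef]; simp [Matrix.of_apply, dif_neg hrlast]
    have hTlast : ∀ a, T a (Fin.last r) = v a := fun a => by
      rw [hTdef]; simp [Matrix.of_apply, dif_neg hrlast]
    have hdet0 : ∀ A : Matrix (Fin m) (Fin n) ℝ, A.rank ≤ r → (S * A * T).det = 0 := by
      intro A hA
      by_contra hne
      have hUnit : IsUnit (S * A * T) :=
        (Matrix.isUnit_iff_isUnit_det _).mpr (isUnit_iff_ne_zero.mpr hne)
      have h1 : (S * A * T).rank = r + 1 := by
        rw [Matrix.rank_of_isUnit _ hUnit, Fintype.card_fin]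
      have h2 : (S * A * T).rank ≤ r :=
        le_trans (le_trans (Matrix.rank_mul_le_left _ _) (Matrix.rank_mul_le_right _ _)) hA
      omega
    set J : Matrix (Fin (r+1)) (Fin (r+1)) ℝ :=
      Matrix.of (fun i j => if (i : ℕ) = (j : ℕ) ∧ (i : ℕ) < r then (1:ℝ) else 0) with hJdef
    have hSL : S * L = Matrix.of (fun (i : Fin (r+1)) (k : Fin r) =>
        if (i : ℕ) = (k : ℕ) then (1:ℝ) else 0) := by
      ext i k
      by_cases h : (i : ℕ) < r
      · have e1 : (S * L) i k = (((Lᵀ * L)⁻¹ * Lᵀ) * L) ⟨i, h⟩ k := by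
          rw [Matrix.mul_apply, Matrix.mul_apply]
          exact Finset.sum_congr rfl fun a _ => by rw [hSdef]; simp [Matrix.of_apply, dif_pos h]
        rw [e1, Matrix.mul_assoc, hLinv]
        simp [Matrix.one_apply, Matrix.of_apply, Fin.ext_iff]
      · have e1 : (S * L) i k = ∑ a, u a * L a k := by
          rw [Matrix.mul_apply]
          exact Finset.sum_congr rfl fun a _ => by rw [hSdef]; simp [Matrix.of_apply, dif_neg h]
        have e2 : ∑ a, u a * L a k = (Lᵀ *ᵥ u) k := by
          simp [Matrix.mulVec, dotProduct, Matrix.transpose_apply, mul_comm]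
        have hik : ¬ ((i : ℕ) = (k : ℕ)) := fun hh => h (hh ▸ k.isLt)
        rw [e1, e2, hu0]
        simp [Matrix.of_apply, hik]
    have hRT : Rᵀ * T = Matrix.of (fun (k : Fin r) (j : Fin (r+1)) =>
        if (k : ℕ) = (j : ℕ) then (1:ℝ) else 0) := by
      ext k j
      by_cases h : (j : ℕ) < r
      · have e1 : (Rᵀ * T) k j = ((Rᵀ * R) * (Rᵀ * R)⁻¹) k ⟨j, h⟩ := by
          rw [Matrix.mul_apply, Matrix.mul_assoc, Matrix.mul_apply]
          exact Finset.sum_congr rfl fun a _ => by rw [hTdef]; simp [Matrix.of_apply, dif_pos h]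
        rw [e1, hRinv']
        simp [Matrix.one_apply, Matrix.of_apply, Fin.ext_iff]
      · have e1 : (Rᵀ * T) k j = ∑ a, R a k * v a := by
          rw [Matrix.mul_apply]
          exact Finset.sum_congr rfl fun a _ => by
            rw [hTdef]; simp [Matrix.of_apply, dif_neg h, Matrix.transpose_apply]
        have e2 : ∑ a, R a k * v a = (Rᵀ *ᵥ v) k := by
          simp [Matrix.mulVec, dotProduct, Matrix.transpose_apply, mul_comm]
        have hkj : ¬ ((k : ℕ) = (j : ℕ)) := fun hh => h (hh ▸ k.isLt)
        rw [e1, e2, hv0]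
        simp [Matrix.of_apply, hkj]
    have hJ0 : S * (L * Rᵀ) * T = J := by
      rw [← Matrix.mul_assoc S L Rᵀ, Matrix.mul_assoc (S * L) Rᵀ T, hSL, hRT]
      ext i j
      rw [Matrix.mul_apply]
      by_cases hi : (i : ℕ) < r
      · have hterm : ∀ k : Fin r,
            (Matrix.of (fun (i : Fin (r+1)) (k : Fin r) =>
              if (i : ℕ) = (k : ℕ) then (1:ℝ) else 0)) i k *
            (Matrix.of (fun (k : Fin r) (j : Fin (r+1)) =>
              if (k : ℕ) = (j : ℕ) then (1:ℝ) else 0)) k j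
            = if k = ⟨i, hi⟩ then (if (i : ℕ) = (j : ℕ) then (1:ℝ) else 0) else 0 := by
          intro k
          by_cases hk : k = (⟨i, hi⟩ : Fin r)
          · subst hk; simp
          · have hik : ¬ ((i : ℕ) = (k : ℕ)) := fun hh => hk (by
              apply Fin.ext; simp [← hh])
            simp [Matrix.of_apply, hik, hk]
        rw [Finset.sum_congr rfl fun k _ => hterm k, Finset.sum_ite_eq' Finset.univ]
        simp [hJdef, Matrix.of_apply, hi]
      · have hterm : ∀ k : Fin r,
            (Matrix.of (fun (i : Fin (r+1)) (k : Fin r) =>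
              if (i : ℕ) = (k : ℕ) then (1:ℝ) else 0)) i k *
            (Matrix.of (fun (k : Fin r) (j : Fin (r+1)) =>
              if (k : ℕ) = (j : ℕ) then (1:ℝ) else 0)) k j = 0 := by
          intro k
          have hik : ¬ ((i : ℕ) = (k : ℕ)) := fun hh => hi (hh ▸ k.isLt)
          simp [Matrix.of_apply, hik]
        rw [Finset.sum_congr rfl fun k _ => hterm k]
        simp [hJdef, Matrix.of_apply, hi]
    -- sequence expansion
    set W : ℕ → Matrix (Fin m) (Fin n) ℝ := fun i => (τ i)⁻¹ • (xs i - L * Rᵀ) with hWdef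
    have hxs_eq : ∀ i, xs i = L * Rᵀ + τ i • W i := by
      intro i
      rw [hWdef]
      simp only [smul_smul, mul_inv_cancel₀ (hτne i), one_smul]
      abel
    have hexp : ∀ i, S * xs i * T = J + τ i • (S * W i * T) := by
      intro i
      conv_lhs => rw [hxs_eq i]
      rw [Matrix.mul_add, Matrix.add_mul, hJ0, Matrix.mul_smul, Matrix.smul_mul]
    have hJlast : ∀ j, J (Fin.last r) j = 0 := fun j => by
      simp [hJdef, Matrix.of_apply]
    have hupd : ∀ i, Matrix.updateRow (J + τ i • (S * W i * T)) (Fin.last r)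
        (τ i • ((S * W i * T) (Fin.last r))) = J + τ i • (S * W i * T) := by
      intro i
      ext a b
      by_cases ha : a = Fin.last r
      · subst ha
        rw [Matrix.updateRow_self]
        simp [Matrix.add_apply, Matrix.smul_apply, hJlast]
      · rw [Matrix.updateRow_ne ha]
    have hdetfact : ∀ i, (Matrix.updateRow (J + τ i • (S * W i * T)) (Fin.last r)
        ((S * W i * T) (Fin.last r))).det = 0 := by
      intro i
      have h0 : (S * xs i * T).det = 0 := hdet0 _ (hxsX i)
      rw [hexp i, ← hupd i, Matrix.det_updateRow_smul] at h0
      rcases mul_eq_zero.mp h0 with h | h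
      · exact absurd h (hτne i)
      · exact h
    have hψ : Continuous fun q : ℝ × Matrix (Fin m) (Fin n) ℝ =>
        (Matrix.updateRow (J + q.1 • (S * q.2 * T)) (Fin.last r)
          ((S * q.2 * T) (Fin.last r))).det := by
      have hq : Continuous fun q : ℝ × Matrix (Fin m) (Fin n) ℝ => S * q.2 * T :=
        (continuous_const.matrix_mul continuous_snd).matrix_mul continuous_const
      exact ((continuous_const.add (continuous_fst.smul hq)).matrix_updateRow _
        ((continuous_apply (Fin.last r)).comp hq)).matrix_det
    have hql : Tendsto (fun i => (τ i, W i)) atTop (𝓝 ((0:ℝ), V)) :=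
      hτ0.prodMk_nhds hWlim
    have h1ψ := hψ.tendsto ((0:ℝ), V)
    have h00 := h1ψ.comp hql
    simp only [Function.comp_def] at h00
    simp only [hdetfact] at h00
    have hval0 : (Matrix.updateRow (J + (0:ℝ) • (S * V * T)) (Fin.last r)
        ((S * V * T) (Fin.last r))).det = 0 :=
      tendsto_nhds_unique h00 tendsto_const_nhds
    have hval : (Matrix.updateRow (J + (0:ℝ) • (S * V * T)) (Fin.last r)
        ((S * V * T) (Fin.last r))).det = (S * V * T) (Fin.last r) (Fin.last r) := by
      rw [zero_smul, add_zero]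
      have h1 : Matrix.updateRow J (Fin.last r) ((S * V * T) (Fin.last r))
          = Matrix.updateRow 1 (Fin.last r) ((S * V * T) (Fin.last r)) := by
        ext a b
        by_cases ha : a = Fin.last r
        · subst ha; rw [Matrix.updateRow_self, Matrix.updateRow_self]
        · rw [Matrix.updateRow_ne ha, Matrix.updateRow_ne ha]
          have halt : (a : ℕ) < r := by
            have h1 := a.isLt
            have h2 : (a : ℕ) ≠ r := fun hh => ha (Fin.ext (by simp [hh]))
            omega
          by_cases hab : (a : ℕ) = (b : ℕ)
          · simp only [hJdef, Matrix.of_apply, Matrix.one_apply, Fin.ext_iff, hab]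
            simp only [← hab, halt, and_true, if_true, if_pos rfl]
          · have : ¬ a = b := fun hh => hab (by rw [hh])
            simp [hJdef, Matrix.of_apply, hab, Matrix.one_apply, this]
      rw [h1]
      have h2 : (S * V * T) (Fin.last r) = ∑ k, ((S * V * T) (Fin.last r) k)
          • (1 : Matrix (Fin (r+1)) (Fin (r+1)) ℝ) k := by
        funext j
        simp [Matrix.one_apply, Finset.sum_apply, Pi.smul_apply, smul_eq_mul,
          mul_ite, mul_one, mul_zero, Finset.sum_ite_eq']
      rw [h2, Matrix.det_updateRow_sum]
      simp [Matrix.one_apply, Finset.sum_ite_eq', mul_ite, mul_one, mul_zero]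
    have hSVT : (S * V * T) (Fin.last r) (Fin.last r) = ∑ a, ∑ b, u a * V a b * v b := by
      simp only [Matrix.mul_apply, Finset.sum_mul]
      rw [Finset.sum_comm]
      exact Finset.sum_congr rfl fun a _ => Finset.sum_congr rfl fun b _ => by
        rw [hSlast, hTlast]
    rw [← hSVT, ← hval]
    exact hval0
  -- decompose V and conclude
  have e1 : (L * (Lᵀ * L)⁻¹ * Lᵀ) * V = L * ((Lᵀ * L)⁻¹ * (Lᵀ * V)) := by
    rw [Matrix.mul_assoc, Matrix.mul_assoc]
  have hPL : (L * (Lᵀ * L)⁻¹ * Lᵀ) * L = L := by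
    rw [Matrix.mul_assoc (L * (Lᵀ * L)⁻¹) Lᵀ L, Matrix.mul_assoc L (Lᵀ * L)⁻¹ (Lᵀ * L),
      hLinv, Matrix.mul_one]
  have hRQ : Rᵀ * (R * (Rᵀ * R)⁻¹ * Rᵀ) = Rᵀ := by
    rw [← Matrix.mul_assoc Rᵀ (R * (Rᵀ * R)⁻¹) Rᵀ, ← Matrix.mul_assoc Rᵀ R (Rᵀ * R)⁻¹,
      hRinv', Matrix.one_mul]
  obtain ⟨P, hP⟩ : ∃ P : Matrix (Fin m) (Fin m) ℝ, P = 1 - L * (Lᵀ * L)⁻¹ * Lᵀ := ⟨_, rfl⟩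
  obtain ⟨Qm, hQdef⟩ : ∃ Q : Matrix (Fin n) (Fin n) ℝ, Q = 1 - R * (Rᵀ * R)⁻¹ * Rᵀ := ⟨_, rfl⟩
  have hDzero : P * V * Qm = 0 := by
    ext a b
    have hu0 : Lᵀ *ᵥ (fun x => P a x) = 0 := by
      funext k
      have hh : (Lᵀ *ᵥ (fun x => P a x)) k = (P * L) a k := by
        simp [Matrix.mulVec, dotProduct, Matrix.mul_apply, Matrix.transpose_apply,
          mul_comm]
      rw [hh, hP, Matrix.sub_mul, Matrix.one_mul, hPL, sub_self]
      simp
    have hv0' : Rᵀ *ᵥ (fun y => Qm y b) = 0 := by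
      funext k
      have hh : (Rᵀ *ᵥ (fun y => Qm y b)) k = (Rᵀ * Qm) k b := by
        simp [Matrix.mulVec, dotProduct, Matrix.mul_apply, Matrix.transpose_apply]
      rw [hh, hQdef, Matrix.mul_sub, Matrix.mul_one, hRQ, sub_self]
      simp
    have hsum := hminor _ _ hu0 hv0'
    have hent : (P * V * Qm) a b = ∑ x, ∑ y, P a x * V x y * Qm y b := by
      simp only [Matrix.mul_apply, Finset.sum_mul]
      rw [Finset.sum_comm]
    simp only [Matrix.zero_apply]
    rw [hent]
    exact hsum
  have h3 : P * V * Qm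
      = V - L * ((Lᵀ * L)⁻¹ * (Lᵀ * V))
        - (V - L * ((Lᵀ * L)⁻¹ * (Lᵀ * V))) * (R * (Rᵀ * R)⁻¹) * Rᵀ := by
    rw [hP, hQdef, Matrix.sub_mul, Matrix.one_mul, e1, Matrix.mul_sub, Matrix.mul_one,
      ← Matrix.mul_assoc (V - L * ((Lᵀ * L)⁻¹ * (Lᵀ * V))) (R * (Rᵀ * R)⁻¹) Rᵀ]
  rw [h3] at hDzero
  rw [sub_sub, sub_eq_zero] at hDzero
  have hfinal := congrArg (fderiv ℝ f (L * Rᵀ)) hDzero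
  rw [map_add] at hfinal
  have t1 : fderiv ℝ f (L * Rᵀ) (L * ((Lᵀ * L)⁻¹ * (Lᵀ * V))) = 0 := by
    have := hc1 0 (((Lᵀ * L)⁻¹ * (Lᵀ * V))ᵀ)
    simpa using this
  have t2 : fderiv ℝ f (L * Rᵀ)
      ((V - L * ((Lᵀ * L)⁻¹ * (Lᵀ * V))) * (R * (Rᵀ * R)⁻¹) * Rᵀ) = 0 := by
    have := hc1 ((V - L * ((Lᵀ * L)⁻¹ * (Lᵀ * V))) * (R * (Rᵀ * R)⁻¹)) 0
    simpa using this
  rw [t1, t2, add_zero] at hfinal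
  rw [hfinal]
end

section
/- Fix an integer n ≥ 1. Let S = {y ∈ ℝⁿ : ‖y‖₂ = 1} be the unit sphere, Δ = {x ∈ ℝⁿ : x_i ≥ 0 for all i and Σ_i x_i = 1} the standard simplex, and φ : ℝⁿ → ℝⁿ the entrywise squaring map φ(y) = y ⊙ y (so φ(S) = Δ). Let f : ℝⁿ → ℝ be twice continuously differentiable, and suppose y ∈ S is second-order critical for f ∘ φ on S: for every C^∞ curve c : ℝ → ℝⁿ with c(0) = y and ‖c(t)‖₂ = 1 for all t, one has (f ∘ φ ∘ c)'(0) = 0 and (f ∘ φ ∘ c)''(0) ≥ 0. Then φ(y) = y ⊙ y is stationary for f on Δ: Df(y ⊙ y)[v] ≥ 0 for every v in the Bouligand tangent cone to Δ at y ⊙ y. -/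
open Filter Topology

set_option maxHeartbeats 1000000 in
/-- Consider the Hadamard lift `φ(y) = y ⊙ y` from the unit sphere of
`ℝⁿ` (with the Euclidean `ℓ²` norm) onto the standard simplex. Let `f : ℝⁿ → ℝ` be twice
continuously differentiable and suppose `y` with `‖y‖₂ = 1` is second-order critical for
`f ∘ φ` on the sphere: along every `C^∞` curve `c` with `c 0 = y` staying on the sphere,
`(f ∘ φ ∘ c)'(0) = 0` and `(f ∘ φ ∘ c)''(0) ≥ 0`. Then `y ⊙ y` is stationary for `f` on
the simplex: `Df(y ⊙ y)[v] ≥ 0` for every `v` in the Bouligand tangent cone to the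
simplex at `y ⊙ y`. -/
theorem statement19 {n : ℕ} (hn : 1 ≤ n)
    (f : EuclideanSpace ℝ (Fin n) → ℝ) (hf : ContDiff ℝ 2 f)
    (y : EuclideanSpace ℝ (Fin n)) (hy : ‖y‖ = 1)
    (hcrit : ∀ c : ℝ → EuclideanSpace ℝ (Fin n), ContDiff ℝ (⊤ : ℕ∞) c → c 0 = y →
      (∀ t : ℝ, ‖c t‖ = 1) →
      deriv (fun t => f (WithLp.toLp 2 (fun i => c t i * c t i))) 0 = 0 ∧
        0 ≤ deriv (deriv (fun t => f (WithLp.toLp 2 (fun i => c t i * c t i)))) 0) :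
    ∀ v ∈ bouligandTangentCone
        {x : EuclideanSpace ℝ (Fin n) | (∀ i, 0 ≤ x i) ∧ ∑ i, x i = 1}
        (WithLp.toLp 2 (fun i => y i * y i)),
      0 ≤ fderiv ℝ f (WithLp.toLp 2 (fun i => y i * y i)) v := by
  classical
  intro v hv
  set x : EuclideanSpace ℝ (Fin n) := WithLp.toLp 2 (fun i => y i * y i) with hxdef
  have hfdiff : Differentiable ℝ f := hf.differentiable (by norm_num)
  set D : EuclideanSpace ℝ (Fin n) →L[ℝ] ℝ := fderiv ℝ f x with hDdef
  show (0:ℝ) ≤ D v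
  -- sum of x is 1
  have hsumy : ∑ i, y i * y i = 1 := by
    have h1 : ‖y‖ = Real.sqrt (∑ i, ‖y i‖ ^ 2) := EuclideanSpace.norm_eq y
    have h3 : (∑ i, ‖y i‖ ^ 2) = 1 := by
      have hnn : (0:ℝ) ≤ ∑ i, ‖y i‖ ^ 2 :=
        Finset.sum_nonneg fun i _ => sq_nonneg _
      have h2 : Real.sqrt (∑ i, ‖y i‖ ^ 2) = 1 := by rw [← h1, hy]
      nlinarith [Real.sq_sqrt hnn]
    calc ∑ i, y i * y i = ∑ i, ‖y i‖ ^ 2 := by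
          apply Finset.sum_congr rfl; intro i _
          rw [Real.norm_eq_abs, sq_abs]; ring
      _ = 1 := h3
  have hsumx : ∑ i, x i = 1 := hsumy
  -- facts from the tangent cone
  obtain ⟨xs, τ, hmem, hτpos, hτ0, hlim⟩ := hv
  have hcoord : ∀ i : Fin n, Tendsto (fun k => (τ k)⁻¹ * (xs k i - x i)) atTop (𝓝 (v i)) := by
    intro i
    have h := ((EuclideanSpace.proj (𝕜 := ℝ) i).continuous.tendsto v).comp hlim
    simpa [Function.comp_def, PiLp.proj_apply, PiLp.smul_apply, PiLp.sub_apply,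
      smul_eq_mul] using h
  have hsumv : ∑ i, v i = 0 := by
    have h1 : Tendsto (fun k => ∑ i, (τ k)⁻¹ * (xs k i - x i)) atTop (𝓝 (∑ i, v i)) :=
      tendsto_finset_sum _ fun i _ => hcoord i
    have h2 : (fun k => ∑ i, (τ k)⁻¹ * (xs k i - x i)) = fun _ => (0:ℝ) := by
      funext k
      rw [← Finset.mul_sum, Finset.sum_sub_distrib, (hmem k).2, hsumx]
      simp
    rw [h2] at h1
    exact (tendsto_nhds_unique tendsto_const_nhds h1).symm
  have hvnn : ∀ i : Fin n, y i = 0 → 0 ≤ v i := by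
    intro i hyi
    have hxi : x i = 0 := by rw [hxdef]; simp [hyi]
    refine ge_of_tendsto' (hcoord i) fun k => ?_
    rw [hxi, sub_zero]
    exact mul_nonneg (le_of_lt (inv_pos.mpr (hτpos k))) ((hmem k).1 i)
  -- norm-1 curve construction
  have hcurve : ∀ u : EuclideanSpace ℝ (Fin n), ‖u‖ = 1 → (∑ i, y i * u i) = 0 →
      (∀ t : ℝ, ‖Real.cos t • y + Real.sin t • u‖ = 1) := by
    intro u hu hyu t
    have hin : (inner ℝ y u : ℝ) = 0 := by
      simp [PiLp.inner_apply, RCLike.inner_apply, conj_trivial, hyu]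
      rw [← hyu]; exact Finset.sum_congr rfl fun i _ => mul_comm _ _
    have hsq : ‖Real.cos t • y + Real.sin t • u‖ ^ 2 = 1 := by
      rw [norm_add_sq_real, norm_smul, norm_smul, real_inner_smul_left,
        real_inner_smul_right, hin]
      simp [Real.norm_eq_abs, mul_pow, sq_abs, hy, hu]
    calc ‖Real.cos t • y + Real.sin t • u‖
        = Real.sqrt (‖Real.cos t • y + Real.sin t • u‖ ^ 2) :=
          (Real.sqrt_sq (norm_nonneg _)).symm
      _ = 1 := by rw [hsq, Real.sqrt_one]
  have hccd : ∀ u : EuclideanSpace ℝ (Fin n),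
      ContDiff ℝ (⊤ : ℕ∞) (fun t : ℝ => Real.cos t • y + Real.sin t • u) := fun u =>
    (Real.contDiff_cos.smul contDiff_const).add (Real.contDiff_sin.smul contDiff_const)
  have hc0 : ∀ u : EuclideanSpace ℝ (Fin n),
      (fun t : ℝ => Real.cos t • y + Real.sin t • u) 0 = y := by
    intro u; simp
  -- First-order lemma
  have lemma1 : ∀ u : EuclideanSpace ℝ (Fin n), ‖u‖ = 1 → (∑ i, y i * u i) = 0 →
      D (WithLp.toLp 2 (fun i => 2 * (y i * u i))) = 0 := by
    intro u hu hyu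
    set c : ℝ → EuclideanSpace ℝ (Fin n) := fun t => Real.cos t • y + Real.sin t • u with hcdef
    set p : EuclideanSpace ℝ (Fin n) := WithLp.toLp 2 (fun i => 2 * (y i * u i)) with hpdef
    set q : EuclideanSpace ℝ (Fin n) := WithLp.toLp 2 (fun i => u i * u i) with hqdef
    have hgam : ∀ t : ℝ, (WithLp.toLp 2 (fun i => c t i * c t i) : EuclideanSpace ℝ (Fin n))
        = (Real.cos t^2) • x + (Real.sin t * Real.cos t) • p + (Real.sin t^2) • q := by
      intro t; ext i
      show c t i * c t i = ((Real.cos t^2) • x + (Real.sin t * Real.cos t) • p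
        + (Real.sin t^2) • q) i
      have hcti : c t i = Real.cos t * y i + Real.sin t * u i := by
        simp [hcdef, PiLp.add_apply, PiLp.smul_apply]
      rw [hcti]
      simp only [PiLp.add_apply, PiLp.smul_apply, smul_eq_mul, hxdef, hpdef, hqdef]
      ring
    have hγ : HasDerivAt (fun t : ℝ =>
        ((Real.cos t^2) • x + (Real.sin t * Real.cos t) • p + (Real.sin t^2) • q)) p 0 := by
      have h1 := (((Real.hasDerivAt_cos 0).fun_pow 2)).smul_const x
      have h2 := (((Real.hasDerivAt_sin 0).fun_mul (Real.hasDerivAt_cos 0))).smul_const p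
      have h3 := (((Real.hasDerivAt_sin 0).fun_pow 2)).smul_const q
      have h4 := (h1.fun_add h2).fun_add h3
      simpa using h4
    have hγ0 : ((Real.cos 0^2) • x + (Real.sin 0 * Real.cos 0) • p + (Real.sin 0^2) • q) = x := by
      simp
    have hfun : (fun t => f (WithLp.toLp 2 (fun i => c t i * c t i)))
        = fun t => f ((Real.cos t^2) • x + (Real.sin t * Real.cos t) • p + (Real.sin t^2) • q) :=
      funext fun t => by rw [hgam t]
    have hh : HasDerivAt (fun t => f (WithLp.toLp 2 (fun i => c t i * c t i))) (D p) 0 := by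
      rw [hfun]
      have hF : HasFDerivAt f D (((Real.cos 0^2) • x + (Real.sin 0 * Real.cos 0) • p
          + (Real.sin 0^2) • q)) := by
        rw [hγ0]; exact (hfdiff x).hasFDerivAt
      exact hF.comp_hasDerivAt 0 hγ
    have h0 := (hcrit c (hccd u) (hc0 u) (hcurve u hu hyu)).1
    rw [hh.deriv] at h0
    exact h0
  -- First-order consequence
  have claim1 : ∀ w : EuclideanSpace ℝ (Fin n), (∀ i, y i = 0 → w i = 0) →
      (∑ i, w i) = 0 → D w = 0 := by
    intro w hsupp hsum
    set u : EuclideanSpace ℝ (Fin n) :=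
      WithLp.toLp 2 (fun i => if y i = 0 then 0 else w i / (2 * y i)) with hudef
    have hkey : ∀ i, 2 * (y i * u i) = w i := by
      intro i
      show 2 * (y i * (if y i = 0 then 0 else w i / (2 * y i))) = w i
      by_cases hyi : y i = 0
      · simp [hyi, hsupp i hyi]
      · rw [if_neg hyi]; field_simp
    have hyu : ∑ i, y i * u i = 0 := by
      have h1 : ∑ i, 2 * (y i * u i) = 0 := by
        rw [Finset.sum_congr rfl fun i _ => hkey i]; exact hsum
      have h2 : (2:ℝ) * ∑ i, y i * u i = 0 := by rw [Finset.mul_sum]; exact h1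
      linarith
    by_cases hu0 : u = 0
    · have hw0 : w = 0 := by
        ext i
        rw [← hkey i, hu0]
        simp
      rw [hw0, map_zero]
    · set e : EuclideanSpace ℝ (Fin n) := ‖u‖⁻¹ • u with hedef
      have hnu : ‖u‖ ≠ 0 := norm_ne_zero_iff.mpr hu0
      have he1 : ‖e‖ = 1 := by
        rw [hedef, norm_smul, norm_inv, norm_norm, inv_mul_cancel₀ hnu]
      have hye : ∑ i, y i * e i = 0 := by
        have heq : ∀ i : Fin n, y i * e i = ‖u‖⁻¹ * (y i * u i) := by
          intro i
          show y i * (‖u‖⁻¹ • u) i = _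
          rw [PiLp.smul_apply, smul_eq_mul]; ring
        rw [Finset.sum_congr rfl fun i _ => heq i, ← Finset.mul_sum, hyu, mul_zero]
      have h1 := lemma1 e he1 hye
      have hwe : w = ‖u‖ • (WithLp.toLp 2 (fun i => 2 * (y i * e i)) : EuclideanSpace ℝ (Fin n)) := by
        ext i
        show w i = ‖u‖ * (2 * (y i * (‖u‖⁻¹ • u) i))
        rw [PiLp.smul_apply, smul_eq_mul, ← hkey i]
        field_simp
      rw [hwe, map_smul, h1, smul_zero]
  -- Second-order lemma
  have lemma2 : ∀ u : EuclideanSpace ℝ (Fin n), ‖u‖ = 1 → (∀ i, y i * u i = 0) →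
      0 ≤ D (WithLp.toLp 2 (fun i => u i * u i - y i * y i)) := by
    intro u hu hyu
    have hyusum : ∑ i, y i * u i = 0 := Finset.sum_eq_zero fun i _ => hyu i
    set c : ℝ → EuclideanSpace ℝ (Fin n) := fun t => Real.cos t • y + Real.sin t • u with hcdef
    set d : EuclideanSpace ℝ (Fin n) := WithLp.toLp 2 (fun i => u i * u i - y i * y i) with hddef
    set g : ℝ → ℝ := fun r => f (x + r • d) with hgdef
    have hgam : ∀ t : ℝ, (WithLp.toLp 2 (fun i => c t i * c t i) : EuclideanSpace ℝ (Fin n))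
        = x + (Real.sin t ^ 2) • d := by
      intro t; ext i
      show c t i * c t i = (x + (Real.sin t ^ 2) • d) i
      have hcti : c t i = Real.cos t * y i + Real.sin t * u i := by
        simp [hcdef, PiLp.add_apply, PiLp.smul_apply]
      have hdi : d i = u i * u i - y i * y i := rfl
      rw [hcti, PiLp.add_apply, PiLp.smul_apply, smul_eq_mul, hdi]
      have hA : Real.cos t ^ 2 = 1 - Real.sin t ^ 2 := Real.cos_sq' t
      have hxi : x i = y i * y i := rfl
      rw [hxi]
      linear_combination (y i * y i) * hA + (2 * Real.cos t * Real.sin t) * hyu i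
    -- derivative facts of g
    have hgcd : ContDiff ℝ 2 g :=
      hf.comp (contDiff_const.add (contDiff_id.smul contDiff_const))
    have hgd : ∀ r : ℝ, HasDerivAt g (fderiv ℝ f (x + r • d) d) r := by
      intro r
      have h1 : HasDerivAt (fun s : ℝ => x + s • d) d r := by
        simpa using ((hasDerivAt_id r).smul_const d).const_add x
      exact ((hfdiff _).hasFDerivAt).comp_hasDerivAt r h1
    have hgderiv : ∀ r : ℝ, deriv g r = fderiv ℝ f (x + r • d) d := fun r => (hgd r).deriv
    have hheq : (fun t => f (WithLp.toLp 2 (fun i => c t i * c t i))) = fun t => g (Real.sin t ^ 2) :=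
      funext fun t => by rw [hgam t]
    have hhd : ∀ t : ℝ, HasDerivAt (fun s => g (Real.sin s ^ 2))
        (deriv g (Real.sin t ^ 2) * (2 * Real.sin t * Real.cos t)) t := by
      intro t
      have hσ : HasDerivAt (fun s : ℝ => Real.sin s ^ 2) (2 * Real.sin t * Real.cos t) t := by
        simpa [pow_one] using (Real.hasDerivAt_sin t).fun_pow 2
      have hg' : HasDerivAt g (deriv g (Real.sin t ^ 2)) (Real.sin t ^ 2) := by
        rw [hgderiv]; exact hgd _
      exact hg'.comp t hσ
    have hderivh : deriv (fun t => f (WithLp.toLp 2 (fun i => c t i * c t i)))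
        = fun t => deriv g (Real.sin t ^ 2) * (2 * Real.sin t * Real.cos t) := by
      rw [hheq]; funext t; exact (hhd t).deriv
    have hdg : Differentiable ℝ (deriv g) := by
      have h2 : ContDiff ℝ (1+1) g := hgcd
      exact (contDiff_succ_iff_deriv.mp h2).2.2.differentiable (by norm_num)
    have hσ0 : HasDerivAt (fun s : ℝ => Real.sin s ^ 2) (2 * Real.sin 0 * Real.cos 0) 0 := by
      simpa [pow_one] using (Real.hasDerivAt_sin 0).fun_pow 2
    have hFF : HasDerivAt (fun t : ℝ => deriv g (Real.sin t ^ 2))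
        (deriv (deriv g) (Real.sin 0 ^ 2) * (2 * Real.sin 0 * Real.cos 0)) 0 :=
      by have := ((hdg (Real.sin 0 ^ 2)).hasDerivAt).comp 0 hσ0; exact this
    have hG : HasDerivAt (fun t : ℝ => 2 * Real.sin t * Real.cos t)
        ((2 * Real.cos 0) * Real.cos 0 + (2 * Real.sin 0) * (-Real.sin 0)) 0 :=
      ((Real.hasDerivAt_sin 0).const_mul 2).mul (Real.hasDerivAt_cos 0)
    have hprod := hFF.fun_mul hG
    have h2nd : deriv (deriv (fun t => f (WithLp.toLp 2 (fun i => c t i * c t i)))) 0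
        = 2 * deriv g 0 := by
      rw [hderivh, hprod.deriv]
      simp
      ring
    have hcr := (hcrit c (hccd u) (hc0 u) (hcurve u hu hyusum)).2
    rw [h2nd] at hcr
    have hg0 : deriv g 0 = D d := by
      rw [hgderiv 0]
      have : x + (0:ℝ) • d = x := by simp
      rw [this]
    rw [hg0] at hcr
    linarith
  -- Assemble
  set s : ℝ := ∑ i, (if y i = 0 then v i else 0) with hsdef
  have hs_nn : 0 ≤ s := Finset.sum_nonneg fun i _ => by
    split_ifs with h
    · exact hvnn i h
    · exact le_refl 0
  set z : EuclideanSpace ℝ (Fin n) := WithLp.toLp 2 (fun i => if y i = 0 then v i else 0) with hzdef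
  have hsumz : ∑ i, z i = s := rfl
  set w' : EuclideanSpace ℝ (Fin n) := WithLp.toLp 2 (fun i => v i - z i + s * x i) with hw'def
  have hDw' : D w' = 0 := by
    apply claim1
    · intro i hyi
      have hz : z i = v i := by show (if y i = 0 then v i else 0) = v i; rw [if_pos hyi]
      have hx : x i = 0 := by show y i * y i = 0; rw [hyi]; ring
      show v i - z i + s * x i = 0
      rw [hz, hx]; ring
    · have : ∑ i, (v i - z i + s * x i) = (∑ i, v i) - (∑ i, z i) + s * ∑ i, x i := by
        rw [Finset.sum_add_distrib, Finset.sum_sub_distrib, Finset.mul_sum]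
      show ∑ i, (v i - z i + s * x i) = 0
      rw [this, hsumv, hsumz, hsumx]; ring
  have hzineq : s * D x ≤ D z := by
    rcases eq_or_lt_of_le hs_nn with heq | hs
    · -- s = 0
      have hz0 : z = 0 := by
        have hall := (Finset.sum_eq_zero_iff_of_nonneg (fun i _ => by
          split_ifs with h
          · exact hvnn i h
          · exact le_refl 0)).mp heq.symm
        ext i
        show (if y i = 0 then v i else 0) = 0
        exact hall i (Finset.mem_univ i)
      rw [hz0, map_zero, ← heq]
      simp
    · set u : EuclideanSpace ℝ (Fin n) :=
        WithLp.toLp 2 (fun i => if y i = 0 then Real.sqrt (v i / s) else 0) with hudef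
      have hu_nn : ∀ i, y i = 0 → 0 ≤ v i / s := fun i h => div_nonneg (hvnn i h) hs_nn
      have huu : ∀ i, u i * u i = (if y i = 0 then v i / s else 0) := by
        intro i
        show (if y i = 0 then Real.sqrt (v i / s) else 0)
          * (if y i = 0 then Real.sqrt (v i / s) else 0) = _
        split_ifs with h
        · exact Real.mul_self_sqrt (hu_nn i h)
        · ring
      have hnorm : ‖u‖ = 1 := by
        rw [EuclideanSpace.norm_eq]
        have hsum1 : ∑ i, ‖u i‖ ^ 2 = 1 := by
          have h1 : ∀ i, ‖u i‖ ^ 2 = (if y i = 0 then v i else 0) / s := by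
            intro i
            rw [Real.norm_eq_abs, sq_abs, sq, huu i]
            split_ifs
            · rfl
            · rw [zero_div]
          rw [Finset.sum_congr rfl fun i _ => h1 i, ← Finset.sum_div, ← hsdef]
          exact div_self (ne_of_gt hs)
        rw [hsum1, Real.sqrt_one]
      have hyu : ∀ i, y i * u i = 0 := by
        intro i
        show y i * (if y i = 0 then Real.sqrt (v i / s) else 0) = 0
        split_ifs with h
        · rw [h]; ring
        · ring
      have h2 := lemma2 u hnorm hyu
      have heq2 : (WithLp.toLp 2 (fun i => u i * u i - y i * y i) : EuclideanSpace ℝ (Fin n))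
          = s⁻¹ • z - x := by
        ext i
        show u i * u i - y i * y i = (s⁻¹ • z - x) i
        rw [huu i, PiLp.sub_apply, PiLp.smul_apply, smul_eq_mul]
        have hxi : x i = y i * y i := rfl
        have hzi : z i = (if y i = 0 then v i else 0) := rfl
        rw [hxi, hzi]
        split_ifs
        · rw [div_eq_inv_mul]
        · rw [mul_zero]
      rw [heq2, map_sub, map_smul, smul_eq_mul] at h2
      have h3 : 0 ≤ s * (s⁻¹ * D z - D x) := mul_nonneg hs_nn h2
      have h4 : s * (s⁻¹ * D z - D x) = D z - s * D x := by
        field_simp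
      linarith
  have hveq : v = w' - s • x + z := by
    ext i
    show v i = (w' - s • x + z) i
    rw [PiLp.add_apply, PiLp.sub_apply, PiLp.smul_apply, smul_eq_mul]
    show v i = (v i - z i + s * x i) - s * x i + z i
    ring
  rw [hveq, map_add, map_sub, map_smul, hDw', smul_eq_mul]
  linarith [hzineq]
end
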